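/- arXiv:1305.5669 — 8 statements merged into one kernel-verified Lean document; each statement's English description precedes it below -/
import Mathlib

section
/- Let α > 0 and let A, B, C, D, E : ℝ → ℝ be continuous on [-α, α] with A, C, D, E even functions and B an odd function. Let K : ℝ → ℝ be even and differentiable on [-α, α] with (A·K)'(x) = B(x)·K(x) for all x ∈ [-α, α] and A(α)·K(α) = 0. Let n, m be natural numbers, λₙ, λₘ real constants, and let Φₙ, Φₘ : ℝ → ℝ be twice continuously differentiable on [-α, α] with Φₙ(-x) = (-1)ⁿ Φₙ(x) and Φₘ(-x) = (-1)ᵐ Φₘ(x) for all x, satisfying A(x)Φₙ''(x) + B(x)Φₙ'(x) + (λₙ C(x) + D(x) + (1-(-1)ⁿ)E(x)/2)Φₙ(x) = 0 and A(x)Φₘ''(x) + B(x)Φₘ'(x) + (λₘ C(x) + D(x) + (1-(-1)ᵐ)E(x)/2)Φₘ(x) = 0 on [-α, α]. If n and m have different parities, or if λₙ ≠ λₘ, then ∫_{-α}^{α} C(x)K(x)Φₙ(x)Φₘ(x) dx = 0. -/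
open MeasureTheory intervalIntegral

/-- Extended Sturm–Liouville theorem for symmetric functions: eigenfunctions of the
symmetric equation corresponding to different parities or different eigenvalues are
orthogonal with respect to the weight `W*(x) = C(x)·K(x)` on `[-α, α]`. -/
theorem extended_sturm_liouville_symmetric
    (α : ℝ) (hα : 0 < α)
    (A B C D E K : ℝ → ℝ)
    (hAc : ContinuousOn A (Set.Icc (-α) α))
    (hBc : ContinuousOn B (Set.Icc (-α) α))
    (hCc : ContinuousOn C (Set.Icc (-α) α))
    (hDc : ContinuousOn D (Set.Icc (-α) α))
    (hEc : ContinuousOn E (Set.Icc (-α) α))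
    (hAeven : ∀ x, A (-x) = A x)
    (hBodd : ∀ x, B (-x) = -B x)
    (hCeven : ∀ x, C (-x) = C x)
    (hDeven : ∀ x, D (-x) = D x)
    (hEeven : ∀ x, E (-x) = E x)
    (hKeven : ∀ x, K (-x) = K x)
    (hKdiff : DifferentiableOn ℝ K (Set.Icc (-α) α))
    (hselfadj : ∀ x ∈ Set.Icc (-α) α, HasDerivAt (fun y => A y * K y) (B x * K x) x)
    (hbc : A α * K α = 0)
    (n m : ℕ) (lamn lamm : ℝ)
    (Φn Φn' Φn'' Φm Φm' Φm'' : ℝ → ℝ)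
    (hΦn1 : ∀ x ∈ Set.Icc (-α) α, HasDerivAt Φn (Φn' x) x)
    (hΦn2 : ∀ x ∈ Set.Icc (-α) α, HasDerivAt Φn' (Φn'' x) x)
    (hΦn2c : ContinuousOn Φn'' (Set.Icc (-α) α))
    (hΦm1 : ∀ x ∈ Set.Icc (-α) α, HasDerivAt Φm (Φm' x) x)
    (hΦm2 : ∀ x ∈ Set.Icc (-α) α, HasDerivAt Φm' (Φm'' x) x)
    (hΦm2c : ContinuousOn Φm'' (Set.Icc (-α) α))
    (hsymn : ∀ x, Φn (-x) = (-1 : ℝ) ^ n * Φn x)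
    (hsymm : ∀ x, Φm (-x) = (-1 : ℝ) ^ m * Φm x)
    (hoden : ∀ x ∈ Set.Icc (-α) α,
      A x * Φn'' x + B x * Φn' x
        + (lamn * C x + D x + (1 - (-1 : ℝ) ^ n) * E x / 2) * Φn x = 0)
    (hodem : ∀ x ∈ Set.Icc (-α) α,
      A x * Φm'' x + B x * Φm' x
        + (lamm * C x + D x + (1 - (-1 : ℝ) ^ m) * E x / 2) * Φm x = 0)
    (hsep : n % 2 ≠ m % 2 ∨ lamn ≠ lamm) :
    ∫ x in (-α)..α, C x * K x * Φn x * Φm x = 0 := by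
  rcases eq_or_ne (n % 2) (m % 2) with hpar | hpar
  · -- same parity: use Lagrange identity
    have hlam : lamn ≠ lamm := hsep.resolve_left (by simp [hpar])
    have hpow : (-1 : ℝ) ^ n = (-1 : ℝ) ^ m := by
      rw [neg_one_pow_eq_pow_mod_two n, neg_one_pow_eq_pow_mod_two m, hpar]
    have hle : -α ≤ α := by linarith
    have huIcc : Set.uIcc (-α) α = Set.Icc (-α) α := Set.uIcc_of_le hle
    set g : ℝ → ℝ := fun y => A y * K y * (Φn' y * Φm y - Φn y * Φm' y) with hg
    set f : ℝ → ℝ := fun y => (lamm - lamn) * (C y * K y * Φn y * Φm y) with hf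
    have key : ∀ x ∈ Set.uIcc (-α) α, HasDerivAt g (f x) x := by
      intro x hx
      rw [huIcc] at hx
      have h2 : HasDerivAt (fun y => Φn' y * Φm y - Φn y * Φm' y)
          (Φn'' x * Φm x - Φn x * Φm'' x) x := by
        have h : HasDerivAt (fun y => Φn' y * Φm y - Φn y * Φm' y) _ x := ((hΦn2 x hx).mul (hΦm1 x hx)).sub ((hΦn1 x hx).mul (hΦm2 x hx))
        convert h using 1
        ring
      have h : HasDerivAt g _ x := (hselfadj x hx).mul h2
      convert h using 1
      have en := hoden x hx
      have em := hodem x hx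
      rw [hpow] at en
      simp only [hf]
      linear_combination (K x * Φn x) * em - (K x * Φm x) * en
    have hfc : ContinuousOn f (Set.Icc (-α) α) := by
      apply ContinuousOn.mul continuousOn_const
      exact ((hCc.mul hKdiff.continuousOn).mul
        (fun x hx => (hΦn1 x hx).continuousAt.continuousWithinAt)).mul
        (fun x hx => (hΦm1 x hx).continuousAt.continuousWithinAt)
    have hfint : IntervalIntegrable f volume (-α) α := by
      apply ContinuousOn.intervalIntegrable
      rwa [huIcc]
    have hftc := intervalIntegral.integral_eq_sub_of_hasDerivAt key hfint
    have hgα : g α = 0 := by simp [hg, hbc]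
    have hgnα : g (-α) = 0 := by
      have : A (-α) * K (-α) = 0 := by rw [hAeven, hKeven, hbc]
      simp [hg, this]
    rw [hgα, hgnα, sub_zero] at hftc
    have : (lamm - lamn) * ∫ x in (-α)..α, C x * K x * Φn x * Φm x = 0 := by
      rw [← intervalIntegral.integral_const_mul]
      exact hftc
    rcases mul_eq_zero.mp this with h | h
    · exact absurd (by linarith [sub_eq_zero.mp h] : lamn = lamm) hlam
    · exact h
  · -- different parity: integrand is odd
    have hodd : Odd (n + m) := by
      rw [Nat.odd_iff]
      omega
    have hneg : ∀ x, C (-x) * K (-x) * Φn (-x) * Φm (-x)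
        = -(C x * K x * Φn x * Φm x) := by
      intro x
      rw [hCeven, hKeven, hsymn, hsymm]
      have : (-1 : ℝ) ^ n * ((-1 : ℝ) ^ m) = -1 := by
        rw [← pow_add]
        exact hodd.neg_one_pow
      linear_combination (C x * K x * Φn x * Φm x) * this
    have h1 : ∫ x in (-α)..α, C (-x) * K (-x) * Φn (-x) * Φm (-x)
        = ∫ x in (-α)..α, C x * K x * Φn x * Φm x := by
      rw [intervalIntegral.integral_comp_neg (fun x => C x * K x * Φn x * Φm x), neg_neg]
    simp only [hneg] at h1
    rw [intervalIntegral.integral_neg] at h1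
    linarith
end

section
/- Fix real parameters p, q, r, s and a natural number m with (2i+1)q + s ≠ 0 for all integers 0 ≤ i ≤ m-1. Then the polynomial function Φ(x) = S_{2m}(p,q,r,s;x) satisfies, for every real x, the differential equation x(px² + q)Φ''(x) + (rx² + s)Φ'(x) − 2m(r + (2m−1)p)·x·Φ(x) = 0. -/
open Finset Real MeasureTheory

/-- The basic class of symmetric orthogonal polynomials `S_n(p,q,r,s;x)`. -/
noncomputable def S (p q r s : ℝ) (n : ℕ) (x : ℝ) : ℝ :=
  ∑ k ∈ Finset.range (n / 2 + 1),
    (Nat.choose (n / 2) k : ℝ) *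
      (∏ i ∈ Finset.range (n / 2 - k),
        ((2 * (i : ℝ) + (-1 : ℝ) ^ (n + 1) + 2 * ((n / 2 : ℕ) : ℝ)) * p + r) /
        ((2 * (i : ℝ) + (-1 : ℝ) ^ (n + 1) + 2) * q + s)) *
      x ^ (n - 2 * k)

/-- The monic normalization `S̄_n(p,q,r,s;x)`. -/
noncomputable def Sbar (p q r s : ℝ) (n : ℕ) (x : ℝ) : ℝ :=
  (∏ i ∈ Finset.range (n / 2),
    ((2 * (i : ℝ) + (-1 : ℝ) ^ (n + 1) + 2) * q + s) /
    ((2 * (i : ℝ) + (-1 : ℝ) ^ (n + 1) + 2 * ((n / 2 : ℕ) : ℝ)) * p + r)) *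
    S p q r s n x

/-- Coefficients of the even-degree basic polynomial. -/
noncomputable def cS (p q r s : ℝ) (m k : ℕ) : ℝ :=
  (Nat.choose m k : ℝ) * ∏ i ∈ Finset.range (m - k),
    ((2 * (i : ℝ) + 2 * (m : ℝ) - 1) * p + r) / ((2 * (i : ℝ) + 1) * q + s)

lemma S_two_mul (p q r s : ℝ) (m : ℕ) :
    S p q r s (2 * m)
      = fun x => ∑ k ∈ Finset.range (m + 1), cS p q r s m k * x ^ (2 * m - 2 * k) := by
  funext x
  unfold S cS
  rw [Nat.mul_div_cancel_left m (by norm_num)]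
  refine Finset.sum_congr rfl fun k hk => ?_
  congr 2
  refine Finset.prod_congr rfl fun i hi => ?_
  rw [Odd.neg_one_pow ⟨m, by ring⟩]
  ring_nf

lemma hasDerivAt_polysum (a : ℕ → ℝ) (e : ℕ → ℕ) (N : ℕ) (x : ℝ) :
    HasDerivAt (fun x : ℝ => ∑ k ∈ Finset.range N, a k * x ^ e k)
      (∑ k ∈ Finset.range N, a k * (e k : ℝ) * x ^ (e k - 1)) x := by
  refine HasDerivAt.fun_sum fun k _ => ?_
  simpa [mul_assoc] using (hasDerivAt_pow (e k) x).const_mul (a k)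

/-- The even-degree member `Φ = S_{2m}(p,q,r,s;·)` of the basic class satisfies the
differential equation `x(px²+q)Φ''(x) + (rx²+s)Φ'(x) − 2m(r+(2m−1)p)·x·Φ(x) = 0`. -/
theorem S_even_degree_ode (p q r s : ℝ) (m : ℕ)
    (hden : ∀ i : ℕ, i < m → (2 * (i : ℝ) + 1) * q + s ≠ 0) :
    ∀ x : ℝ,
      x * (p * x ^ 2 + q) * deriv (deriv (S p q r s (2 * m))) x
        + (r * x ^ 2 + s) * deriv (S p q r s (2 * m)) x
        - 2 * (m : ℝ) * (r + (2 * (m : ℝ) - 1) * p) * x * S p q r s (2 * m) x = 0 := by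
  intro x
  set c : ℕ → ℝ := cS p q r s m with hc
  set lam : ℝ := 2 * (m : ℝ) * (r + (2 * (m : ℝ) - 1) * p) with hlam
  have hd1 : deriv (S p q r s (2 * m))
      = fun x => ∑ k ∈ Finset.range (m + 1),
          c k * ((2 * m - 2 * k : ℕ) : ℝ) * x ^ (2 * m - 2 * k - 1) := by
    rw [S_two_mul]
    funext y
    exact (hasDerivAt_polysum c (fun k => 2 * m - 2 * k) (m + 1) y).deriv
  have hd2 : deriv (deriv (S p q r s (2 * m)))
      = fun x => ∑ k ∈ Finset.range (m + 1),
          c k * ((2 * m - 2 * k : ℕ) : ℝ) * ((2 * m - 2 * k - 1 : ℕ) : ℝ)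
            * x ^ (2 * m - 2 * k - 2) := by
    rw [hd1]
    funext y
    have := (hasDerivAt_polysum (fun k => c k * ((2 * m - 2 * k : ℕ) : ℝ))
      (fun k => 2 * m - 2 * k - 1) (m + 1) y).deriv
    rw [this]
    refine Finset.sum_congr rfl fun k _ => ?_
    have he : 2 * m - 2 * k - 1 - 1 = 2 * m - 2 * k - 2 := by omega
    rw [he]
  rw [hd2, hd1, S_two_mul]
  beta_reduce
  -- combine everything into a single sum
  rw [Finset.mul_sum, Finset.mul_sum, Finset.mul_sum, ← Finset.sum_add_distrib,
    ← Finset.sum_sub_distrib]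
  -- rewrite each summand as first k + second k
  have hsplit : ∀ k ∈ Finset.range (m + 1),
      (x * (p * x ^ 2 + q) * (c k * ((2 * m - 2 * k : ℕ) : ℝ) * ((2 * m - 2 * k - 1 : ℕ) : ℝ)
          * x ^ (2 * m - 2 * k - 2))
        + (r * x ^ 2 + s) * (c k * ((2 * m - 2 * k : ℕ) : ℝ) * x ^ (2 * m - 2 * k - 1)))
        - lam * x * (c k * x ^ (2 * m - 2 * k))
      = (c k * ((p * ((2 * m - 2 * k : ℕ) : ℝ) * ((2 * m - 2 * k - 1 : ℕ) : ℝ)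
            + r * ((2 * m - 2 * k : ℕ) : ℝ)) - lam) * x ^ (2 * m - 2 * k + 1))
        + (c k * (q * ((2 * m - 2 * k - 1 : ℕ) : ℝ) + s) * ((2 * m - 2 * k : ℕ) : ℝ)
            * x ^ (2 * m - 2 * k - 1)) := by
    intro k hk
    rcases eq_or_lt_of_le (Nat.lt_succ_iff.mp (Finset.mem_range.mp hk)) with h | h
    · subst h
      simp only [Nat.sub_self]
      norm_num
      ring
    · obtain ⟨j, hj⟩ : ∃ j, 2 * m - 2 * k = j + 2 := ⟨2 * m - 2 * k - 2, by omega⟩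
      rw [hj]
      have h1 : j + 2 - 1 = j + 1 := rfl
      have h2 : j + 2 - 2 = j := rfl
      rw [h1, h2]
      push_cast
      ring
  rw [Finset.sum_congr rfl hsplit, Finset.sum_add_distrib]
  -- the "second" part: last term vanishes
  rw [Finset.sum_range_succ (fun k => c k * (q * ((2 * m - 2 * k - 1 : ℕ) : ℝ) + s)
      * ((2 * m - 2 * k : ℕ) : ℝ) * x ^ (2 * m - 2 * k - 1))]
  -- the "first" part: peel the first term
  rw [Finset.sum_range_succ' (fun k => c k * ((p * ((2 * m - 2 * k : ℕ) : ℝ)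
      * ((2 * m - 2 * k - 1 : ℕ) : ℝ) + r * ((2 * m - 2 * k : ℕ) : ℝ)) - lam)
      * x ^ (2 * m - 2 * k + 1))]
  have hfirst0 : c 0 * ((p * ((2 * m - 2 * 0 : ℕ) : ℝ) * ((2 * m - 2 * 0 - 1 : ℕ) : ℝ)
      + r * ((2 * m - 2 * 0 : ℕ) : ℝ)) - lam) * x ^ (2 * m - 2 * 0 + 1) = 0 := by
    rcases Nat.eq_zero_or_pos m with hm | hm
    · subst hm; simp [hlam]
    · have h1 : ((2 * m - 2 * 0 : ℕ) : ℝ) = 2 * (m : ℝ) := by push_cast [Nat.sub_zero]; ring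
      have h2 : ((2 * m - 2 * 0 - 1 : ℕ) : ℝ) = 2 * (m : ℝ) - 1 := by
        have : 2 * m - 2 * 0 - 1 = 2 * m - 1 := rfl
        rw [this]
        push_cast [Nat.cast_sub (by omega : 1 ≤ 2 * m)]
        ring
      rw [h1, h2, hlam]
      ring
  have hsecondm : c m * (q * ((2 * m - 2 * m - 1 : ℕ) : ℝ) + s) * ((2 * m - 2 * m : ℕ) : ℝ)
      * x ^ (2 * m - 2 * m - 1) = 0 := by
    simp [Nat.sub_self]
  rw [hfirst0, hsecondm, add_zero, add_zero, ← Finset.sum_add_distrib]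
  refine Finset.sum_eq_zero fun k hk => ?_
  have hkm : k < m := Finset.mem_range.mp hk
  -- pairwise cancellation
  set j : ℕ := m - k - 1 with hjdef
  have hjm : j < m := by omega
  have hBne : (2 * (j : ℝ) + 1) * q + s ≠ 0 := hden j hjm
  -- relate c k and c (k+1)
  have hmk : m - k = j + 1 := by omega
  have hck : c k = (Nat.choose m k : ℝ) *
      ((∏ i ∈ Finset.range j,
        ((2 * (i : ℝ) + 2 * (m : ℝ) - 1) * p + r) / ((2 * (i : ℝ) + 1) * q + s)) *
        (((2 * (j : ℝ) + 2 * (m : ℝ) - 1) * p + r) / ((2 * (j : ℝ) + 1) * q + s))) := by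
    rw [hc]; unfold cS; rw [hmk, Finset.prod_range_succ]
  have hck1 : c (k + 1) = (Nat.choose m (k + 1) : ℝ) *
      ∏ i ∈ Finset.range j,
        ((2 * (i : ℝ) + 2 * (m : ℝ) - 1) * p + r) / ((2 * (i : ℝ) + 1) * q + s) := by
    rw [hc]; unfold cS
    have : m - (k + 1) = j := by omega
    rw [this]
  set P : ℝ := ∏ i ∈ Finset.range j,
      ((2 * (i : ℝ) + 2 * (m : ℝ) - 1) * p + r) / ((2 * (i : ℝ) + 1) * q + s) with hP
  set A : ℝ := (2 * (j : ℝ) + 2 * (m : ℝ) - 1) * p + r with hA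
  set B : ℝ := (2 * (j : ℝ) + 1) * q + s with hB
  -- cast facts
  have hn1 : ((2 * m - 2 * k : ℕ) : ℝ) = 2 * (j : ℝ) + 2 := by
    have : 2 * m - 2 * k = 2 * j + 2 := by omega
    rw [this]; push_cast; ring
  have hn2 : ((2 * m - 2 * k - 1 : ℕ) : ℝ) = 2 * (j : ℝ) + 1 := by
    have : 2 * m - 2 * k - 1 = 2 * j + 1 := by omega
    rw [this]; push_cast; ring
  have hexp : 2 * m - 2 * (k + 1) + 1 = 2 * m - 2 * k - 1 := by omega
  -- the coefficient identity for the (k+1) "first" term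
  have hcoef : (p * ((2 * m - 2 * (k + 1) : ℕ) : ℝ) * ((2 * m - 2 * (k + 1) - 1 : ℕ) : ℝ)
      + r * ((2 * m - 2 * (k + 1) : ℕ) : ℝ)) - lam = -2 * ((k : ℝ) + 1) * A := by
    rcases Nat.eq_zero_or_pos j with hj0 | hjpos
    · have hkm1 : k + 1 = m := by omega
      have e1 : 2 * m - 2 * (k + 1) = 0 := by omega
      have e2 : 2 * m - 2 * (k + 1) - 1 = 0 := by omega
      rw [e2, e1, hlam, hA, hj0]
      have : ((k : ℝ) + 1) = (m : ℝ) := by exact_mod_cast congrArg (Nat.cast : ℕ → ℝ) hkm1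
      rw [this]
      push_cast
      ring
    · have e1 : ((2 * m - 2 * (k + 1) : ℕ) : ℝ) = 2 * (j : ℝ) := by
        have : 2 * m - 2 * (k + 1) = 2 * j := by omega
        rw [this]; push_cast; ring
      have e2 : ((2 * m - 2 * (k + 1) - 1 : ℕ) : ℝ) = 2 * (j : ℝ) - 1 := by
        have : 2 * m - 2 * (k + 1) - 1 = 2 * j - 1 := by omega
        rw [this, Nat.cast_sub (by omega : 1 ≤ 2 * j)]
        push_cast; ring
      have hmjk : (m : ℝ) - (j : ℝ) = (k : ℝ) + 1 := by
        have : m - j = k + 1 := by omega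
        have h := congrArg (Nat.cast : ℕ → ℝ) this
        rw [Nat.cast_sub (by omega : j ≤ m)] at h
        push_cast at h
        linarith
      rw [e1, e2, hlam, hA]
      linear_combination (-2 * (2 * (j : ℝ) + 2 * (m : ℝ) - 1) * p - 2 * r) * hmjk
  -- choose identity
  have hchoose : ((Nat.choose m (k + 1) : ℝ)) * ((k : ℝ) + 1)
      = (Nat.choose m k : ℝ) * ((j : ℝ) + 1) := by
    have h := Nat.choose_succ_right_eq m k
    have hmkj : m - k = j + 1 := hmk
    rw [hmkj] at h
    exact_mod_cast h
  rw [hn1, hn2, hexp, hcoef, hck, hck1]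
  have hAB : (P * (A / B)) * B = P * A := by
    field_simp
  have expand : (Nat.choose m (k + 1) : ℝ) * P * (-2 * ((k : ℝ) + 1) * A)
        * x ^ (2 * m - 2 * k - 1)
      + (Nat.choose m k : ℝ) * (P * (A / B)) * (q * (2 * (j : ℝ) + 1) + s)
        * (2 * (j : ℝ) + 2) * x ^ (2 * m - 2 * k - 1)
      = ((Nat.choose m k : ℝ) * ((P * (A / B)) * B) * (2 * (j : ℝ) + 2)
          - 2 * ((Nat.choose m (k + 1) : ℝ) * ((k : ℝ) + 1)) * P * A)
          * x ^ (2 * m - 2 * k - 1) := by rw [hB]; ring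
  rw [expand, hAB, hchoose]; ring
end

section
/- Fix real parameters p, q, r, s and a natural number m with (2i+3)q + s ≠ 0 for all integers 0 ≤ i ≤ m-1. Then the polynomial function Φ(x) = S_{2m+1}(p,q,r,s;x) satisfies, for every real x, the differential equation x²(px² + q)Φ''(x) + x(rx² + s)Φ'(x) − ((2m+1)(r + 2mp)x² + s)Φ(x) = 0. -/
open Finset Real MeasureTheory

noncomputable def cf (p q r s : ℝ) (m k : ℕ) : ℝ :=
  (m.choose k : ℝ) * ∏ i ∈ Finset.range (m - k),
    ((2 * (i : ℝ) + 1 + 2 * (m : ℝ)) * p + r) / ((2 * (i : ℝ) + 1 + 2) * q + s)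

lemma S_eq (p q r s : ℝ) (m : ℕ) :
    S p q r s (2 * m + 1)
      = fun x : ℝ => ∑ k ∈ Finset.range (m + 1), cf p q r s m k * x ^ (2 * m + 1 - 2 * k) := by
  funext x
  have h2 : (2 * m + 1) / 2 = m := by omega
  have hpow : (-1 : ℝ) ^ (2 * m + 1 + 1) = 1 := by
    have h : 2 * m + 1 + 1 = 2 * (m + 1) := by ring
    rw [h, pow_mul]; norm_num
  simp only [S, cf, h2, hpow]

lemma deriv_poly (c : ℕ → ℝ) (e : ℕ → ℕ) (N : ℕ) :
    deriv (fun x : ℝ => ∑ k ∈ Finset.range N, c k * x ^ e k)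
      = fun x : ℝ => ∑ k ∈ Finset.range N, c k * (e k : ℝ) * x ^ (e k - 1) := by
  funext x
  have h : HasDerivAt (fun x : ℝ => ∑ k ∈ Finset.range N, c k * x ^ e k)
      (∑ k ∈ Finset.range N, c k * (e k : ℝ) * x ^ (e k - 1)) x := by
    refine HasDerivAt.fun_sum fun k _ => ?_
    have := (hasDerivAt_pow (e k) x).const_mul (c k)
    rw [← mul_assoc] at this
    exact this
  exact h.deriv

lemma term_eq (p q r s N c : ℝ) (e : ℕ) (he : 1 ≤ e) (x : ℝ) :
    x ^ 2 * (p * x ^ 2 + q) * (c * (e : ℝ) * ((e - 1 : ℕ) : ℝ) * x ^ (e - 1 - 1))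
      + x * (r * x ^ 2 + s) * (c * (e : ℝ) * x ^ (e - 1))
      - (N * x ^ 2 + s) * (c * x ^ e)
    = c * ((p * (e : ℝ) * ((e : ℝ) - 1) + r * (e : ℝ) - N) * x ^ (e + 2)
        + (((e : ℝ) - 1) * ((e : ℝ) * q + s)) * x ^ e) := by
  obtain ⟨j, rfl⟩ : ∃ j, e = j + 1 := ⟨e - 1, by omega⟩
  cases j with
  | zero => norm_num; ring
  | succ i =>
    simp only [Nat.add_sub_cancel]
    push_cast
    ring

lemma coeff_key (p q r s : ℝ) (m : ℕ)
    (hden : ∀ i : ℕ, i < m → (2 * (i : ℝ) + 3) * q + s ≠ 0) (k : ℕ) (hk : k < m) :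
    cf p q r s m (k + 1) *
        (p * ((2 * m + 1 - 2 * (k + 1) : ℕ) : ℝ) * (((2 * m + 1 - 2 * (k + 1) : ℕ) : ℝ) - 1)
          + r * ((2 * m + 1 - 2 * (k + 1) : ℕ) : ℝ)
          - (2 * (m : ℝ) + 1) * (r + 2 * (m : ℝ) * p))
      + cf p q r s m k *
        ((((2 * m + 1 - 2 * k : ℕ) : ℝ) - 1) * (((2 * m + 1 - 2 * k : ℕ) : ℝ) * q + s)) = 0 := by
  have hE : ((2 * m + 1 - 2 * k : ℕ) : ℝ) = 2 * (m : ℝ) - 2 * k + 1 := by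
    rw [Nat.cast_sub (by omega)]; push_cast; ring
  have hE' : ((2 * m + 1 - 2 * (k + 1) : ℕ) : ℝ) = 2 * (m : ℝ) - 2 * k - 1 := by
    rw [Nat.cast_sub (by omega)]; push_cast; ring
  set j := m - k - 1 with hjdef
  have hjm : j < m := by omega
  have hjc : ((j : ℕ) : ℝ) = (m : ℝ) - k - 1 := by
    rw [hjdef, Nat.cast_sub (by omega), Nat.cast_sub (by omega)]; push_cast; ring
  have hβ : (2 * (j : ℝ) + 1 + 2) * q + s ≠ 0 := by
    have h := hden j hjm
    intro hc; apply h; linarith [hc]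
  have hmk : m - k = j + 1 := by omega
  have hmk1 : m - (k + 1) = j := by omega
  have hchoose : ((m.choose (k + 1)) : ℝ) * ((k : ℝ) + 1)
      = ((m.choose k) : ℝ) * ((m : ℝ) - k) := by
    have h := Nat.choose_succ_right_eq m k
    have h2 : ((m - k : ℕ) : ℝ) = (m : ℝ) - k := by
      rw [Nat.cast_sub hk.le]
    calc ((m.choose (k + 1)) : ℝ) * ((k : ℝ) + 1)
        = ((m.choose (k + 1) * (k + 1) : ℕ) : ℝ) := by push_cast; ring
      _ = ((m.choose k * (m - k) : ℕ) : ℝ) := by rw [h]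
      _ = ((m.choose k) : ℝ) * ((m : ℝ) - k) := by push_cast [Nat.cast_sub hk.le]; ring
  rw [cf, cf, hmk, hmk1, Finset.prod_range_succ, hE, hE']
  set P := ∏ i ∈ Finset.range j,
    ((2 * (i : ℝ) + 1 + 2 * (m : ℝ)) * p + r) / ((2 * (i : ℝ) + 1 + 2) * q + s) with hP
  set α := (2 * (j : ℝ) + 1 + 2 * (m : ℝ)) * p + r with hα
  set β := (2 * (j : ℝ) + 1 + 2) * q + s with hβdef
  have hcancel : α / β * β = α := div_mul_cancel₀ α hβ
  field_simp
  have hβ2 : β = (2 * (m : ℝ) - 2 * k + 1) * q + s := by rw [hβdef, hjc]; ring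
  have hα2 : α = (4 * (m : ℝ) - 2 * k - 1) * p + r := by rw [hα, hjc]; ring
  rw [hβ2, hα2]
  linear_combination (-2 * P * ((4 * (m : ℝ) - 2 * k - 1) * p + r) * ((2 * (m : ℝ) - 2 * k + 1) * q + s)) * hchoose


/-- The odd-degree member `Φ = S_{2m+1}(p,q,r,s;·)` of the basic class satisfies the
differential equation `x²(px²+q)Φ''(x) + x(rx²+s)Φ'(x) − ((2m+1)(r+2mp)x²+s)Φ(x) = 0`. -/
theorem S_odd_degree_ode (p q r s : ℝ) (m : ℕ)
    (hden : ∀ i : ℕ, i < m → (2 * (i : ℝ) + 3) * q + s ≠ 0) :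
    ∀ x : ℝ,
      x ^ 2 * (p * x ^ 2 + q) * deriv (deriv (S p q r s (2 * m + 1))) x
        + x * (r * x ^ 2 + s) * deriv (S p q r s (2 * m + 1)) x
        - ((2 * (m : ℝ) + 1) * (r + 2 * (m : ℝ) * p) * x ^ 2 + s)
            * S p q r s (2 * m + 1) x = 0 := by
  intro x
  rw [S_eq, deriv_poly, deriv_poly]
  simp only []
  rw [Finset.mul_sum, Finset.mul_sum, Finset.mul_sum, ← Finset.sum_add_distrib,
    ← Finset.sum_sub_distrib]
  have hterm : ∀ k ∈ Finset.range (m + 1),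
      (x ^ 2 * (p * x ^ 2 + q) *
            (cf p q r s m k * ((2 * m + 1 - 2 * k : ℕ) : ℝ) * ((2 * m + 1 - 2 * k - 1 : ℕ) : ℝ) *
              x ^ (2 * m + 1 - 2 * k - 1 - 1)) +
          x * (r * x ^ 2 + s) *
            (cf p q r s m k * ((2 * m + 1 - 2 * k : ℕ) : ℝ) * x ^ (2 * m + 1 - 2 * k - 1)) -
        ((2 * (m : ℝ) + 1) * (r + 2 * (m : ℝ) * p) * x ^ 2 + s) *
          (cf p q r s m k * x ^ (2 * m + 1 - 2 * k)))
      = cf p q r s m k *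
          ((p * ((2 * m + 1 - 2 * k : ℕ) : ℝ) * (((2 * m + 1 - 2 * k : ℕ) : ℝ) - 1)
              + r * ((2 * m + 1 - 2 * k : ℕ) : ℝ)
              - (2 * (m : ℝ) + 1) * (r + 2 * (m : ℝ) * p)) * x ^ (2 * m + 1 - 2 * k + 2))
        + cf p q r s m k *
          (((((2 * m + 1 - 2 * k : ℕ) : ℝ) - 1) * (((2 * m + 1 - 2 * k : ℕ) : ℝ) * q + s))
            * x ^ (2 * m + 1 - 2 * k)) := by
    intro k hk
    have hk' : k ≤ m := by simpa using Nat.lt_succ_iff.mp (Finset.mem_range.mp hk)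
    rw [term_eq p q r s _ (cf p q r s m k) (2 * m + 1 - 2 * k) (by omega) x]
    ring
  rw [Finset.sum_congr rfl hterm, Finset.sum_add_distrib,
    Finset.sum_range_succ' _ m, Finset.sum_range_succ]
  have e0 : (2 * m + 1 - 2 * 0 : ℕ) = 2 * m + 1 := by omega
  have em : (2 * m + 1 - 2 * m : ℕ) = 1 := by omega
  have h0 : cf p q r s m 0 *
      ((p * ((2 * m + 1 - 2 * 0 : ℕ) : ℝ) * (((2 * m + 1 - 2 * 0 : ℕ) : ℝ) - 1)
          + r * ((2 * m + 1 - 2 * 0 : ℕ) : ℝ)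
          - (2 * (m : ℝ) + 1) * (r + 2 * (m : ℝ) * p)) * x ^ (2 * m + 1 - 2 * 0 + 2)) = 0 := by
    rw [e0]
    have : (p * ((2 * m + 1 : ℕ) : ℝ) * (((2 * m + 1 : ℕ) : ℝ) - 1)
        + r * ((2 * m + 1 : ℕ) : ℝ) - (2 * (m : ℝ) + 1) * (r + 2 * (m : ℝ) * p)) = 0 := by
      push_cast; ring
    rw [this, zero_mul, mul_zero]
  have hm : cf p q r s m m *
      ((((2 * m + 1 - 2 * m : ℕ) : ℝ) - 1) * (((2 * m + 1 - 2 * m : ℕ) : ℝ) * q + s)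
        * x ^ (2 * m + 1 - 2 * m)) = 0 := by
    rw [em]
    norm_num
  rw [h0, hm, add_zero, add_zero, ← Finset.sum_add_distrib]
  apply Finset.sum_eq_zero
  intro k hk
  have hkm : k < m := Finset.mem_range.mp hk
  have hexp : 2 * m + 1 - 2 * (k + 1) + 2 = 2 * m + 1 - 2 * k := by omega
  rw [hexp]
  have hc := coeff_key p q r s m hden k hkm
  linear_combination x ^ (2 * m + 1 - 2 * k) * hc
end

section
/- Fix real parameters p, q, r, s and a natural number n ≥ 1. Assume (2pn + r − p)(2pn + r − 3p) ≠ 0 and that all monic-normalization denominators are nonzero, i.e. (2i + (−1)^{k+1} + 2)q + s ≠ 0 and (2i + (−1)^{k+1} + 2⌊k/2⌋)p + r ≠ 0 for each k ∈ {n−1, n, n+1} and each 0 ≤ i ≤ ⌊k/2⌋ − 1. Then for every real x, S̄_{n+1}(p,q,r,s;x) = x·S̄_n(p,q,r,s;x) + C_n(p,q,r,s)·S̄_{n−1}(p,q,r,s;x), where C_n(p,q,r,s) = (pqn² + ((r−2p)q − (−1)ⁿ p s)n + (r−2p)s(1−(−1)ⁿ)/2)/((2pn + r − p)(2pn + r −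 3p)). -/
open Finset Real MeasureTheory

set_option maxHeartbeats 1000000

lemma prod_shift (h : ℕ → ℝ) (c K : ℕ) :
    (∏ j ∈ range K, h (c + j)) * h (c + K) = h c * ∏ j ∈ range K, h (c + j + 1) := by
  have h1 := Finset.prod_range_succ (fun j => h (c + j)) K
  have h2 := Finset.prod_range_succ' (fun j => h (c + j)) K
  rw [← h1, h2, mul_comm]
  simp [← Nat.add_assoc]

lemma core_even (p q r s : ℝ) (c k : ℕ)
    (hβ : ∀ j ≤ k+1, (2*((c:ℝ)+(j:ℝ))+1)*q + s ≠ 0)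
    (hα : ∀ j ≤ k+1, (2*((c:ℝ)+(j:ℝ)) + 2*((c:ℝ)+(k:ℝ)+1) - 1)*p + r ≠ 0) :
    (Nat.choose (c+k+1) (k+1) : ℝ) *
        ∏ j ∈ range (k+1), ((2*((c:ℝ)+(j:ℝ))+3)*q+s) / ((2*((c:ℝ)+(j:ℝ)) + 2*((c:ℝ)+(k:ℝ)+1) + 1)*p+r)
    = (Nat.choose (c+k+1) (k+1) : ℝ) *
        ∏ j ∈ range (k+1), ((2*((c:ℝ)+(j:ℝ))+1)*q+s) / ((2*((c:ℝ)+(j:ℝ)) + 2*((c:ℝ)+(k:ℝ)+1) - 1)*p+r)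
    + (2*((c:ℝ)+(k:ℝ)+1) * (2*((c:ℝ)+(k:ℝ)+1)*p*q + (r-2*p)*q - p*s)
        / (((4*((c:ℝ)+(k:ℝ)+1) - 1)*p + r) * ((4*((c:ℝ)+(k:ℝ)+1) - 3)*p + r)))
      * (Nat.choose (c+k) k : ℝ) *
        ∏ j ∈ range k, ((2*((c:ℝ)+(j:ℝ))+3)*q+s) / ((2*((c:ℝ)+(j:ℝ)) + 2*((c:ℝ)+(k:ℝ)+1) - 1)*p+r) := by
  simp only [Finset.prod_div_distrib]
  set M : ℝ := (c:ℝ)+(k:ℝ)+1 with hM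
  set C1 : ℝ := (Nat.choose (c+k+1) (k+1) : ℝ) with hC1
  set C2 : ℝ := (Nat.choose (c+k) k : ℝ) with hC2
  set Pb' : ℝ := ∏ j ∈ range (k+1), ((2*((c:ℝ)+(j:ℝ))+3)*q+s) with hPb'
  set Pa' : ℝ := ∏ j ∈ range (k+1), ((2*((c:ℝ)+(j:ℝ)) + 2*M + 1)*p+r) with hPa'
  set Pb : ℝ := ∏ j ∈ range (k+1), ((2*((c:ℝ)+(j:ℝ))+1)*q+s) with hPb
  set Pa : ℝ := ∏ j ∈ range (k+1), ((2*((c:ℝ)+(j:ℝ)) + 2*M - 1)*p+r) with hPa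
  set Qb : ℝ := ∏ j ∈ range k, ((2*((c:ℝ)+(j:ℝ))+3)*q+s) with hQb
  set Qa : ℝ := ∏ j ∈ range k, ((2*((c:ℝ)+(j:ℝ)) + 2*M - 1)*p+r) with hQa
  -- nonzero facts
  have nβc : (2*(c:ℝ)+1)*q+s ≠ 0 := by simpa using hβ 0 (by omega)
  have nβm : (2*M+1)*q+s ≠ 0 := by
    have h := hβ (k+1) le_rfl; push_cast at h; rw [hM]; convert h using 2; ring
  have nαc : (2*(c:ℝ)+2*M-1)*p+r ≠ 0 := by
    have h := hα 0 (by omega); push_cast at h; convert h using 2; ring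
  have nV : (4*M-1)*p+r ≠ 0 := by
    have h := hα (k+1) le_rfl; push_cast at h; rw [hM]; convert h using 2; ring
  have nV2 : (4*M-3)*p+r ≠ 0 := by
    have h := hα k (by omega); push_cast at h; rw [hM]; convert h using 2; ring
  have nPa : Pa ≠ 0 := by
    rw [hPa]; exact Finset.prod_ne_zero_iff.2 fun j hj => hα j (by have := Finset.mem_range.1 hj; omega)
  have nPa' : Pa' ≠ 0 := by
    rw [hPa']
    refine Finset.prod_ne_zero_iff.2 fun j hj => ?_
    have hj' : j + 1 ≤ k + 1 := by have := Finset.mem_range.1 hj; omega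
    have h := hα (j+1) hj'; push_cast at h; convert h using 2; ring
  have nQa : Qa ≠ 0 := by
    rw [hQa]; exact Finset.prod_ne_zero_iff.2 fun j hj => hα j (by have := Finset.mem_range.1 hj; omega)
  have nPb : Pb ≠ 0 := by
    rw [hPb]; exact Finset.prod_ne_zero_iff.2 fun j hj => hβ j (by have := Finset.mem_range.1 hj; omega)
  -- shift relations
  have r1 : Pb * ((2*M+1)*q+s) = ((2*(c:ℝ)+1)*q+s) * Pb' := by
    have h := prod_shift (fun i : ℕ => (2*(i:ℝ)+1)*q+s) c (k+1)
    rw [hPb, hPb']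
    calc (∏ j ∈ range (k+1), ((2*((c:ℝ)+(j:ℝ))+1)*q+s)) * ((2*M+1)*q+s)
        = (∏ j ∈ range (k+1), ((2*((c+j:ℕ):ℝ)+1)*q+s)) * ((2*((c+(k+1):ℕ):ℝ)+1)*q+s) := by
          rw [hM]; congr 1
          · exact Finset.prod_congr rfl fun j _ => by push_cast; ring
          · push_cast; ring
      _ = ((2*(c:ℝ)+1)*q+s) * ∏ j ∈ range (k+1), ((2*((c+j+1:ℕ):ℝ)+1)*q+s) := h
      _ = ((2*(c:ℝ)+1)*q+s) * ∏ j ∈ range (k+1), ((2*((c:ℝ)+(j:ℝ))+3)*q+s) := by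
          congr 1; exact Finset.prod_congr rfl fun j _ => by push_cast; ring
  have r2 : Pa * ((4*M-1)*p+r) = ((2*(c:ℝ)+2*M-1)*p+r) * Pa' := by
    have h := prod_shift (fun i : ℕ => (2*(i:ℝ)+2*M-1)*p+r) c (k+1)
    rw [hPa, hPa']
    calc (∏ j ∈ range (k+1), ((2*((c:ℝ)+(j:ℝ))+2*M-1)*p+r)) * ((4*M-1)*p+r)
        = (∏ j ∈ range (k+1), ((2*((c+j:ℕ):ℝ)+2*M-1)*p+r)) * ((2*((c+(k+1):ℕ):ℝ)+2*M-1)*p+r) := by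
          congr 1
          · exact Finset.prod_congr rfl fun j _ => by push_cast; ring
          · rw [hM]; push_cast; ring
      _ = ((2*(c:ℝ)+2*M-1)*p+r) * ∏ j ∈ range (k+1), ((2*((c+j+1:ℕ):ℝ)+2*M-1)*p+r) := h
      _ = ((2*(c:ℝ)+2*M-1)*p+r) * ∏ j ∈ range (k+1), ((2*((c:ℝ)+(j:ℝ))+2*M+1)*p+r) := by
          congr 1; exact Finset.prod_congr rfl fun j _ => by push_cast; ring
  have r3 : Pb' = Qb * ((2*M+1)*q+s) := by
    rw [hPb', hQb, Finset.prod_range_succ, hM]; push_cast; ring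
  have r4 : Pa = Qa * ((4*M-3)*p+r) := by
    rw [hPa, hQa, Finset.prod_range_succ, hM]; push_cast; ring
  -- explicit forms
  have ePb' : Pb' = Pb * ((2*M+1)*q+s) / ((2*(c:ℝ)+1)*q+s) := by
    rw [eq_div_iff nβc]; linear_combination -r1
  have ePa' : Pa' = Pa * ((4*M-1)*p+r) / ((2*(c:ℝ)+2*M-1)*p+r) := by
    rw [eq_div_iff nαc]; linear_combination -r2
  have eQb : Qb = Pb / ((2*(c:ℝ)+1)*q+s) := by
    have : Qb * ((2*M+1)*q+s) = (Pb / ((2*(c:ℝ)+1)*q+s)) * ((2*M+1)*q+s) := by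
      rw [← r3, ePb']; field_simp
    exact mul_right_cancel₀ nβm this
  have eQa : Qa = Pa / ((4*M-3)*p+r) := by
    rw [r4]; field_simp
  -- key scalar identity
  have hch : ((c:ℝ)+(k:ℝ)+1) * C2 = C1 * ((k:ℝ)+1) := by
    rw [hC1, hC2]
    exact_mod_cast congrArg (Nat.cast : ℕ → ℝ) (Nat.add_one_mul_choose_eq (c+k) k)
  have key : C1 * (((2*M+1)*q+s) * ((2*(c:ℝ)+2*M-1)*p+r))
      = C1 * (((2*(c:ℝ)+1)*q+s) * ((4*M-1)*p+r))
        + (2*M*(2*M*p*q+(r-2*p)*q-p*s)) * C2 := by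
    rw [hM]
    linear_combination (-2*(2*((c:ℝ)+(k:ℝ))*p*q + q*r - p*s)) * hch
  have hL : C1 * (Pb * ((2*M+1)*q+s) / ((2*(c:ℝ)+1)*q+s) / (Pa * ((4*M-1)*p+r) / ((2*(c:ℝ)+2*M-1)*p+r)))
      = (C1 * (((2*M+1)*q+s) * ((2*(c:ℝ)+2*M-1)*p+r))) * (Pb / (((2*(c:ℝ)+1)*q+s) * (((4*M-1)*p+r) * Pa))) := by
    field_simp
  have hR : C1 * (Pb / Pa) + (2*((c:ℝ)+(k:ℝ)+1) * (2*((c:ℝ)+(k:ℝ)+1)*p*q + (r-2*p)*q - p*s)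
        / (((4*((c:ℝ)+(k:ℝ)+1) - 1)*p + r) * ((4*((c:ℝ)+(k:ℝ)+1) - 3)*p + r))) * C2 * (Pb / ((2*(c:ℝ)+1)*q+s) / (Pa / ((4*M-3)*p+r)))
      = (C1 * (((2*(c:ℝ)+1)*q+s) * ((4*M-1)*p+r)) + (2*M*(2*M*p*q+(r-2*p)*q-p*s)) * C2)
          * (Pb / (((2*(c:ℝ)+1)*q+s) * (((4*M-1)*p+r) * Pa))) := by
    rw [← hM]
    generalize (2*(c:ℝ)+1)*q+s = B at nβc ⊢
    generalize (4*M-1)*p+r = V at nV ⊢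
    generalize (4*M-3)*p+r = V2 at nV2 ⊢
    field_simp
  rw [ePb', ePa', eQb, eQa, hL, hR, key]



lemma core_odd (p q r s : ℝ) (c k : ℕ)
    (hβm : (2*((c:ℝ)+(k:ℝ))+3)*q+s ≠ 0)
    (hα : ∀ j ≤ k+1, (2*((c:ℝ)+(j:ℝ)) + 2*((c:ℝ)+(k:ℝ)+1) + 1)*p + r ≠ 0)
    (hV : (4*((c:ℝ)+(k:ℝ)+1)+1)*p+r ≠ 0) :
    (Nat.choose (c+k+2) (k+1) : ℝ) *
        ∏ j ∈ range (k+1), ((2*((c:ℝ)+(j:ℝ))+3)*q+s) / ((2*((c:ℝ)+(j:ℝ)) + 2*((c:ℝ)+(k:ℝ)+1) + 3)*p+r)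
    = (Nat.choose (c+k+1) (k+1) : ℝ) *
        ∏ j ∈ range (k+1), ((2*((c:ℝ)+(j:ℝ))+3)*q+s) / ((2*((c:ℝ)+(j:ℝ)) + 2*((c:ℝ)+(k:ℝ)+1) + 1)*p+r)
    + ((((2*((c:ℝ)+(k:ℝ)+1)-1)*p+r) * ((2*((c:ℝ)+(k:ℝ)+1)+1)*q+s))
        / (((4*((c:ℝ)+(k:ℝ)+1)+1)*p+r) * ((4*((c:ℝ)+(k:ℝ)+1)-1)*p+r)))
      * (Nat.choose (c+k+1) k : ℝ) *
        ∏ j ∈ range k, ((2*((c:ℝ)+(j:ℝ))+3)*q+s) / ((2*((c:ℝ)+(j:ℝ)) + 2*((c:ℝ)+(k:ℝ)+1) + 1)*p+r) := by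
  simp only [Finset.prod_div_distrib]
  set M : ℝ := (c:ℝ)+(k:ℝ)+1 with hM
  set C1' : ℝ := (Nat.choose (c+k+2) (k+1) : ℝ) with hC1'
  set C1 : ℝ := (Nat.choose (c+k+1) (k+1) : ℝ) with hC1
  set C2 : ℝ := (Nat.choose (c+k+1) k : ℝ) with hC2
  set Pb : ℝ := ∏ j ∈ range (k+1), ((2*((c:ℝ)+(j:ℝ))+3)*q+s) with hPb
  set Pa' : ℝ := ∏ j ∈ range (k+1), ((2*((c:ℝ)+(j:ℝ)) + 2*M + 3)*p+r) with hPa'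
  set Pa : ℝ := ∏ j ∈ range (k+1), ((2*((c:ℝ)+(j:ℝ)) + 2*M + 1)*p+r) with hPa
  set Qb : ℝ := ∏ j ∈ range k, ((2*((c:ℝ)+(j:ℝ))+3)*q+s) with hQb
  set Qa : ℝ := ∏ j ∈ range k, ((2*((c:ℝ)+(j:ℝ)) + 2*M + 1)*p+r) with hQa
  have nβm : (2*M+1)*q+s ≠ 0 := by rw [hM]; convert hβm using 2; ring
  have nα0 : (2*(c:ℝ)+2*M+1)*p+r ≠ 0 := by
    have h := hα 0 (by omega); push_cast at h; convert h using 2 <;> ring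
  have nV' : (4*M-1)*p+r ≠ 0 := by
    have h := hα k (by omega); push_cast at h; rw [hM]; convert h using 2 <;> ring
  have nV1 : (4*M+1)*p+r ≠ 0 := by rw [hM]; convert hV using 2
  have nPa : Pa ≠ 0 := by
    rw [hPa]; exact Finset.prod_ne_zero_iff.2 fun j hj => hα j (by have := Finset.mem_range.1 hj; omega)
  have nPa' : Pa' ≠ 0 := by
    rw [hPa']
    refine Finset.prod_ne_zero_iff.2 fun j hj => ?_
    have h := hα (j+1) (by have := Finset.mem_range.1 hj; omega)
    push_cast at h; convert h using 2 <;> ring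
  have nQa : Qa ≠ 0 := by
    rw [hQa]; exact Finset.prod_ne_zero_iff.2 fun j hj => hα j (by have := Finset.mem_range.1 hj; omega)
  have r2 : Pa * ((4*M+1)*p+r) = ((2*(c:ℝ)+2*M+1)*p+r) * Pa' := by
    have h := prod_shift (fun i : ℕ => (2*(i:ℝ)+2*M-1)*p+r) (c+1) (k+1)
    rw [hPa, hPa']
    calc (∏ j ∈ range (k+1), ((2*((c:ℝ)+(j:ℝ))+2*M+1)*p+r)) * ((4*M+1)*p+r)
        = (∏ j ∈ range (k+1), ((2*((c+1+j:ℕ):ℝ)+2*M-1)*p+r)) * ((2*((c+1+(k+1):ℕ):ℝ)+2*M-1)*p+r) := by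
          congr 1
          · exact Finset.prod_congr rfl fun j _ => by push_cast; ring
          · rw [hM]; push_cast; ring
      _ = ((2*((c+1:ℕ):ℝ)+2*M-1)*p+r) * ∏ j ∈ range (k+1), ((2*((c+1+j+1:ℕ):ℝ)+2*M-1)*p+r) := h
      _ = ((2*(c:ℝ)+2*M+1)*p+r) * ∏ j ∈ range (k+1), ((2*((c:ℝ)+(j:ℝ))+2*M+3)*p+r) := by
          congr 1
          · push_cast; ring
          · exact Finset.prod_congr rfl fun j _ => by push_cast; ring
  have r3 : Pb = Qb * ((2*M+1)*q+s) := by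
    rw [hPb, hQb, Finset.prod_range_succ, hM]; push_cast; ring
  have r4 : Pa = Qa * ((4*M-1)*p+r) := by
    rw [hPa, hQa, Finset.prod_range_succ, hM]; push_cast; ring
  have ePa' : Pa' = Pa * ((4*M+1)*p+r) / ((2*(c:ℝ)+2*M+1)*p+r) := by
    rw [eq_div_iff nα0]; linear_combination -r2
  have eQb : Qb = Pb / ((2*M+1)*q+s) := by
    rw [r3]; field_simp
  have eQa : Qa = Pa / ((4*M-1)*p+r) := by
    rw [r4]; field_simp
  have hP : C1' = C2 + C1 := by
    rw [hC1', hC1, hC2]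
    exact_mod_cast congrArg (Nat.cast : ℕ → ℝ) (Nat.choose_succ_succ (c+k+1) k)
  have hch : ((c:ℝ)+(k:ℝ)+2) * C2 = C1' * ((k:ℝ)+1) := by
    rw [hC1', hC2]
    exact_mod_cast congrArg (Nat.cast : ℕ → ℝ) (Nat.add_one_mul_choose_eq (c+k+1) k)
  have key : C1' * ((2*(c:ℝ)+2*M+1)*p+r) = C1 * ((4*M+1)*p+r) + C2 * ((2*M-1)*p+r) := by
    rw [hM]
    linear_combination (r + (4*((c:ℝ)+(k:ℝ)+1)+1)*p) * hP + 2*p * hch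
  have hL : C1' * (Pb / (Pa * ((4*M+1)*p+r) / ((2*(c:ℝ)+2*M+1)*p+r)))
      = (C1' * ((2*(c:ℝ)+2*M+1)*p+r)) * (Pb / (((4*M+1)*p+r) * Pa)) := by
    field_simp
  have hR : C1 * (Pb / Pa) + (((2*M-1)*p+r) * ((2*M+1)*q+s) / (((4*M+1)*p+r) * ((4*M-1)*p+r)))
        * C2 * (Pb / ((2*M+1)*q+s) / (Pa / ((4*M-1)*p+r)))
      = (C1 * ((4*M+1)*p+r) + C2 * ((2*M-1)*p+r)) * (Pb / (((4*M+1)*p+r) * Pa)) := by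
    generalize (2*M+1)*q+s = B at nβm ⊢
    generalize (4*M-1)*p+r = V at nV' ⊢
    generalize (4*M+1)*p+r = V1 at nV1 ⊢
    field_simp
  rw [ePa', eQb, eQa, hL, hR, key]

lemma core_odd_top (p q r s : ℝ) (m : ℕ)
    (hα : ∀ j ≤ m+1, (2*(j:ℝ)+2*(m:ℝ)-1)*p+r ≠ 0) :
    ∏ j ∈ range (m+1), ((2*(j:ℝ)+1)*q+s) / ((2*(j:ℝ)+2*(m:ℝ)+1)*p+r)
    = ((((2*(m:ℝ)-1)*p+r) * ((2*(m:ℝ)+1)*q+s))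
        / (((4*(m:ℝ)+1)*p+r) * ((4*(m:ℝ)-1)*p+r)))
      * ∏ j ∈ range m, ((2*(j:ℝ)+1)*q+s) / ((2*(j:ℝ)+2*(m:ℝ)-1)*p+r) := by
  simp only [Finset.prod_div_distrib]
  set Pb : ℝ := ∏ j ∈ range (m+1), ((2*(j:ℝ)+1)*q+s) with hPb
  set Pa' : ℝ := ∏ j ∈ range (m+1), ((2*(j:ℝ)+2*(m:ℝ)+1)*p+r) with hPa'
  set Pa : ℝ := ∏ j ∈ range (m+1), ((2*(j:ℝ)+2*(m:ℝ)-1)*p+r) with hPa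
  set Qb : ℝ := ∏ j ∈ range m, ((2*(j:ℝ)+1)*q+s) with hQb
  set Qa : ℝ := ∏ j ∈ range m, ((2*(j:ℝ)+2*(m:ℝ)-1)*p+r) with hQa
  have nα0 : (2*(0:ℝ)+2*(m:ℝ)-1)*p+r ≠ 0 := by
    have h := hα 0 (by omega); push_cast at h ⊢; convert h using 2 <;> ring
  have nVm : (4*(m:ℝ)-1)*p+r ≠ 0 := by
    have h := hα m (by omega); convert h using 2 <;> ring
  have nVm1 : (4*(m:ℝ)+1)*p+r ≠ 0 := by
    have h := hα (m+1) (by omega); push_cast at h; convert h using 2 <;> ring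
  have nQa : Qa ≠ 0 := by
    rw [hQa]; exact Finset.prod_ne_zero_iff.2 fun j hj => hα j (by have := Finset.mem_range.1 hj; omega)
  have rP : Pb = Qb * ((2*(m:ℝ)+1)*q+s) := by
    rw [hPb, hQb, Finset.prod_range_succ]
  have rQ : Pa = Qa * ((4*(m:ℝ)-1)*p+r) := by
    rw [hPa, hQa, Finset.prod_range_succ]; ring
  have rA : Pa * ((4*(m:ℝ)+1)*p+r) = ((2*(0:ℝ)+2*(m:ℝ)-1)*p+r) * Pa' := by
    have h := prod_shift (fun i : ℕ => (2*(i:ℝ)+2*(m:ℝ)-1)*p+r) 0 (m+1)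
    simp only [Nat.zero_add] at h
    rw [hPa, hPa']
    calc (∏ j ∈ range (m+1), ((2*(j:ℝ)+2*(m:ℝ)-1)*p+r)) * ((4*(m:ℝ)+1)*p+r)
        = (∏ j ∈ range (m+1), ((2*(j:ℝ)+2*(m:ℝ)-1)*p+r)) * ((2*((m+1:ℕ):ℝ)+2*(m:ℝ)-1)*p+r) := by
          push_cast; ring
      _ = ((2*((0:ℕ):ℝ)+2*(m:ℝ)-1)*p+r) * ∏ j ∈ range (m+1), ((2*((j+1:ℕ):ℝ)+2*(m:ℝ)-1)*p+r) := h
      _ = ((2*(0:ℝ)+2*(m:ℝ)-1)*p+r) * ∏ j ∈ range (m+1), ((2*(j:ℝ)+2*(m:ℝ)+1)*p+r) := by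
          refine congrArg₂ (· * ·) (by push_cast; ring)
            (Finset.prod_congr rfl fun j _ => by push_cast; ring)
  have ePa' : Pa' = Qa * ((4*(m:ℝ)-1)*p+r) * ((4*(m:ℝ)+1)*p+r) / ((2*(0:ℝ)+2*(m:ℝ)-1)*p+r) := by
    rw [eq_div_iff nα0]
    linear_combination -rA + ((4*(m:ℝ)+1)*p+r) * rQ
  rw [rP, ePa']
  field_simp
  ring

lemma norm_sum (f g : ℕ → ℝ) (m : ℕ) (hf : ∀ i < m, f i ≠ 0) (hg : ∀ i < m, g i ≠ 0)
    (c X : ℕ → ℝ) :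
    (∏ i ∈ range m, g i / f i) *
      ∑ k ∈ range (m+1), c k * (∏ i ∈ range (m - k), f i / g i) * X k
    = ∑ k ∈ range (m+1), c k * (∏ j ∈ range k, g (m - k + j) / f (m - k + j)) * X k := by
  rw [Finset.mul_sum]
  refine Finset.sum_congr rfl fun k hk => ?_
  have hkm : k ≤ m := by simpa [Nat.lt_succ_iff] using hk
  have h1 : (∏ i ∈ range m, g i / f i)
      = (∏ i ∈ range (m-k), g i / f i) * ∏ i ∈ Ico (m-k) m, g i / f i := by
    rw [Finset.prod_range_mul_prod_Ico _ (Nat.sub_le m k)]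
  have h2 : (∏ i ∈ range (m-k), g i / f i) * (∏ i ∈ range (m-k), f i / g i) = 1 := by
    rw [← Finset.prod_mul_distrib]
    refine Finset.prod_eq_one fun i hi => ?_
    have him : i < m := lt_of_lt_of_le (Finset.mem_range.1 hi) (Nat.sub_le m k)
    have := hf i him
    have := hg i him
    field_simp
  have h3 : (∏ i ∈ Ico (m-k) m, g i / f i)
      = ∏ j ∈ range k, g (m - k + j) / f (m - k + j) := by
    rw [Finset.prod_Ico_eq_prod_range]
    have : m - (m - k) = k := by omega
    rw [this]
  rw [h1, h3]
  linear_combination ((∏ j ∈ range k, g (m - k + j) / f (m - k + j)) * c k * X k) * h2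

/-- Three-term recurrence relation for the monic polynomials:
`S̄_{n+1}(x) = x·S̄_n(x) + C_n(p,q,r,s)·S̄_{n−1}(x)`. -/
theorem Sbar_recurrence (p q r s : ℝ) (n : ℕ) (hn : 1 ≤ n)
    (hquad : (2 * p * (n : ℝ) + r - p) * (2 * p * (n : ℝ) + r - 3 * p) ≠ 0)
    (hden : ∀ k ∈ ({n - 1, n, n + 1} : Finset ℕ), ∀ i : ℕ, i < k / 2 →
      (2 * (i : ℝ) + (-1 : ℝ) ^ (k + 1) + 2) * q + s ≠ 0 ∧
      (2 * (i : ℝ) + (-1 : ℝ) ^ (k + 1) + 2 * ((k / 2 : ℕ) : ℝ)) * p + r ≠ 0) :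
    ∀ x : ℝ,
      Sbar p q r s (n + 1) x =
        x * Sbar p q r s n x +
          ((p * q * (n : ℝ) ^ 2 + ((r - 2 * p) * q - (-1 : ℝ) ^ n * p * s) * (n : ℝ)
              + (r - 2 * p) * s * (1 - (-1 : ℝ) ^ n) / 2) /
            ((2 * p * (n : ℝ) + r - p) * (2 * p * (n : ℝ) + r - 3 * p)))
            * Sbar p q r s (n - 1) x := by
  intro x
  rcases Nat.even_or_odd n with he | ho
  · obtain ⟨m, hm⟩ := he
    have hm2 : n = 2*m := by omega
    subst hm2
    have hm1 : 1 ≤ m := by omega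
    have e1 : (-1:ℝ)^(2*m+1+1) = 1 := by
      rw [show 2*m+1+1 = 2*(m+1) from by ring]
      exact Even.neg_one_pow ⟨m+1, by ring⟩
    have e2 : (-1:ℝ)^(2*m+1) = -1 := Odd.neg_one_pow ⟨m, by ring⟩
    have e3 : (-1:ℝ)^(2*m-1+1) = 1 := by
      rw [show 2*m-1+1 = 2*m from by omega]
      exact Even.neg_one_pow ⟨m, by ring⟩
    have e4 : (-1:ℝ)^(2*m) = 1 := Even.neg_one_pow ⟨m, by ring⟩
    have d0 : (2*m)/2 = m := by omega
    have d1 : (2*m+1)/2 = m := by omega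
    have dm : (2*m-1)/2 = m-1 := by omega
    have row0 := hden (2*m) (by simp)
    have rowP := hden (2*m+1) (by simp)
    have rowM := hden (2*m-1) (by simp)
    rw [d0, e2] at row0
    rw [d1, e1] at rowP
    rw [dm, e3] at rowM
    simp only [Sbar, S, d0, d1, dm, e1, e2, e3, e4]
    rw [norm_sum (fun i : ℕ => (2*(i:ℝ)+1+2*((m:ℕ):ℝ))*p+r) (fun i : ℕ => (2*(i:ℝ)+1+2)*q+s) m
          (fun i hi => (rowP i hi).2) (fun i hi => (rowP i hi).1)
          (fun k => (Nat.choose m k : ℝ)) (fun k => x^(2*m+1-2*k))]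
    rw [norm_sum (fun i : ℕ => (2*(i:ℝ)+(-1)+2*((m:ℕ):ℝ))*p+r) (fun i : ℕ => (2*(i:ℝ)+(-1)+2)*q+s) m
          (fun i hi => (row0 i hi).2) (fun i hi => (row0 i hi).1)
          (fun k => (Nat.choose m k : ℝ)) (fun k => x^(2*m-2*k))]
    rw [norm_sum (fun i : ℕ => (2*(i:ℝ)+1+2*((m-1:ℕ):ℝ))*p+r) (fun i : ℕ => (2*(i:ℝ)+1+2)*q+s) (m-1)
          (fun i hi => (rowM i hi).2) (fun i hi => (rowM i hi).1)
          (fun k => (Nat.choose (m-1) k : ℝ)) (fun k => x^(2*m-1-2*k))]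
    simp only [show m-1+1 = m from by omega]
    rw [Finset.mul_sum, Finset.mul_sum]
    rw [Finset.sum_range_succ', Finset.sum_range_succ']
    rw [add_right_comm, ← Finset.sum_add_distrib]
    congr 1
    · -- per-k identity
      have hbAll : ∀ i ≤ m, (2*(i:ℝ)+1)*q+s ≠ 0 := by
        intro i hi
        rcases lt_or_eq_of_le hi with h | h
        · have hh := (row0 i h).1; convert hh using 2; ring
        · rw [h]
          have hh := (rowP (m-1) (by omega)).1
          have hc1 : ((m-1:ℕ):ℝ) = (m:ℝ)-1 := by rw [Nat.cast_sub hm1, Nat.cast_one]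
          rw [hc1] at hh; convert hh using 2; ring
      have haAll : ∀ i ≤ m, (2*(i:ℝ)+2*(m:ℝ)-1)*p+r ≠ 0 := by
        intro i hi
        rcases lt_or_eq_of_le hi with h | h
        · have hh := (row0 i h).2; convert hh using 2; ring
        · rw [h]
          have hh := (rowP (m-1) (by omega)).2
          have hc1 : ((m-1:ℕ):ℝ) = (m:ℝ)-1 := by rw [Nat.cast_sub hm1, Nat.cast_one]
          rw [hc1] at hh; convert hh using 2; ring
      refine Finset.sum_congr rfl fun k hk => ?_
      have hkm := Finset.mem_range.1 hk
      obtain ⟨c, hc⟩ : ∃ c, m = c + k + 1 := ⟨m-k-1, by omega⟩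
      have hcR : (m:ℝ) = (c:ℝ)+(k:ℝ)+1 := by rw [hc]; push_cast; ring
      have hco := core_even p q r s c k
        (fun j hj => by have h := hbAll (c+j) (by omega); push_cast at h; exact h)
        (fun j hj => by
          have h := haAll (c+j) (by omega); push_cast at h; rw [hcR] at h; exact h)
      have hP1 : (∏ j ∈ Finset.range (k+1),
            ((2*((m-(k+1)+j:ℕ):ℝ)+1+2)*q+s) / ((2*((m-(k+1)+j:ℕ):ℝ)+1+2*((m:ℕ):ℝ))*p+r))
          = ∏ j ∈ Finset.range (k+1),
            ((2*((c:ℝ)+(j:ℝ))+3)*q+s) / ((2*((c:ℝ)+(j:ℝ)) + 2*((c:ℝ)+(k:ℝ)+1) + 1)*p+r) :=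
        Finset.prod_congr rfl fun j _ => by
          rw [show m-(k+1)+j = c+j from by omega, hcR]; push_cast; ring
      have hP2 : (∏ j ∈ Finset.range (k+1),
            ((2*((m-(k+1)+j:ℕ):ℝ)+(-1)+2)*q+s) / ((2*((m-(k+1)+j:ℕ):ℝ)+(-1)+2*((m:ℕ):ℝ))*p+r))
          = ∏ j ∈ Finset.range (k+1),
            ((2*((c:ℝ)+(j:ℝ))+1)*q+s) / ((2*((c:ℝ)+(j:ℝ)) + 2*((c:ℝ)+(k:ℝ)+1) - 1)*p+r) :=
        Finset.prod_congr rfl fun j _ => by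
          rw [show m-(k+1)+j = c+j from by omega, hcR]; push_cast; ring
      have hP3 : (∏ j ∈ Finset.range k,
            ((2*((m-1-k+j:ℕ):ℝ)+1+2)*q+s) / ((2*((m-1-k+j:ℕ):ℝ)+1+2*((m-1:ℕ):ℝ))*p+r))
          = ∏ j ∈ Finset.range k,
            ((2*((c:ℝ)+(j:ℝ))+3)*q+s) / ((2*((c:ℝ)+(j:ℝ)) + 2*((c:ℝ)+(k:ℝ)+1) - 1)*p+r) :=
        Finset.prod_congr rfl fun j _ => by
          rw [show m-1-k+j = c+j from by omega,
            show ((m-1:ℕ):ℝ) = (c:ℝ)+(k:ℝ) from by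
              rw [show m-1 = c+k from by omega]; push_cast; ring]
          push_cast; ring
      rw [show (2*m+1-2*(k+1)) = (2*m-2*(k+1))+1 from by omega,
          show (2*m-1-2*k) = (2*m-2*(k+1))+1 from by omega, pow_succ,
          hP1, hP2, hP3,
          show (Nat.choose m (k+1) : ℝ) = (Nat.choose (c+k+1) (k+1) : ℝ) from by rw [hc],
          show (Nat.choose (m-1) k : ℝ) = (Nat.choose (c+k) k : ℝ) from by
            rw [show m-1 = c+k from by omega],
          show ((2*m:ℕ):ℝ) = 2*((c:ℝ)+(k:ℝ)+1) from by rw [hc]; push_cast; ring]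
      linear_combination (x^(2*m-2*(k+1)) * x) * hco
    · simp
      rw [pow_succ]
      ring
  · obtain ⟨m, hm⟩ := ho
    subst hm
    have f1 : (-1:ℝ)^(2*m+1+1+1) = -1 := by
      rw [show 2*m+1+1+1 = 2*(m+1)+1 from by ring]
      exact Odd.neg_one_pow ⟨m+1, by ring⟩
    have f2 : (-1:ℝ)^(2*m+1+1) = 1 := by
      rw [show 2*m+1+1 = 2*(m+1) from by ring]
      exact Even.neg_one_pow ⟨m+1, by ring⟩
    have f3 : (-1:ℝ)^(2*m+1-1+1) = -1 := by
      rw [show 2*m+1-1+1 = 2*m+1 from by omega]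
      exact Odd.neg_one_pow ⟨m, by ring⟩
    have f4 : (-1:ℝ)^(2*m+1) = -1 := Odd.neg_one_pow ⟨m, by ring⟩
    have g1 : (2*m+1+1)/2 = m+1 := by omega
    have g0 : (2*m+1)/2 = m := by omega
    have gm : (2*m+1-1)/2 = m := by omega
    have row0 := hden (2*m+1) (by simp)
    have rowP := hden (2*m+1+1) (by simp)
    have rowM := hden (2*m+1-1) (by simp)
    rw [g0, f2] at row0
    rw [g1, f1] at rowP
    rw [gm, f3] at rowM
    -- all-index nonzero facts
    have haAll : ∀ j ≤ m+1, (2*(j:ℝ)+2*(m:ℝ)-1)*p+r ≠ 0 := by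
      intro j hj
      rcases Nat.eq_zero_or_pos j with rfl | hjpos
      · rcases Nat.eq_zero_or_pos m with h0 | hmpos
        · intro hzero
          refine (mul_ne_zero_iff.1 hquad).2 ?_
          rw [h0] at hzero ⊢
          push_cast at hzero ⊢
          linear_combination hzero
        · have hh := (rowM 0 hmpos).2
          push_cast at hh ⊢
          convert hh using 2 <;> ring
      · have hh := (rowP (j-1) (by omega)).2
        have hc1 : ((j-1:ℕ):ℝ) = (j:ℝ)-1 := by rw [Nat.cast_sub hjpos, Nat.cast_one]
        rw [hc1] at hh
        push_cast at hh
        convert hh using 2 <;> ring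
    simp only [Sbar, S, g1, g0, gm, f1, f2, f3, f4]
    rw [norm_sum (fun i : ℕ => (2*(i:ℝ)+(-1)+2*((m+1:ℕ):ℝ))*p+r) (fun i : ℕ => (2*(i:ℝ)+(-1)+2)*q+s) (m+1)
          (fun i hi => (rowP i hi).2) (fun i hi => (rowP i hi).1)
          (fun k => (Nat.choose (m+1) k : ℝ)) (fun k => x^(2*m+1+1-2*k))]
    rw [norm_sum (fun i : ℕ => (2*(i:ℝ)+1+2*((m:ℕ):ℝ))*p+r) (fun i : ℕ => (2*(i:ℝ)+1+2)*q+s) m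
          (fun i hi => (row0 i hi).2) (fun i hi => (row0 i hi).1)
          (fun k => (Nat.choose m k : ℝ)) (fun k => x^(2*m+1-2*k))]
    rw [norm_sum (fun i : ℕ => (2*(i:ℝ)+(-1)+2*((m:ℕ):ℝ))*p+r) (fun i : ℕ => (2*(i:ℝ)+(-1)+2)*q+s) m
          (fun i hi => (rowM i hi).2) (fun i hi => (rowM i hi).1)
          (fun k => (Nat.choose m k : ℝ)) (fun k => x^(2*m+1-1-2*k))]
    rw [Finset.mul_sum, Finset.mul_sum]
    rw [Finset.sum_range_succ']
    rw [Finset.sum_range_succ]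
    rw [Finset.sum_range_succ']
    rw [Finset.sum_range_succ]
    rw [add_add_add_comm, ← Finset.sum_add_distrib, add_assoc, add_comm
      ((Finset.sum (Finset.range m) _ : ℝ)) ((_ : ℝ) + (_ : ℝ))]
    rw [add_comm]
    congr 1
    · -- per-k identity
      refine Finset.sum_congr rfl fun k hk => ?_
      have hkm := Finset.mem_range.1 hk
      obtain ⟨c, hc⟩ : ∃ c, m = c + k + 1 := ⟨m-k-1, by omega⟩
      have hcR : (m:ℝ) = (c:ℝ)+(k:ℝ)+1 := by rw [hc]; push_cast; ring
      have hbm : (2*((c:ℝ)+(k:ℝ))+3)*q+s ≠ 0 := by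
        have h := (rowP m (by omega)).1
        convert h using 2
        rw [hcR]; ring
      have hco := core_odd p q r s c k hbm
        (fun j hj => by
          have h := haAll (c+j+1) (by omega)
          push_cast at h
          rw [hcR] at h
          convert h using 2 <;> ring)
        (by
          have h := haAll (m+1) (by omega)
          push_cast at h
          rw [hcR] at h
          convert h using 2 <;> ring)
      have hP1 : (∏ j ∈ Finset.range (k+1),
            ((2*((m+1-(k+1)+j:ℕ):ℝ)+(-1)+2)*q+s) / ((2*((m+1-(k+1)+j:ℕ):ℝ)+(-1)+2*((m+1:ℕ):ℝ))*p+r))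
          = ∏ j ∈ Finset.range (k+1),
            ((2*((c:ℝ)+(j:ℝ))+3)*q+s) / ((2*((c:ℝ)+(j:ℝ)) + 2*((c:ℝ)+(k:ℝ)+1) + 3)*p+r) :=
        Finset.prod_congr rfl fun j _ => by
          rw [show m+1-(k+1)+j = c+1+j from by omega]; push_cast; rw [hcR]; ring
      have hP2 : (∏ j ∈ Finset.range (k+1),
            ((2*((m-(k+1)+j:ℕ):ℝ)+1+2)*q+s) / ((2*((m-(k+1)+j:ℕ):ℝ)+1+2*((m:ℕ):ℝ))*p+r))
          = ∏ j ∈ Finset.range (k+1),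
            ((2*((c:ℝ)+(j:ℝ))+3)*q+s) / ((2*((c:ℝ)+(j:ℝ)) + 2*((c:ℝ)+(k:ℝ)+1) + 1)*p+r) :=
        Finset.prod_congr rfl fun j _ => by
          rw [show m-(k+1)+j = c+j from by omega]; push_cast; rw [hcR]; ring
      have hP3 : (∏ j ∈ Finset.range k,
            ((2*((m-k+j:ℕ):ℝ)+(-1)+2)*q+s) / ((2*((m-k+j:ℕ):ℝ)+(-1)+2*((m:ℕ):ℝ))*p+r))
          = ∏ j ∈ Finset.range k,
            ((2*((c:ℝ)+(j:ℝ))+3)*q+s) / ((2*((c:ℝ)+(j:ℝ)) + 2*((c:ℝ)+(k:ℝ)+1) + 1)*p+r) :=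
        Finset.prod_congr rfl fun j _ => by
          rw [show m-k+j = c+1+j from by omega]; push_cast; rw [hcR]; ring
      rw [show 2*m+1+1-2*(k+1) = (2*m+1-2*(k+1))+1 from by omega,
          show 2*m+1-1-2*k = (2*m+1-2*(k+1))+1 from by omega, pow_succ,
          hP1, hP2, hP3,
          show (Nat.choose (m+1) (k+1) : ℝ) = (Nat.choose (c+k+2) (k+1) : ℝ) from by
            rw [show m+1 = c+k+2 from by omega],
          show (Nat.choose m (k+1) : ℝ) = (Nat.choose (c+k+1) (k+1) : ℝ) from by rw [hc],
          show (Nat.choose m k : ℝ) = (Nat.choose (c+k+1) k : ℝ) from by rw [hc],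
          show ((2*m+1:ℕ):ℝ) = 2*((c:ℝ)+(k:ℝ)+1)+1 from by rw [hc]; push_cast; ring]
      linear_combination (x^(2*m+1-2*(k+1)) * x) * hco
    · rw [add_comm]
      refine congrArg₂ (· + ·) ?_ ?_
      · -- constant coefficient
        simp
        rw [pow_succ]
        ring
      · -- top coefficient via core_odd_top
        have hT1 : (∏ j ∈ Finset.range (m+1),
              ((2*((m+1-(m+1)+j:ℕ):ℝ)+(-1)+2)*q+s) / ((2*((m+1-(m+1)+j:ℕ):ℝ)+(-1)+2*((m+1:ℕ):ℝ))*p+r))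
            = ∏ j ∈ Finset.range (m+1),
              ((2*(j:ℝ)+1)*q+s) / ((2*(j:ℝ)+2*(m:ℝ)+1)*p+r) :=
          Finset.prod_congr rfl fun j _ => by
            rw [show m+1-(m+1)+j = j from by omega]; push_cast; ring
        have hT2 : (∏ j ∈ Finset.range m,
              ((2*((m-m+j:ℕ):ℝ)+(-1)+2)*q+s) / ((2*((m-m+j:ℕ):ℝ)+(-1)+2*((m:ℕ):ℝ))*p+r))
            = ∏ j ∈ Finset.range m,
              ((2*(j:ℝ)+1)*q+s) / ((2*(j:ℝ)+2*(m:ℝ)-1)*p+r) :=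
          Finset.prod_congr rfl fun j _ => by
            rw [show m-m+j = j from by omega]; push_cast; ring
        have hco := core_odd_top p q r s m haAll
        rw [hT1, hT2, show 2*m+1+1-2*(m+1) = 0 from by omega,
            show 2*m+1-1-2*m = 0 from by omega, pow_zero,
            Nat.choose_self, Nat.choose_self, Nat.cast_one,
            show ((2*m+1:ℕ):ℝ) = 2*(m:ℝ)+1 from by push_cast; ring]
        linear_combination hco
end

section
/- Fix real parameters p, q, r, s with p ≠ 0 and q ≠ 0, and a natural number n. Assume (2i + (−1)^{n+1} + 2)q + s ≠ 0 and (2i + (−1)^{n+1} + 2⌊n/2⌋)p + r ≠ 0 for 0 ≤ i ≤ ⌊n/2⌋ − 1, and that the Pochhammer values (−(r + (2n−3)p)/(2p))_k are nonzero for 0 ≤ k ≤ ⌊n/2⌋. Then for every real x, S̄_n(p,q,r,s;x) = Σ_{k=0}^{⌊n/2⌋} [ (−⌊n/2⌋)_k · ((q−s)/(2q) − ⌊(n+1)/2⌋)_k / ( (−(r + (2n−3)p)/(2p))_k · k! ) ] · (−q/p)^k · x^{n−2k}, i.e. S̄_n has the terminating Gauss hypergeometric representation x^n · ₂F₁(−⌊n/2⌋,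 (q−s)/(2q) − ⌊(n+1)/2⌋; −(r + (2n−3)p)/(2p); −q/(px²)). -/
open Finset Real MeasureTheory

/-- The Pochhammer symbol `(a)_k = a(a+1)⋯(a+k−1)`. -/
noncomputable def poch (a : ℝ) (k : ℕ) : ℝ := ∏ i ∈ Finset.range k, (a + i)

lemma poch_neg_nat (m : ℕ) : ∀ k : ℕ, k ≤ m →
    poch (-(m : ℝ)) k = (-1) ^ k * (m.descFactorial k : ℝ) := by
  intro k
  induction k with
  | zero => simp [poch]
  | succ k ih =>
    intro hk
    have hk' : k ≤ m := Nat.le_of_succ_le hk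
    rw [poch, Finset.prod_range_succ, ← poch, ih hk', Nat.descFactorial_succ]
    have : -(m : ℝ) + k = -(((m - k : ℕ) : ℝ)) := by
      push_cast [Nat.cast_sub hk']; ring
    rw [this]
    push_cast
    ring

lemma prod_reflect_aux (c a : ℝ) (k : ℕ) (f : ℕ → ℝ)
    (h : ∀ j < k, f j = c * (a + ((k - 1 - j : ℕ) : ℝ))) :
    ∏ j ∈ Finset.range k, f j = c ^ k * poch a k := by
  have h1 : ∏ j ∈ Finset.range k, f j
      = ∏ j ∈ Finset.range k, (fun i : ℕ => c * (a + (i : ℝ))) (k - 1 - j) := by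
    refine Finset.prod_congr rfl ?_
    intro j hj
    exact h j (Finset.mem_range.mp hj)
  rw [h1, Finset.prod_range_reflect (fun i : ℕ => c * (a + (i : ℝ))) k]
  rw [Finset.prod_mul_distrib, Finset.prod_const, Finset.card_range, poch]

/-- Terminating Gauss hypergeometric representation of the monic polynomials:
`S̄_n(p,q,r,s;x) = xⁿ · ₂F₁(−⌊n/2⌋, (q−s)/(2q) − ⌊(n+1)/2⌋; −(r+(2n−3)p)/(2p); −q/(px²))`. -/
theorem Sbar_hypergeometric_representation (p q r s : ℝ) (hp : p ≠ 0) (hq : q ≠ 0) (n : ℕ)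
    (hden1 : ∀ i : ℕ, i < n / 2 →
      (2 * (i : ℝ) + (-1 : ℝ) ^ (n + 1) + 2) * q + s ≠ 0)
    (hden2 : ∀ i : ℕ, i < n / 2 →
      (2 * (i : ℝ) + (-1 : ℝ) ^ (n + 1) + 2 * ((n / 2 : ℕ) : ℝ)) * p + r ≠ 0)
    (hpoch : ∀ k : ℕ, k ≤ n / 2 →
      poch (-(r + (2 * (n : ℝ) - 3) * p) / (2 * p)) k ≠ 0) :
    ∀ x : ℝ,
      Sbar p q r s n x =
        ∑ k ∈ Finset.range (n / 2 + 1),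
          (poch (-(((n / 2 : ℕ) : ℝ))) k *
              poch ((q - s) / (2 * q) - (((n + 1) / 2 : ℕ) : ℝ)) k /
            (poch (-(r + (2 * (n : ℝ) - 3) * p) / (2 * p)) k * (Nat.factorial k : ℝ))) *
          (-q / p) ^ k * x ^ (n - 2 * k) := by
  intro x
  unfold Sbar S
  rw [Finset.mul_sum]
  refine Finset.sum_congr rfl ?_
  intro k hk
  rw [Finset.mem_range, Nat.lt_succ_iff] at hk
  set m := n / 2 with hm
  set b : ℝ := (q - s) / (2 * q) - (((n + 1) / 2 : ℕ) : ℝ) with hb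
  set c : ℝ := -(r + (2 * (n : ℝ) - 3) * p) / (2 * p) with hc
  set B : ℕ → ℝ := fun i => (2 * (i : ℝ) + (-1 : ℝ) ^ (n + 1) + 2) * q + s with hB
  set A : ℕ → ℝ := fun i => (2 * (i : ℝ) + (-1 : ℝ) ^ (n + 1) + 2 * ((m : ℕ) : ℝ)) * p + r
    with hA
  -- parity facts
  have hε1 : 2 * ((m : ℕ) : ℝ) + (-1 : ℝ) ^ (n + 1) + 2 = 2 * (((n + 1) / 2 : ℕ) : ℝ) + 1 := by
    rcases Nat.even_or_odd n with ⟨t, ht⟩ | ⟨t, ht⟩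
    · subst ht
      have h1 : (t + t) / 2 = t := by omega
      have h2 : (t + t + 1) / 2 = t := by omega
      have hpow : (-1 : ℝ) ^ (t + t + 1) = -1 := by
        rw [show t + t + 1 = 2 * t + 1 by ring, pow_succ, pow_mul]
        norm_num
      simp only [hm, h1, h2, hpow]
      ring
    · subst ht
      have h1 : (2 * t + 1) / 2 = t := by omega
      have h2 : (2 * t + 1 + 1) / 2 = t + 1 := by omega
      simp only [hm, h1, h2]
      rw [show 2 * t + 1 + 1 = 2 * (t + 1) by ring, pow_mul]
      push_cast
      norm_num
      ring
  have hε2 : 4 * ((m : ℕ) : ℝ) + (-1 : ℝ) ^ (n + 1) = 2 * (n : ℝ) - 1 := by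
    rcases Nat.even_or_odd n with ⟨t, ht⟩ | ⟨t, ht⟩
    · subst ht
      have h1 : (t + t) / 2 = t := by omega
      simp only [hm, h1]
      rw [show t + t + 1 = 2 * t + 1 by ring, pow_succ, pow_mul]
      push_cast; norm_num; ring
    · subst ht
      have h1 : (2 * t + 1) / 2 = t := by omega
      simp only [hm, h1]
      rw [show 2 * t + 1 + 1 = 2 * (t + 1) by ring, pow_mul]
      push_cast; norm_num; ring
  -- product over the tail
  have hIcoB : ∏ i ∈ Finset.Ico (m - k) m, B i = (-(2 * q)) ^ k * poch b k := by
    rw [Finset.prod_Ico_eq_prod_range]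
    have hmk : m - (m - k) = k := by omega
    rw [hmk]
    apply prod_reflect_aux
    intro j hj
    have hcast : ((k - 1 - j : ℕ) : ℝ) = (k : ℝ) - 1 - (j : ℝ) := by
      push_cast [Nat.cast_sub (by omega : j ≤ k - 1), Nat.cast_sub (by omega : 1 ≤ k)]
      ring
    have hcast2 : ((m - k + j : ℕ) : ℝ) = ((m : ℕ) : ℝ) - (k : ℝ) + (j : ℝ) := by
      push_cast [Nat.cast_sub hk]
      ring
    simp only [hB, hb, hcast, hcast2]
    have key : (q - s) / (2 * q) * (2 * q) = q - s :=
      div_mul_cancel₀ _ (by simp [hq])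
    linear_combination q * hε1 + key
  have hIcoA : ∏ i ∈ Finset.Ico (m - k) m, A i = (-(2 * p)) ^ k * poch c k := by
    rw [Finset.prod_Ico_eq_prod_range]
    have hmk : m - (m - k) = k := by omega
    rw [hmk]
    apply prod_reflect_aux
    intro j hj
    have hcast : ((k - 1 - j : ℕ) : ℝ) = (k : ℝ) - 1 - (j : ℝ) := by
      push_cast [Nat.cast_sub (by omega : j ≤ k - 1), Nat.cast_sub (by omega : 1 ≤ k)]
      ring
    have hcast2 : ((m - k + j : ℕ) : ℝ) = ((m : ℕ) : ℝ) - (k : ℝ) + (j : ℝ) := by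
      push_cast [Nat.cast_sub hk]
      ring
    simp only [hA, hc, hcast, hcast2]
    have keyA : -(r + (2 * (n : ℝ) - 3) * p) / (2 * p) * (2 * p)
        = -(r + (2 * (n : ℝ) - 3) * p) :=
      div_mul_cancel₀ _ (by simp [hp])
    linear_combination p * hε2 + keyA
  -- split the prefactor product
  have hsplit : (∏ i ∈ Finset.range m, B i / A i)
      = (∏ i ∈ Finset.range (m - k), B i / A i) * ∏ i ∈ Finset.Ico (m - k) m, B i / A i := by
    rw [Finset.prod_range_mul_prod_Ico _ (by omega : m - k ≤ m)]
  have hcancel : (∏ i ∈ Finset.range (m - k), B i / A i) *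
      (∏ i ∈ Finset.range (m - k), A i / B i) = 1 := by
    rw [← Finset.prod_mul_distrib]
    apply Finset.prod_eq_one
    intro i hi
    have hi' : i < m := by
      rw [Finset.mem_range] at hi; omega
    rw [div_mul_div_comm, div_eq_one_iff_eq]
    · ring
    · exact mul_ne_zero (hden2 i hi') (hden1 i hi')
  have hIco : ∏ i ∈ Finset.Ico (m - k) m, B i / A i
      = ((-(2 * q)) ^ k * poch b k) / ((-(2 * p)) ^ k * poch c k) := by
    rw [Finset.prod_div_distrib, hIcoB, hIcoA]
  -- the Pochhammer of the negative integer
  have hpnn : poch (-((m : ℕ) : ℝ)) k = (-1) ^ k * ((m.choose k : ℕ) : ℝ) * (k.factorial : ℝ) := by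
    rw [poch_neg_nat m k hk, Nat.descFactorial_eq_factorial_mul_choose]
    push_cast; ring
  -- finish
  rw [hsplit, hpnn]
  have hpc : poch c k ≠ 0 := hpoch k hk
  have h2p : (-(2 * p)) ^ k ≠ 0 := pow_ne_zero _ (by simp [hp])
  have hfac : (k.factorial : ℝ) ≠ 0 := Nat.cast_ne_zero.mpr k.factorial_ne_zero
  calc (∏ i ∈ Finset.range (m - k), B i / A i) * (∏ i ∈ Finset.Ico (m - k) m, B i / A i) *
        ((m.choose k : ℝ) * (∏ i ∈ Finset.range (m - k), A i / B i) * x ^ (n - 2 * k))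
      = ((∏ i ∈ Finset.range (m - k), B i / A i) * (∏ i ∈ Finset.range (m - k), A i / B i)) *
        ((∏ i ∈ Finset.Ico (m - k) m, B i / A i) * ((m.choose k : ℝ) * x ^ (n - 2 * k))) := by
        ring
    _ = (∏ i ∈ Finset.Ico (m - k) m, B i / A i) * ((m.choose k : ℝ) * x ^ (n - 2 * k)) := by
        rw [hcancel, one_mul]
    _ = (-1) ^ k * ((m.choose k : ℕ) : ℝ) * (k.factorial : ℝ) * poch b k /
          (poch c k * (k.factorial : ℝ)) * (-q / p) ^ k * x ^ (n - 2 * k) := by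
        rw [hIco]
        have hne : ((-1 : ℝ)) ^ k ≠ 0 := pow_ne_zero _ (by norm_num)
        have h2 : ((2 : ℝ)) ^ k ≠ 0 := pow_ne_zero _ (by norm_num)
        have hpk : (p : ℝ) ^ k ≠ 0 := pow_ne_zero _ hp
        have hu : ((-1 : ℝ)) ^ k * (-1) ^ k = 1 := by
          rw [← pow_add]
          exact Even.neg_one_pow ⟨k, rfl⟩
        have hL : (-(2 * q)) ^ k * poch b k / ((-(2 * p)) ^ k * poch c k)
            = q ^ k * poch b k / (p ^ k * poch c k) := by
          rw [show -(2 * q) = (-1) * 2 * q by ring, show -(2 * p) = (-1) * 2 * p by ring]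
          simp only [mul_pow]
          rw [show (-1 : ℝ) ^ k * 2 ^ k * q ^ k * poch b k
              = ((-1) ^ k * 2 ^ k) * (q ^ k * poch b k) by ring,
            show (-1 : ℝ) ^ k * 2 ^ k * p ^ k * poch c k
              = ((-1) ^ k * 2 ^ k) * (p ^ k * poch c k) by ring]
          exact mul_div_mul_left _ _ (mul_ne_zero hne h2)
        rw [hL]
        have hR : (-1 : ℝ) ^ k * ((m.choose k : ℕ) : ℝ) * (k.factorial : ℝ) * poch b k /
              (poch c k * (k.factorial : ℝ)) * (-q / p) ^ k * x ^ (n - 2 * k)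
            = ((m.choose k : ℕ) : ℝ) * (k.factorial : ℝ) * poch b k /
              (poch c k * (k.factorial : ℝ)) * (q ^ k / p ^ k) * x ^ (n - 2 * k) := by
          rw [show -q / p = -(q / p) by ring, neg_pow (q / p), div_pow]
          linear_combination (((m.choose k : ℕ) : ℝ) * (k.factorial : ℝ) * poch b k /
            (poch c k * (k.factorial : ℝ)) * (q ^ k / p ^ k) * x ^ (n - 2 * k)) * hu
        rw [hR]
        field_simp
end

section
/- Fix real parameters p, q, r, s with p ≠ 0, q ≠ 0 and q/p < 0, and a natural number n. Assume the monic-normalization denominators are nonzero, assume (3/2 − r/(2p) − n)_n ≠ 0, and assume none of the four numbers 3/2 − r/(2p), 1 + s/(2q) − r/(2p), 3/2 − r/(2p) + ⌊n/2⌋ − n, 1 + s/(2q) − r/(2p) − ⌊n/2⌋ is a nonpositive integer. Then S̄_n(p, q, r, s; √(−q/p)) = (−q/p)^{n/2} · Γ(3/2 − r/(2p)) · Γ(1 + s/(2q) − r/(2p)) / [ (3/2 − r/(2p) − n)_n · Γ(3/2 − r/(2p) + ⌊n/2⌋ − n) · Γ(1 + s/(2q) − r/(2p) − ⌊n/2⌋)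 ]. -/
open Finset Real MeasureTheory

lemma poch_zero (a : ℝ) : poch a 0 = 1 := by simp [poch]

lemma poch_succ (a : ℝ) (k : ℕ) : poch a (k + 1) = poch a k * (a + k) := by
  simp [poch, Finset.prod_range_succ]

lemma poch_succ' (a : ℝ) (k : ℕ) : poch a (k + 1) = a * poch (a + 1) k := by
  rw [poch, poch, Finset.prod_range_succ']
  simp only [Nat.cast_zero, add_zero]
  rw [mul_comm]
  congr 1
  exact Finset.prod_congr rfl fun i _ => by push_cast; ring

lemma poch_add (a : ℝ) (j l : ℕ) :
    poch a (j + l) = poch a j * ∏ i ∈ Finset.range l, (a + j + i) := by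
  rw [poch, Finset.prod_range_add]
  congr 1
  exact Finset.prod_congr rfl fun i _ => by push_cast; ring

lemma key (A : ℝ) : ∀ (m : ℕ) (B : ℝ),
    ∑ j ∈ Finset.range (m + 1),
      (-1 : ℝ) ^ j * (m.choose j : ℝ) * poch A j * poch (B + j) (m - j)
      = poch (B - A) m := by
  intro m
  induction m with
  | zero => intro B; simp [poch]
  | succ m ih =>
    intro B
    set f : ℕ → ℝ := fun j =>
      (-1 : ℝ) ^ j * ((m+1).choose j : ℝ) * poch A j * poch (B + j) (m + 1 - j) with hf
    set h : ℕ → ℝ := fun j =>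
      (-1 : ℝ) ^ j * (m.choose j : ℝ) * poch A j * poch (B + j) (m + 1 - j) with hh
    set g1 : ℕ → ℝ := fun i =>
      (-1 : ℝ) ^ (i+1) * (m.choose i : ℝ) * poch A (i+1) * poch (B + (i+1 : ℕ)) (m - i) with hg1
    have e1 : ∑ j ∈ range (m + 2), f j = (∑ i ∈ range (m + 1), f (i + 1)) + f 0 :=
      Finset.sum_range_succ' f (m + 1)
    have e2 : ∀ i ∈ range (m + 1), f (i + 1) = g1 i + h (i + 1) := by
      intro i _
      simp only [hf, hg1, hh, Nat.choose_succ_succ, Nat.succ_eq_add_one]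
      push_cast
      ring
    have e3 : ∑ j ∈ range (m + 2), h j = (∑ i ∈ range (m + 1), h (i + 1)) + h 0 :=
      Finset.sum_range_succ' h (m + 1)
    have e4 : ∑ j ∈ range (m + 2), h j = ∑ j ∈ range (m + 1), h j := by
      rw [Finset.sum_range_succ]
      simp [hh, Nat.choose_succ_self]
    have e5 : f 0 = h 0 := by simp [hf, hh]
    have e6 : ∀ j ∈ range (m + 1), g1 j + h j =
        (B - A) * ((-1 : ℝ) ^ j * (m.choose j : ℝ) * poch A j * poch ((B+1) + j) (m - j)) := by
      intro j hj
      simp only [hg1, hh]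
      have h1 : m + 1 - j = (m - j) + 1 := by
        have : j ≤ m := by simpa [Nat.lt_succ_iff] using hj
        omega
      have hA : poch A (j+1) = poch A j * (A + j) := poch_succ A j
      have hB : poch (B + (j:ℝ)) ((m-j)+1) = (B + (j:ℝ)) * poch ((B+1) + (j:ℝ)) (m - j) := by
        rw [poch_succ', show (B + (j:ℝ)) + 1 = (B+1) + j from by ring]
      have hC : ((j:ℝ) + 1) = ((j+1 : ℕ) : ℝ) := by push_cast; ring
      rw [h1, hA, hB, show B + ((j+1 : ℕ) : ℝ) = (B+1) + j from by push_cast; ring]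
      push_cast
      ring
    calc ∑ j ∈ range (m + 2), f j
        = (∑ i ∈ range (m + 1), (g1 i + h (i + 1))) + f 0 := by
          rw [e1]; congr 1; exact Finset.sum_congr rfl e2
      _ = ∑ j ∈ range (m + 1), (g1 j + h j) := by
          rw [Finset.sum_add_distrib, e5, add_assoc, ← e3, e4, ← Finset.sum_add_distrib]
      _ = (B - A) * ∑ j ∈ range (m + 1),
            ((-1 : ℝ) ^ j * (m.choose j : ℝ) * poch A j * poch ((B+1) + j) (m - j)) := by
          rw [Finset.mul_sum]; exact Finset.sum_congr rfl (by intro j hj; rw [e6 j hj])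
      _ = (B - A) * poch ((B + 1) - A) m := by rw [ih]
      _ = poch (B - A) (m + 1) := by
          rw [poch_succ']
          congr 1
          ring
lemma Gamma_poch (a : ℝ) (k : ℕ) (h : ∀ i : ℕ, i < k → a + i ≠ 0) :
    Real.Gamma (a + k) = poch a k * Real.Gamma a := by
  induction k with
  | zero => simp [poch]
  | succ k ih =>
    have hs : (a + ((k+1 : ℕ) : ℝ)) = (a + k) + 1 := by push_cast; ring
    rw [hs, Real.Gamma_add_one (h k (Nat.lt_succ_self k)),
      ih (fun i hi => h i (hi.trans (Nat.lt_succ_self k))), poch_succ]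
    ring

set_option maxHeartbeats 1600000 in
/-- Value of the monic polynomial `S̄_n(p,q,r,s;·)` at the boundary point `x = √(−q/p)`. -/
theorem Sbar_boundary_value (p q r s : ℝ) (hp : p ≠ 0) (hq : q ≠ 0)
    (hqp : q / p < 0) (n : ℕ)
    (hden1 : ∀ i : ℕ, i < n / 2 →
      (2 * (i : ℝ) + (-1 : ℝ) ^ (n + 1) + 2) * q + s ≠ 0)
    (hden2 : ∀ i : ℕ, i < n / 2 →
      (2 * (i : ℝ) + (-1 : ℝ) ^ (n + 1) + 2 * ((n / 2 : ℕ) : ℝ)) * p + r ≠ 0)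
    (hpoch : poch (3 / 2 - r / (2 * p) - n) n ≠ 0)
    (hΓ1 : ∀ k : ℕ, 3 / 2 - r / (2 * p) ≠ -(k : ℝ))
    (hΓ2 : ∀ k : ℕ, 1 + s / (2 * q) - r / (2 * p) ≠ -(k : ℝ))
    (hΓ3 : ∀ k : ℕ, 3 / 2 - r / (2 * p) + ((n / 2 : ℕ) : ℝ) - n ≠ -(k : ℝ))
    (hΓ4 : ∀ k : ℕ, 1 + s / (2 * q) - r / (2 * p) - ((n / 2 : ℕ) : ℝ) ≠ -(k : ℝ)) :
    Sbar p q r s n (Real.sqrt (-q / p)) =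
      (-q / p) ^ ((n : ℝ) / 2) * Real.Gamma (3 / 2 - r / (2 * p))
          * Real.Gamma (1 + s / (2 * q) - r / (2 * p)) /
        (poch (3 / 2 - r / (2 * p) - n) n
          * Real.Gamma (3 / 2 - r / (2 * p) + ((n / 2 : ℕ) : ℝ) - n)
          * Real.Gamma (1 + s / (2 * q) - r / (2 * p) - ((n / 2 : ℕ) : ℝ))) := by
  have ht : (0:ℝ) < -q / p := by
    rw [neg_div]; linarith
  set m : ℕ := n / 2 with hm
  set e : ℝ := (-1 : ℝ) ^ (n + 1) with he
  set t : ℝ := -q / p with hts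
  set x : ℝ := Real.sqrt t with hxs
  set A : ℝ := (m : ℝ) + e / 2 + r / (2 * p) with hA
  set B : ℝ := 1 + e / 2 + s / (2 * q) with hB
  set c : ℝ := 3 / 2 - r / (2 * p) with hc
  set d : ℝ := 1 + s / (2 * q) - r / (2 * p) with hd
  have hx : 0 < x := Real.sqrt_pos.mpr ht
  have hx2 : x ^ 2 = t := Real.sq_sqrt ht.le
  have h2m : 2 * m ≤ n := by omega
  have hqpt : q / p = -t := by rw [hts]; ring
  have hne : (n : ℝ) = 2 * m + (e + 1) / 2 := by
    rcases Nat.even_or_odd n with hpar | hpar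
    · obtain ⟨l, hl⟩ := hpar
      have hml : m = l := by omega
      have hee : e = -1 := by
        rw [he]; exact Odd.neg_one_pow ⟨l, by omega⟩
      rw [hml, hee, hl]; push_cast; ring
    · obtain ⟨l, hl⟩ := hpar
      have hml : m = l := by omega
      have hee : e = 1 := by
        rw [he]; exact Even.neg_one_pow ⟨l + 1, by omega⟩
      rw [hml, hee, hl]; push_cast; ring
  have haa : ∀ i : ℕ, i < m → A + i ≠ 0 := by
    intro i hi h0
    apply hden2 i hi
    have h1 : (2 * (i : ℝ) + e + 2 * (m : ℝ)) * p + r = 2 * p * (A + i) := by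
      rw [hA]; field_simp; ring
    rw [h1, h0, mul_zero]
  have hbb : ∀ i : ℕ, i < m → B + i ≠ 0 := by
    intro i hi h0
    apply hden1 i hi
    have h1 : (2 * (i : ℝ) + e + 2) * q + s = 2 * q * (B + i) := by
      rw [hB]; field_simp; ring
    rw [h1, h0, mul_zero]
  have haq : ∀ j : ℕ, (2 * (j : ℝ) + e + 2 * (m : ℝ)) * p + r = 2 * p * (A + j) := by
    intro j; rw [hA]; field_simp; ring
  have hbq : ∀ j : ℕ, (2 * (j : ℝ) + e + 2) * q + s = 2 * q * (B + j) := by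
    intro j; rw [hB]; field_simp; ring
  have hpochA : poch A m ≠ 0 := by
    rw [poch, Finset.prod_ne_zero_iff]
    intro i hi
    exact haa i (Finset.mem_range.mp hi)
  -- Step 1 : evaluate Sbar at x as a single sum
  have hSbar : Sbar p q r s n x =
      x ^ n * ∑ j ∈ Finset.range (m + 1), (-1 : ℝ) ^ (m - j) * (m.choose j : ℝ) *
        ∏ i ∈ Finset.range (m - j), ((B + j + i) / (A + j + i)) := by
    rw [Sbar, S, ← hm, ← he, Finset.mul_sum, Finset.mul_sum,
      ← Finset.sum_range_reflect (fun j => x ^ n * ((-1 : ℝ) ^ (m - j) * (m.choose j : ℝ) *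
        ∏ i ∈ Finset.range (m - j), ((B + j + i) / (A + j + i)))) (m + 1)]
    refine Finset.sum_congr rfl ?_
    intro k hk
    have hkm : k ≤ m := Nat.lt_succ_iff.mp (Finset.mem_range.mp hk)
    have h1 : m + 1 - 1 - k = m - k := by omega
    rw [h1]
    have h2 : m - (m - k) = k := by omega
    rw [h2, Nat.choose_symm hkm]
    have hsplit : (∏ i ∈ Finset.range m,
          ((2 * (i : ℝ) + e + 2) * q + s) / ((2 * (i : ℝ) + e + 2 * (m : ℝ)) * p + r))
        = (∏ i ∈ Finset.range (m - k),
          ((2 * (i : ℝ) + e + 2) * q + s) / ((2 * (i : ℝ) + e + 2 * (m : ℝ)) * p + r)) *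
          ∏ i ∈ Finset.range k,
          ((2 * ((m - k + i : ℕ) : ℝ) + e + 2) * q + s) /
            ((2 * ((m - k + i : ℕ) : ℝ) + e + 2 * (m : ℝ)) * p + r) := by
      have h3 := Finset.prod_range_add (fun i : ℕ =>
        ((2 * (i : ℝ) + e + 2) * q + s) / ((2 * (i : ℝ) + e + 2 * (m : ℝ)) * p + r)) (m - k) k
      rwa [Nat.sub_add_cancel hkm] at h3
    have hone : (∏ i ∈ Finset.range (m - k),
          ((2 * (i : ℝ) + e + 2) * q + s) / ((2 * (i : ℝ) + e + 2 * (m : ℝ)) * p + r)) *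
        (∏ i ∈ Finset.range (m - k),
          ((2 * (i : ℝ) + e + 2 * (m : ℝ)) * p + r) / ((2 * (i : ℝ) + e + 2) * q + s)) = 1 := by
      rw [← Finset.prod_mul_distrib]
      apply Finset.prod_eq_one
      intro i hi
      have him : i < m := lt_of_lt_of_le (Finset.mem_range.mp hi) (Nat.sub_le m k)
      rw [div_mul_div_comm, mul_comm]
      exact div_self (mul_ne_zero (hden2 i him) (hden1 i him))
    have hfac : ∀ i ∈ Finset.range k,
        ((2 * ((m - k + i : ℕ) : ℝ) + e + 2) * q + s) /
          ((2 * ((m - k + i : ℕ) : ℝ) + e + 2 * (m : ℝ)) * p + r)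
        = (q / p) * ((B + ((m - k : ℕ) : ℝ) + i) / (A + ((m - k : ℕ) : ℝ) + i)) := by
      intro i hi
      rw [hbq (m - k + i), haq (m - k + i),
        show ((m - k + i : ℕ) : ℝ) = ((m - k : ℕ) : ℝ) + i from by push_cast; ring,
        div_mul_div_comm, mul_assoc 2 q _, mul_assoc 2 p _,
        mul_div_mul_left _ _ (by norm_num : (2:ℝ) ≠ 0)]
      ring_nf
    have hxk : x ^ (n - 2 * k) = x ^ n * ((t ^ k)⁻¹) := by
      rw [pow_sub₀ x hx.ne' (by omega : 2 * k ≤ n), pow_mul, hx2]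
    have htk : t ^ k ≠ 0 := pow_ne_zero k ht.ne'
    calc (∏ i ∈ Finset.range m,
            ((2 * (i : ℝ) + e + 2) * q + s) / ((2 * (i : ℝ) + e + 2 * (m : ℝ)) * p + r)) *
          ((m.choose k : ℝ) *
            (∏ i ∈ Finset.range (m - k),
              ((2 * (i : ℝ) + e + 2 * (m : ℝ)) * p + r) / ((2 * (i : ℝ) + e + 2) * q + s)) *
            x ^ (n - 2 * k))
        = ((∏ i ∈ Finset.range (m - k),
            ((2 * (i : ℝ) + e + 2) * q + s) / ((2 * (i : ℝ) + e + 2 * (m : ℝ)) * p + r)) *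
          (∏ i ∈ Finset.range (m - k),
            ((2 * (i : ℝ) + e + 2 * (m : ℝ)) * p + r) / ((2 * (i : ℝ) + e + 2) * q + s))) *
          ((∏ i ∈ Finset.range k,
            ((2 * ((m - k + i : ℕ) : ℝ) + e + 2) * q + s) /
              ((2 * ((m - k + i : ℕ) : ℝ) + e + 2 * (m : ℝ)) * p + r)) *
          ((m.choose k : ℝ) * x ^ (n - 2 * k))) := by
          rw [hsplit]; ring
      _ = (∏ i ∈ Finset.range k,
            ((q / p) * ((B + ((m - k : ℕ) : ℝ) + i) / (A + ((m - k : ℕ) : ℝ) + i)))) *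
          ((m.choose k : ℝ) * x ^ (n - 2 * k)) := by
          rw [hone, Finset.prod_congr rfl hfac, one_mul]
      _ = (q / p) ^ k * (∏ i ∈ Finset.range k,
            ((B + ((m - k : ℕ) : ℝ) + i) / (A + ((m - k : ℕ) : ℝ) + i))) *
          ((m.choose k : ℝ) * x ^ (n - 2 * k)) := by
          rw [Finset.prod_mul_distrib, Finset.prod_const, Finset.card_range]
      _ = x ^ n * ((-1 : ℝ) ^ k * (m.choose k : ℝ) *
            ∏ i ∈ Finset.range k,
              ((B + ((m - k : ℕ) : ℝ) + i) / (A + ((m - k : ℕ) : ℝ) + i))) := by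
          rw [hxk, hqpt, neg_pow]
          have hcan : t ^ k * (t ^ k)⁻¹ = 1 := mul_inv_cancel₀ htk
          linear_combination ((-1 : ℝ) ^ k * (m.choose k : ℝ) *
            (∏ i ∈ Finset.range k,
              ((B + ((m - k : ℕ) : ℝ) + i) / (A + ((m - k : ℕ) : ℝ) + i))) * x ^ n) * hcan
  -- Step 2 : sum evaluation
  have hsq : (-1 : ℝ) ^ m * (-1 : ℝ) ^ m = 1 := by
    rw [← pow_add, ← two_mul, pow_mul]; norm_num
  have hmul : (∑ j ∈ Finset.range (m + 1), (-1 : ℝ) ^ (m - j) * (m.choose j : ℝ) *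
        ∏ i ∈ Finset.range (m - j), ((B + j + i) / (A + j + i))) * poch A m
      = (-1 : ℝ) ^ m * poch (B - A) m := by
    rw [Finset.sum_mul]
    have hterm : ∀ j ∈ Finset.range (m + 1),
        ((-1 : ℝ) ^ (m - j) * (m.choose j : ℝ) *
          ∏ i ∈ Finset.range (m - j), ((B + j + i) / (A + j + i))) * poch A m
        = (-1 : ℝ) ^ m * ((-1 : ℝ) ^ j * (m.choose j : ℝ) * poch A j *
            poch (B + j) (m - j)) := by
      intro j hj
      have hjm : j ≤ m := Nat.lt_succ_iff.mp (Finset.mem_range.mp hj)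
      have hPA : poch A m = poch A j * ∏ i ∈ Finset.range (m - j), (A + j + i) := by
        have h3 := poch_add A j (m - j)
        rwa [Nat.add_sub_cancel' hjm] at h3
      have hplug : (∏ i ∈ Finset.range (m - j), ((B + j + i) / (A + j + i))) *
          (∏ i ∈ Finset.range (m - j), (A + j + i)) = poch (B + j) (m - j) := by
        rw [← Finset.prod_mul_distrib, poch]
        refine Finset.prod_congr rfl ?_
        intro i hi
        have hlt : j + i < m := by
          have := Finset.mem_range.mp hi; omega
        have hne0 : A + (j : ℝ) + i ≠ 0 := by
          have h6 := haa (j + i) hlt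
          rwa [Nat.cast_add, ← add_assoc] at h6
        rw [div_mul_cancel₀ _ hne0]
      have hsign : (-1 : ℝ) ^ (m - j) = (-1 : ℝ) ^ m * (-1 : ℝ) ^ j := by
        have h4 : (-1 : ℝ) ^ (m - j) * (-1 : ℝ) ^ j = (-1 : ℝ) ^ m := by
          rw [← pow_add, Nat.sub_add_cancel hjm]
        have h5 : (-1 : ℝ) ^ j * (-1 : ℝ) ^ j = 1 := by
          rw [← pow_add, ← two_mul, pow_mul]; norm_num
        calc (-1 : ℝ) ^ (m - j) = (-1 : ℝ) ^ (m - j) * ((-1 : ℝ) ^ j * (-1 : ℝ) ^ j) := by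
              rw [h5, mul_one]
          _ = (-1 : ℝ) ^ m * (-1 : ℝ) ^ j := by rw [← mul_assoc, h4]
      rw [hPA, hsign, ← hplug]
      ring
    rw [Finset.sum_congr rfl hterm, ← Finset.mul_sum, key A m B]
  -- Step 3 : Gamma manipulations
  have hpoch' : ∀ i : ℕ, i < n → (c - n) + i ≠ 0 := by
    intro i hi
    have h3 := hpoch
    rw [poch, Finset.prod_ne_zero_iff] at h3
    exact h3 i (Finset.mem_range.mpr hi)
  have hΓcn : Real.Gamma (c - n) ≠ 0 := by
    apply Real.Gamma_ne_zero
    intro k heq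
    by_cases hkn : k < n
    · exact hpoch' k hkn (by rw [heq]; ring)
    · have hkm : m ≤ k := by omega
      apply hΓ3 (k - m)
      have hcast : ((k - m : ℕ) : ℝ) = (k : ℝ) - m := by
        push_cast [Nat.cast_sub hkm]; ring
      rw [hcast]
      rw [sub_eq_iff_eq_add] at heq  -- maybe unnecessary
      linarith [heq]
  have hΓdm : Real.Gamma (d - m) ≠ 0 := Real.Gamma_ne_zero hΓ4
  have hg1 : Real.Gamma c = poch (c - n) n * Real.Gamma (c - n) := by
    have h3 := Gamma_poch (c - n) n hpoch'
    rwa [show (c - (n:ℝ)) + (n : ℝ) = c from by ring] at h3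
  have hg2 : Real.Gamma (c + m - n) = poch (c - n) m * Real.Gamma (c - n) := by
    have h3 := Gamma_poch (c - n) m (fun i hi => hpoch' i (by omega))
    rwa [show (c - (n:ℝ)) + (m : ℝ) = c + m - n from by ring] at h3
  have hg3 : Real.Gamma d = poch (d - m) m * Real.Gamma (d - m) := by
    have h3 := Gamma_poch (d - m) m (fun i hi h0 => hΓ4 i (by linarith))
    rwa [show (d - (m:ℝ)) + (m : ℝ) = d from by ring] at h3
  have h4 : poch (c - n) m = (-1 : ℝ) ^ m * poch A m := by
    rw [poch, poch]
    have hterm : ∀ i ∈ Finset.range m, (c - (n:ℝ) + i) = (-1) * (A + ((m - 1 - i : ℕ) : ℝ)) := by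
      intro i hi
      have him : i < m := Finset.mem_range.mp hi
      have h5 : (m - 1 - i : ℕ) + (i + 1) = m := by omega
      have hcast : ((m - 1 - i : ℕ) : ℝ) = (m : ℝ) - i - 1 := by
        have h6 := congrArg (Nat.cast : ℕ → ℝ) h5
        push_cast at h6
        linarith
      rw [hcast, hc, hA, hne]; ring
    calc ∏ i ∈ Finset.range m, (c - (n:ℝ) + i)
        = ∏ i ∈ Finset.range m, ((-1) * (A + ((m - 1 - i : ℕ) : ℝ))) :=
          Finset.prod_congr rfl hterm
      _ = (∏ _i ∈ Finset.range m, (-1 : ℝ)) *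
          ∏ i ∈ Finset.range m, (A + ((m - 1 - i : ℕ) : ℝ)) := Finset.prod_mul_distrib
      _ = (-1 : ℝ) ^ m * ∏ i ∈ Finset.range m, (A + (i : ℝ)) := by
          rw [Finset.prod_const, Finset.card_range,
            Finset.prod_range_reflect (fun i => A + (i : ℝ)) m]
  have h5 : B - A = d - m := by rw [hB, hA, hd]; ring
  have hPcm : poch (c - n) m ≠ 0 := by
    rw [h4]
    exact mul_ne_zero (pow_ne_zero m (by norm_num)) hpochA
  have hsum2 : (∑ j ∈ Finset.range (m + 1), (-1 : ℝ) ^ (m - j) * (m.choose j : ℝ) *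
        ∏ i ∈ Finset.range (m - j), ((B + j + i) / (A + j + i)))
      = poch (d - m) m / poch (c - n) m := by
    rw [eq_div_iff hPcm, h4]
    calc (∑ j ∈ Finset.range (m + 1), (-1 : ℝ) ^ (m - j) * (m.choose j : ℝ) *
          ∏ i ∈ Finset.range (m - j), ((B + j + i) / (A + j + i))) *
            ((-1 : ℝ) ^ m * poch A m)
        = (-1 : ℝ) ^ m * ((∑ j ∈ Finset.range (m + 1), (-1 : ℝ) ^ (m - j) * (m.choose j : ℝ) *
            ∏ i ∈ Finset.range (m - j), ((B + j + i) / (A + j + i))) * poch A m) := by ring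
      _ = (-1 : ℝ) ^ m * ((-1 : ℝ) ^ m * poch (B - A) m) := by rw [hmul]
      _ = poch (d - m) m := by rw [← h5, ← mul_assoc, hsq, one_mul]
  have hrpow : t ^ ((n : ℝ) / 2) = x ^ n := by
    rw [show ((n : ℝ) / 2) = (1 / 2) * (n : ℝ) from by ring, Real.rpow_mul ht.le,
      Real.rpow_natCast, ← Real.sqrt_eq_rpow]
  -- final assembly
  rw [hSbar, hsum2, hrpow, hg1, hg2, hg3]
  field_simp
end

section
/- Let a be a real number with a > −1/2, and let n, m be natural numbers. Then, with the generalized Hermite initial vector (p,q,r,s) = (0, 1, −2, 2a), ∫_{−∞}^{∞} |x|^{2a} e^{−x²} · S̄_n(0,1,−2,2a;x) · S̄_m(0,1,−2,2a;x) dx = δ_{n,m} · 2^{−n} · (∏_{i=1}^{n} ((1 − (−1)^i)a + i)) · Γ(a + 1/2), where δ_{n,m} is 1 if n = m and 0 otherwise. -/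
open Finset Real MeasureTheory

section helpers
open Set

open Finset

lemma altsum_succ (M : ℕ) (f : ℕ → ℝ) :
    ∑ k ∈ range (M+2), (-1:ℝ)^k * ((M+1).choose k) * f k
      = ∑ k ∈ range (M+1), (-1:ℝ)^k * (M.choose k) * (f k - f (k+1)) := by
  have hC : ∑ k ∈ range (M+1), (-1:ℝ)^k * (M.choose (k+1)) * f (k+1)
      = ∑ k ∈ range M, (-1:ℝ)^k * (M.choose (k+1)) * f (k+1) := by
    rw [Finset.sum_range_succ, Nat.choose_succ_self]; norm_num
  have hA : ∑ k ∈ range (M+1), (-1:ℝ)^k * (M.choose k) * f k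
      = f 0 - ∑ k ∈ range M, (-1:ℝ)^k * (M.choose (k+1)) * f (k+1) := by
    rw [Finset.sum_range_succ' (fun k => (-1:ℝ)^k * (M.choose k) * f k) M]
    have hneg : ∑ k ∈ range M, (-1:ℝ)^(k+1) * (M.choose (k+1)) * f (k+1)
        = -∑ k ∈ range M, (-1:ℝ)^k * (M.choose (k+1)) * f (k+1) := by
      rw [← Finset.sum_neg_distrib]
      exact Finset.sum_congr rfl fun k _ => by ring
    rw [hneg]; simp; ring
  have hsplit : ∑ k ∈ range (M+1), (-1:ℝ)^(k+1) * (((M+1).choose (k+1) : ℕ) : ℝ) * f (k+1)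
      = (∑ k ∈ range (M+1), -((-1:ℝ)^k * (M.choose k) * f (k+1)))
        + ∑ k ∈ range (M+1), -((-1:ℝ)^k * (M.choose (k+1)) * f (k+1)) := by
    rw [← Finset.sum_add_distrib]
    refine Finset.sum_congr rfl fun k _ => ?_
    have h2 : (((M+1).choose (k+1) : ℕ) : ℝ) = (M.choose k : ℝ) + (M.choose (k+1) : ℝ) := by
      rw [Nat.choose_succ_succ]; push_cast; ring
    rw [h2]; ring
  have hL : ∑ k ∈ range (M+2), (-1:ℝ)^k * ((M+1).choose k) * f k
      = f 0 - (∑ k ∈ range (M+1), (-1:ℝ)^k * (M.choose k) * f (k+1))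
          - ∑ k ∈ range (M+1), (-1:ℝ)^k * (M.choose (k+1)) * f (k+1) := by
    rw [Finset.sum_range_succ' (fun k => (-1:ℝ)^k * ((M+1).choose k) * f k) (M+1), hsplit,
      Finset.sum_neg_distrib, Finset.sum_neg_distrib]
    simp; ring
  have hRHS : ∑ k ∈ range (M+1), (-1:ℝ)^k * (M.choose k) * (f k - f (k+1))
      = (∑ k ∈ range (M+1), (-1:ℝ)^k * (M.choose k) * f k)
        - ∑ k ∈ range (M+1), (-1:ℝ)^k * (M.choose k) * f (k+1) := by
    rw [← Finset.sum_sub_distrib]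
    exact Finset.sum_congr rfl fun k _ => by ring
  rw [hL, hC, hRHS, hA]; ring

lemma altsum (M : ℕ) : ∀ (J : ℕ) (c : ℝ), J ≤ M →
    ∑ k ∈ range (M+1), (-1:ℝ)^k * (M.choose k) * ∏ i ∈ range J, (c - k + i)
      = if J = M then (M.factorial : ℝ) else 0 := by
  induction M with
  | zero =>
    intro J c hJ
    interval_cases J
    simp
  | succ M ih =>
    intro J c hJ
    match J with
    | 0 =>
      simp only [Finset.range_zero, Finset.prod_empty, mul_one]
      have h0 := Int.alternating_sum_range_choose (n := M+1)
      rw [if_neg (Nat.succ_ne_zero M)] at h0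
      rw [if_neg (by omega)]
      exact_mod_cast h0
    | (J+1) =>
      have key : ∀ k : ℕ, (∏ i ∈ range (J+1), (c - (k:ℝ) + i))
            - (∏ i ∈ range (J+1), (c - ((k+1 : ℕ):ℝ) + i))
          = ((J:ℝ)+1) * ∏ i ∈ range J, (c - (k:ℝ) + i) := by
        intro k
        have e1 : ∏ i ∈ range (J+1), (c - (k:ℝ) + i)
            = (∏ i ∈ range J, (c - (k:ℝ) + i)) * (c - (k:ℝ) + J) := Finset.prod_range_succ _ _
        have e2 : ∏ i ∈ range (J+1), (c - ((k+1 : ℕ):ℝ) + i)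
            = (∏ i ∈ range J, (c - ((k+1:ℕ):ℝ) + ((i+1:ℕ):ℝ))) * (c - ((k+1:ℕ):ℝ) + (0:ℕ)) :=
          Finset.prod_range_succ' (fun i => (c - ((k+1:ℕ):ℝ) + i)) J
        have e3 : ∏ i ∈ range J, (c - ((k+1:ℕ):ℝ) + ((i+1:ℕ):ℝ)) = ∏ i ∈ range J, (c - (k:ℝ) + i) := by
          apply Finset.prod_congr rfl; intro i _; push_cast; ring
        rw [e1, e2, e3]; push_cast; ring
      rw [show M + 1 + 1 = M + 2 from rfl,
        altsum_succ M (fun k => ∏ i ∈ range (J+1), (c - (k:ℝ) + i))]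
      have hb : ∑ k ∈ range (M+1), (-1:ℝ)^k * (M.choose k) *
            ((fun k : ℕ => ∏ i ∈ range (J+1), (c - (k:ℝ) + i)) k
              - (fun k : ℕ => ∏ i ∈ range (J+1), (c - (k:ℝ) + i)) (k+1))
          = ((J:ℝ)+1) * ∑ k ∈ range (M+1), (-1:ℝ)^k * (M.choose k) * ∏ i ∈ range J, (c - (k:ℝ) + i) := by
        rw [Finset.mul_sum]
        refine Finset.sum_congr rfl fun k _ => ?_
        simp only []
        rw [key k]; ring
      rw [hb, ih J c (by omega)]
      by_cases h : J = M
      · subst h; rw [if_pos rfl, if_pos rfl, Nat.factorial_succ]; push_cast; ring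
      · rw [if_neg h, if_neg (by omega), mul_zero]
open Finset Real MeasureTheory Set

lemma integrable_comp_abs {g : ℝ → ℝ} (hg : IntegrableOn g (Ioi 0)) :
    Integrable (fun x : ℝ => g |x|) := by
  have hIoi : IntegrableOn (fun x : ℝ => g |x|) (Ioi 0) := by
    apply hg.congr_fun _ measurableSet_Ioi
    intro x hx; show g x = g |x|; rw [abs_of_pos hx]
  have hIic : IntegrableOn (fun x : ℝ => g |x|) (Iic 0) := by
    rw [← Measure.map_neg_eq_self (volume : Measure ℝ)]
    have m : MeasurableEmbedding fun x : ℝ => -x := (Homeomorph.neg ℝ).measurableEmbedding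
    rw [m.integrableOn_map_iff]
    simp only [Function.comp_def, abs_neg, neg_preimage, neg_Iic, neg_zero]
    exact Iff.mpr integrableOn_Ici_iff_integrableOn_Ioi hIoi
  rw [← integrableOn_univ, ← Iic_union_Ioi (a := (0:ℝ)), integrableOn_union]
  exact ⟨hIic, hIoi⟩

lemma Gamma_add_nat {c : ℝ} (hc : 0 < c) (t : ℕ) :
    Real.Gamma (c + t) = (∏ i ∈ range t, (c + i)) * Real.Gamma c := by
  induction t with
  | zero => simp
  | succ t ih =>
    have h1 : c + ((t : ℝ) + 1) = (c + t) + 1 := by ring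
    have h2 : (0:ℝ) < c + t := by positivity
    rw [Nat.cast_add, Nat.cast_one, h1, Real.Gamma_add_one h2.ne', ih,
      Finset.prod_range_succ]
    ring

lemma integrable_moment {a : ℝ} (ha : -(1/2 : ℝ) < a) (j : ℕ) :
    Integrable (fun x : ℝ => |x| ^ (2*a) * Real.exp (-x^2) * x^j) := by
  have hj : (0:ℝ) ≤ j := Nat.cast_nonneg j
  have key : Integrable (fun x : ℝ => |x| ^ (2*a + j) * Real.exp (-x^2)) := by
    have h0 := integrableOn_rpow_mul_exp_neg_mul_sq (b := 1) (s := 2*a + j) (by norm_num)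
      (by linarith)
    have h1 : IntegrableOn (fun t : ℝ => t ^ (2*a + j) * Real.exp (-t^2)) (Ioi 0) :=
      h0.congr_fun (fun x hx => by norm_num) measurableSet_Ioi
    have h2 := integrable_comp_abs h1
    exact h2.congr (Filter.Eventually.of_forall fun x => by simp [sq_abs])
  apply key.mono'
  · apply Measurable.aestronglyMeasurable
    exact ((measurable_id.abs.pow_const _).mul
      ((measurable_id.pow_const 2).neg.exp)).mul (measurable_id.pow_const j)
  · filter_upwards with x
    rw [norm_mul, norm_mul, Real.norm_eq_abs, Real.norm_eq_abs, Real.norm_eq_abs,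
      abs_of_nonneg (Real.rpow_nonneg (abs_nonneg x) _),
      abs_of_nonneg (Real.exp_pos _).le]
    rcases eq_or_ne x 0 with rfl | hx
    · rcases Nat.eq_zero_or_pos j with rfl | hjj
      · simp [Real.rpow_natCast]
      · rw [abs_zero, zero_pow hjj.ne', abs_zero, mul_zero]
        positivity
    · have habs : (0:ℝ) < |x| := abs_pos.mpr hx
      rw [abs_pow, ← Real.rpow_natCast |x| j, Real.rpow_add habs]
      exact le_of_eq (by ring)
open Finset Real MeasureTheory Set

lemma moment_eq {a : ℝ} (ha : -(1/2 : ℝ) < a) (j : ℕ) :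
    (∫ x : ℝ, |x| ^ (2*a) * Real.exp (-x^2) * x^j)
      = if j % 2 = 0 then Real.Gamma (a + 1/2 + (j/2 : ℕ)) else 0 := by
  rcases Nat.even_or_odd j with he | ho
  · obtain ⟨s, hs⟩ := he
    rw [if_pos (by omega)]
    have h1 : (fun x : ℝ => |x| ^ (2*a) * Real.exp (-x^2) * x^j)
        = fun x : ℝ => (fun t : ℝ => t ^ (2*a) * Real.exp (-t^2) * t^j) |x| := by
      funext x
      simp only []
      rw [sq_abs, (Even.pow_abs ⟨s, hs⟩ x)]
    rw [h1, integral_comp_abs (f := fun t : ℝ => t ^ (2*a) * Real.exp (-t^2) * t^j)]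
    have h2 : ∫ x in Ioi (0:ℝ), x ^ (2*a) * Real.exp (-x^2) * x^j
        = ∫ x in Ioi (0:ℝ), x ^ (2*a + j) * Real.exp (-x ^ (2:ℝ)) := by
      refine setIntegral_congr_fun measurableSet_Ioi (fun x hx => ?_)
      have hx0 : (0:ℝ) < x := hx
      rw [Real.rpow_add hx0, Real.rpow_natCast,
        show x ^ (2:ℝ) = x ^ (2:ℕ) from Real.rpow_natCast x 2]
      ring
    rw [h2, integral_rpow_mul_exp_neg_rpow (by norm_num)
      (by have : (0:ℝ) ≤ j := Nat.cast_nonneg j; linarith)]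
    have hj2 : ((j / 2 : ℕ) : ℝ) = (s : ℝ) := by norm_cast; omega
    have harg : (2*a + (j:ℝ) + 1)/2 = a + 1/2 + ((j/2 : ℕ) : ℝ) := by
      rw [hj2]; push_cast [hs]; ring
    rw [harg]; ring
  · rw [if_neg (by simp [Nat.odd_iff.mp ho])]
    set f : ℝ → ℝ := fun x => |x| ^ (2*a) * Real.exp (-x^2) * x^j with hf
    have hodd : ∀ x, f (-x) = - f x := by
      intro x
      simp only [hf, abs_neg, neg_sq, Odd.neg_pow ho]
      ring
    have h1 : ∫ x, f x = ∫ x, f (-x) := (integral_neg_eq_self f volume).symm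
    have h2 : ∫ x, f (-x) = - ∫ x, f x := by
      simp_rw [hodd]; exact integral_neg f
    have := h1.trans h2
    linarith
open Finset Real MeasureTheory

noncomputable def cc (a : ℝ) (n : ℕ) : ℝ := a + 1 + (-1:ℝ)^(n+1)/2

lemma cc_pos {a : ℝ} (ha : -(1/2 : ℝ) < a) (n : ℕ) : 0 < cc a n := by
  unfold cc
  rcases Nat.even_or_odd (n+1) with he | hodd
  · rw [he.neg_one_pow]; linarith
  · rw [hodd.neg_one_pow]; linarith

lemma Sbar_eq {a : ℝ} (ha : -(1/2 : ℝ) < a) (n : ℕ) (x : ℝ) :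
    Sbar 0 1 (-2) (2*a) n x
      = ∑ k ∈ Finset.range (n/2 + 1),
          ((n/2).choose k : ℝ) *
            ((-1:ℝ)^k * ∏ i ∈ Finset.Ico (n/2 - k) (n/2), ((i:ℝ) + cc a n)) *
            x ^ (n - 2*k) := by
  have hpos : ∀ i : ℕ, (0:ℝ) < (i:ℝ) + cc a n := by
    intro i
    have h1 := cc_pos ha n
    have h2 : (0:ℝ) ≤ (i:ℝ) := Nat.cast_nonneg i
    linarith
  have hden : ∀ i : ℕ, (2 * (i : ℝ) + (-1 : ℝ) ^ (n + 1) + 2) * 1 + 2*a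
      = 2 * ((i:ℝ) + cc a n) := by
    intro i; unfold cc; ring
  have hnum : ∀ i : ℕ, (2 * (i : ℝ) + (-1 : ℝ) ^ (n + 1) + 2 * ((n / 2 : ℕ) : ℝ)) * 0 + (-2)
      = (-2 : ℝ) := by intro i; ring
  unfold Sbar S
  rw [Finset.mul_sum]
  apply Finset.sum_congr rfl
  intro k hk
  have hk' : k ≤ n/2 := by
    have := Finset.mem_range.mp hk; omega
  simp only [hden, hnum]
  have e1 : ∏ i ∈ Finset.range (n/2), (2 * ((i:ℝ) + cc a n)) / (-2)
      = ∏ i ∈ Finset.range (n/2), (-((i:ℝ) + cc a n)) := by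
    apply Finset.prod_congr rfl; intro i _; ring
  have e2 : ∏ i ∈ Finset.range (n/2 - k), (-2 : ℝ) / (2 * ((i:ℝ) + cc a n))
      = (∏ i ∈ Finset.range (n/2 - k), (-((i:ℝ) + cc a n)))⁻¹ := by
    rw [← Finset.prod_inv_distrib]
    apply Finset.prod_congr rfl; intro i _
    have h1 : (2 : ℝ) * ((i:ℝ) + cc a n) ≠ 0 := by
      have := hpos i; positivity
    have h2 : (-((i:ℝ) + cc a n)) ≠ 0 := neg_ne_zero.mpr (hpos i).ne'
    rw [inv_eq_one_div, div_eq_div_iff h1 h2]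
    ring
  rw [e1, e2]
  have hsplit : ∏ i ∈ Finset.range (n/2), (-((i:ℝ) + cc a n))
      = (∏ i ∈ Finset.range (n/2 - k), (-((i:ℝ) + cc a n)))
          * ∏ i ∈ Finset.Ico (n/2 - k) (n/2), (-((i:ℝ) + cc a n)) :=
    (Finset.prod_range_mul_prod_Ico _ (by omega)).symm
  have hne : (∏ i ∈ Finset.range (n/2 - k), (-((i:ℝ) + cc a n))) ≠ 0 := by
    apply Finset.prod_ne_zero_iff.mpr
    intro i _
    have := (hpos i).ne'
    simp only [neg_ne_zero]; exact this
  have hIco : ∏ i ∈ Finset.Ico (n/2 - k) (n/2), (-((i:ℝ) + cc a n))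
      = (-1:ℝ)^k * ∏ i ∈ Finset.Ico (n/2 - k) (n/2), ((i:ℝ) + cc a n) := by
    have : ∀ i ∈ Finset.Ico (n/2 - k) (n/2), (-((i:ℝ) + cc a n))
        = (-1:ℝ) * ((i:ℝ) + cc a n) := by intro i _; ring
    rw [Finset.prod_congr rfl this, Finset.prod_mul_distrib, Finset.prod_const,
      Nat.card_Ico]
    congr 2
    omega
  rw [hsplit, hIco]
  set P := ∏ i ∈ Finset.range (n/2 - k), (-((i:ℝ) + cc a n)) with hP
  set Q := ∏ i ∈ Finset.Ico (n/2 - k) (n/2), ((i:ℝ) + cc a n) with hQ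
  field_simp

lemma cc_eq {a : ℝ} (m : ℕ) : cc a m = a + 1/2 + ((m % 2 : ℕ) : ℝ) := by
  unfold cc
  rcases Nat.even_or_odd m with he | ho
  · rw [(Even.add_one he).neg_one_pow, Nat.even_iff.mp he]
    norm_num; ring
  · rw [(Odd.add_one ho).neg_one_pow, Nat.odd_iff.mp ho]
    norm_num; ring

lemma integrable_pow_Sbar {a : ℝ} (ha : -(1/2 : ℝ) < a) (j m : ℕ) :
    Integrable (fun x : ℝ =>
      |x| ^ (2*a) * Real.exp (-x^2) * x^j * Sbar 0 1 (-2) (2*a) m x) := by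
  have hfun : (fun x : ℝ => |x| ^ (2*a) * Real.exp (-x^2) * x^j * Sbar 0 1 (-2) (2*a) m x)
      = fun x : ℝ => ∑ k ∈ Finset.range (m/2 + 1),
          (((m/2).choose k : ℝ) * ((-1:ℝ)^k * ∏ i ∈ Finset.Ico (m/2 - k) (m/2), ((i:ℝ) + cc a m)))
            * (|x| ^ (2*a) * Real.exp (-x^2) * x^(j + (m - 2*k))) := by
    funext x
    rw [Sbar_eq ha, Finset.mul_sum]
    apply Finset.sum_congr rfl
    intro k _
    rw [pow_add]
    ring
  rw [hfun]
  apply integrable_finset_sum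
  intro k _
  exact (integrable_moment ha _).const_mul _

lemma key_lemma {a : ℝ} (ha : -(1/2 : ℝ) < a) (m j : ℕ) (hj : j ≤ m) :
    (∫ x : ℝ, |x| ^ (2*a) * Real.exp (-x^2) * x^j * Sbar 0 1 (-2) (2*a) m x)
      = if j = m then ((m/2).factorial : ℝ) * Real.Gamma (cc a m + ((m/2 : ℕ) : ℝ))
        else 0 := by
  set M := m/2 with hM
  set J := j/2 with hJ
  have hccpos := cc_pos ha m
  have hfun : (fun x : ℝ => |x| ^ (2*a) * Real.exp (-x^2) * x^j * Sbar 0 1 (-2) (2*a) m x)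
      = fun x : ℝ => ∑ k ∈ Finset.range (M + 1),
          ((M.choose k : ℝ) * ((-1:ℝ)^k * ∏ i ∈ Finset.Ico (M - k) M, ((i:ℝ) + cc a m)))
            * (|x| ^ (2*a) * Real.exp (-x^2) * x^(j + (m - 2*k))) := by
    funext x
    rw [Sbar_eq ha, Finset.mul_sum]
    apply Finset.sum_congr rfl
    intro k _
    rw [pow_add]
    ring
  rw [hfun, integral_finset_sum _ (fun k _ => (integrable_moment ha (j + (m - 2*k))).const_mul _)]
  simp_rw [MeasureTheory.integral_const_mul]
  by_cases hpar : (j + m) % 2 = 0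
  case neg =>
    -- opposite parity: every moment vanishes, and j ≠ m
    rw [if_neg (by omega)]
    apply Finset.sum_eq_zero
    intro k hk
    have hkM : k ≤ M := by have := Finset.mem_range.mp hk; omega
    rw [moment_eq ha, if_neg (by omega), mul_zero]
  case pos =>
    have hJM : J ≤ M := by omega
    have hterm : ∀ k ∈ Finset.range (M+1),
        ((M.choose k : ℝ) * ((-1:ℝ)^k * ∏ i ∈ Finset.Ico (M - k) M, ((i:ℝ) + cc a m)))
            * (∫ x : ℝ, |x| ^ (2*a) * Real.exp (-x^2) * x^(j + (m - 2*k)))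
          = ((∏ i ∈ Finset.range M, (cc a m + (i:ℝ))) * Real.Gamma (cc a m))
              * ((-1:ℝ)^k * (M.choose k : ℝ) * ∏ i ∈ Finset.range J, (((M:ℝ) + cc a m) - (k:ℝ) + (i:ℝ))) := by
      intro k hk
      have hkM : k ≤ M := by have := Finset.mem_range.mp hk; omega
      have h1 : (j + (m - 2*k)) % 2 = 0 := by omega
      have h2 : (j + (m - 2*k))/2 = (J + M - k) + m % 2 := by omega
      rw [moment_eq ha, if_pos h1, h2]
      have h3 : a + 1/2 + (((J + M - k) + m % 2 : ℕ) : ℝ) = cc a m + ((J + M - k : ℕ) : ℝ) := by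
        rw [cc_eq, Nat.cast_add]; ring
      rw [h3, Gamma_add_nat hccpos]
      have hsplit : ∏ i ∈ Finset.range (J + M - k), (cc a m + (i:ℝ))
          = (∏ i ∈ Finset.range (M - k), (cc a m + (i:ℝ)))
              * ∏ i ∈ Finset.Ico (M - k) (J + M - k), (cc a m + (i:ℝ)) :=
        (Finset.prod_range_mul_prod_Ico _ (by omega)).symm
      have hre : ∏ i ∈ Finset.Ico (M - k) (J + M - k), (cc a m + (i:ℝ))
          = ∏ i ∈ Finset.range J, (((M:ℝ) + cc a m) - (k:ℝ) + (i:ℝ)) := by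
        rw [Finset.prod_Ico_eq_prod_range]
        have hJr : (J + M - k) - (M - k) = J := by omega
        rw [hJr]
        apply Finset.prod_congr rfl
        intro i _
        rw [Nat.cast_add, Nat.cast_sub hkM]
        ring
      have hmerge : (∏ i ∈ Finset.Ico (M - k) M, ((i:ℝ) + cc a m))
            * ∏ i ∈ Finset.range (M - k), (cc a m + (i:ℝ))
          = ∏ i ∈ Finset.range M, (cc a m + (i:ℝ)) := by
        rw [Finset.prod_congr rfl (fun i _ => by rw [add_comm] :
          ∀ i ∈ Finset.Ico (M - k) M, ((i:ℝ) + cc a m) = (cc a m + (i:ℝ))), mul_comm]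
        exact Finset.prod_range_mul_prod_Ico _ (by omega)
      rw [hsplit, hre, ← hmerge]
      ring
    rw [Finset.sum_congr rfl hterm, ← Finset.mul_sum, altsum M J ((M:ℝ) + cc a m) hJM]
    by_cases hjm : j = m
    · rw [if_pos (by omega), if_pos hjm, Gamma_add_nat hccpos]
      have : ∏ i ∈ Finset.range M, ((cc a m) + (i:ℝ)) = ∏ i ∈ Finset.range M, ((cc a m) + (i:ℝ)) := rfl
      ring
    · rw [if_neg (by omega), if_neg hjm, mul_zero]

lemma norm_eq {a : ℝ} (ha : -(1/2:ℝ) < a) (n : ℕ) :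
    ((n/2).factorial : ℝ) * Real.Gamma (cc a n + ((n/2 : ℕ) : ℝ))
      = (2:ℝ)^(-(n:ℤ)) * (∏ i ∈ Finset.range n, ((1 - (-1:ℝ)^(i+1)) * a + ((i:ℝ)+1)))
          * Real.Gamma (a + 1/2) := by
  induction n with
  | zero => simp [cc_eq]
  | succ n ih =>
    have hz : (2:ℝ)^(-((n+1 : ℕ):ℤ)) = (2:ℝ)^(-(n:ℤ)) / 2 := by
      push_cast
      rw [neg_add, zpow_add₀ (two_ne_zero), zpow_neg_one]
      ring
    rw [Finset.prod_range_succ, hz]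
    rcases Nat.even_or_odd n with he | ho
    · obtain ⟨M, hM2⟩ := he
      have hmod : n % 2 = 0 := by omega
      have hmod1 : (n+1) % 2 = 1 := by omega
      have hn2 : n / 2 = M := by omega
      have hn12 : (n+1) / 2 = M := by omega
      have hccn : cc a n = a + 1/2 := by rw [cc_eq, hmod]; norm_num
      have hccn1 : cc a (n+1) = a + 1/2 + 1 := by rw [cc_eq, hmod1]; norm_num
      have hsgn : (-1:ℝ)^(n+1) = -1 := Odd.neg_one_pow ⟨M, by omega⟩
      have hpos : (0:ℝ) < a + 1/2 + (M:ℝ) := by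
        have : (0:ℝ) ≤ (M:ℝ) := Nat.cast_nonneg M
        linarith
      have hGa : Real.Gamma ((a + 1/2 + 1) + (M:ℝ))
          = (a + 1/2 + (M:ℝ)) * Real.Gamma (a + 1/2 + (M:ℝ)) := by
        rw [show (a + 1/2 + 1) + (M:ℝ) = (a + 1/2 + (M:ℝ)) + 1 by ring,
          Real.Gamma_add_one hpos.ne']
      rw [hn12, hccn1, hGa, hsgn]
      rw [hn2, hccn] at ih
      have hnR : ((n:ℕ):ℝ) = 2 * (M:ℝ) := by rw [hM2]; push_cast; ring
      push_cast
      rw [hnR]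
      linear_combination (a + 1/2 + (M:ℝ)) * ih
    · obtain ⟨M, hM2⟩ := ho
      have hmod : n % 2 = 1 := by omega
      have hmod1 : (n+1) % 2 = 0 := by omega
      have hn2 : n / 2 = M := by omega
      have hn12 : (n+1) / 2 = M + 1 := by omega
      have hccn : cc a n = a + 1/2 + 1 := by rw [cc_eq, hmod]; norm_num
      have hccn1 : cc a (n+1) = a + 1/2 := by rw [cc_eq, hmod1]; norm_num
      have hsgn : (-1:ℝ)^(n+1) = 1 := Even.neg_one_pow ⟨M+1, by omega⟩
      rw [hn12, hccn1, hsgn]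
      rw [hn2, hccn] at ih
      have harg : a + 1/2 + (((M+1:ℕ)):ℝ) = (a + 1/2 + 1) + (M:ℝ) := by push_cast; ring
      rw [harg, Nat.factorial_succ]
      have hnR : ((n:ℕ):ℝ) = 2 * (M:ℝ) + 1 := by rw [hM2]; push_cast; ring
      push_cast
      rw [hnR]
      linear_combination ((M:ℝ) + 1) * ih

lemma aux_orth {a : ℝ} (ha : -(1/2:ℝ) < a) {n m : ℕ} (hnm : n ≤ m) :
    (∫ x : ℝ, |x| ^ (2*a) * Real.exp (-x^2) * Sbar 0 1 (-2) (2*a) n x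
        * Sbar 0 1 (-2) (2*a) m x)
      = if n = m then ((m/2).factorial : ℝ) * Real.Gamma (cc a m + ((m/2 : ℕ) : ℝ))
        else 0 := by
  have hfun : (fun x : ℝ => |x| ^ (2*a) * Real.exp (-x^2) * Sbar 0 1 (-2) (2*a) n x
        * Sbar 0 1 (-2) (2*a) m x)
      = fun x : ℝ => ∑ k ∈ Finset.range (n/2 + 1),
          (((n/2).choose k : ℝ) * ((-1:ℝ)^k * ∏ i ∈ Finset.Ico (n/2 - k) (n/2), ((i:ℝ) + cc a n)))
            * (|x| ^ (2*a) * Real.exp (-x^2) * x^(n - 2*k) * Sbar 0 1 (-2) (2*a) m x) := by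
    funext x
    rw [Sbar_eq ha n x, Finset.mul_sum, Finset.sum_mul]
    apply Finset.sum_congr rfl
    intro k _
    ring
  rw [hfun, integral_finset_sum _ (fun k _ => (integrable_pow_Sbar ha (n - 2*k) m).const_mul _)]
  simp_rw [MeasureTheory.integral_const_mul]
  have hterm : ∀ k ∈ Finset.range (n/2 + 1),
      (((n/2).choose k : ℝ) * ((-1:ℝ)^k * ∏ i ∈ Finset.Ico (n/2 - k) (n/2), ((i:ℝ) + cc a n)))
          * (∫ x : ℝ, |x| ^ (2*a) * Real.exp (-x^2) * x^(n - 2*k) * Sbar 0 1 (-2) (2*a) m x)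
        = (((n/2).choose k : ℝ) * ((-1:ℝ)^k * ∏ i ∈ Finset.Ico (n/2 - k) (n/2), ((i:ℝ) + cc a n)))
          * (if n - 2*k = m then ((m/2).factorial : ℝ) * Real.Gamma (cc a m + ((m/2 : ℕ) : ℝ))
              else 0) := by
    intro k hk
    rw [key_lemma ha m (n - 2*k) (by omega)]
  rw [Finset.sum_congr rfl hterm]
  by_cases hnm' : n = m
  · subst hnm'
    rw [if_pos rfl]
    rw [Finset.sum_eq_single_of_mem 0 (Finset.mem_range.mpr (by omega))
      (fun k hk hk0 => by
        have hkM : k ≤ n/2 := by have := Finset.mem_range.mp hk; omega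
        rw [if_neg (by omega), mul_zero])]
    rw [if_pos (by omega)]
    have h0 : n - 2*0 = n := by omega
    simp
  · rw [if_neg hnm']
    apply Finset.sum_eq_zero
    intro k hk
    rw [if_neg (by omega), mul_zero]


end helpers

/-- Orthogonality relation of the monic generalized Hermite polynomials
`S̄_n(0,1,−2,2a;·)` with respect to the weight `|x|^{2a}e^{−x²}` on `(−∞,∞)`. -/
theorem GHP_orthogonality (a : ℝ) (ha : -(1 / 2 : ℝ) < a) (n m : ℕ) :
    ∫ x : ℝ,
        |x| ^ (2 * a) * Real.exp (-x ^ 2) *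
          Sbar 0 1 (-2) (2 * a) n x * Sbar 0 1 (-2) (2 * a) m x =
      (if n = m then (1 : ℝ) else 0) * (2 : ℝ) ^ (-(n : ℤ)) *
        (∏ i ∈ Finset.range n, ((1 - (-1 : ℝ) ^ (i + 1)) * a + ((i : ℝ) + 1))) *
        Real.Gamma (a + 1 / 2) := by
  rcases le_total n m with hnm | hmn
  · rw [aux_orth ha hnm]
    by_cases h : n = m
    · subst h
      rw [if_pos rfl, if_pos rfl, norm_eq ha n]
      ring
    · rw [if_neg h, if_neg h]
      ring
  · have hswap : (∫ x : ℝ, |x| ^ (2 * a) * Real.exp (-x ^ 2) *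
          Sbar 0 1 (-2) (2 * a) n x * Sbar 0 1 (-2) (2 * a) m x)
        = ∫ x : ℝ, |x| ^ (2 * a) * Real.exp (-x ^ 2) *
          Sbar 0 1 (-2) (2 * a) m x * Sbar 0 1 (-2) (2 * a) n x :=
      integral_congr_ae (Filter.Eventually.of_forall fun x => by ring)
    rw [hswap, aux_orth ha hmn]
    by_cases h : n = m
    · subst h
      rw [if_pos rfl, if_pos rfl, norm_eq ha n]
      ring
    · rw [if_neg (fun hh => h hh.symm), if_neg h]
      ring
end

section
/- Let a be a real number and let n, m be natural numbers with n + m < 2a − 1 (in particular a > 1/2). Assume 2a − j ≠ 0 for every odd integer j with 1 ≤ |j| ≤ 2·max(n,m) + 1. Then, with the initial vector (p,q,r,s) = (1, 0, −2a+2, 2), ∫_{−∞}^{∞} |x|^{−2a} e^{−1/x²} · S̄_n(1,0,−2a+2,2;x) · S̄_m(1,0,−2a+2,2;x) dx = δ_{n,m} · (−1)^n · (∏_{i=1}^{n} [ (−2(−1)^i(i − a) − 2a) / ((2i − 2a + 1)(2i − 2a − 1)) ]) · Γ(a − 1/2), where the integrand is extended by 0 at x = 0 and δ_{n,m} is 1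 if n = m and 0 otherwise. In particular, the finite family {S̄_n(1,0,−2a+2,2;·)}_{n=0}^{N} with N ≤ a − 1/2 is orthogonal with respect to the weight |x|^{−2a}e^{−1/x²} on (−∞,∞). -/
open Finset Real MeasureTheory

namespace FO4

/-- Descending factorial product. -/
noncomputable def dp (x : ℝ) (k : ℕ) : ℝ := ∏ j ∈ Finset.range k, (x - (j : ℝ))
/-- Ascending factorial product. -/
noncomputable def ap (x : ℝ) (k : ℕ) : ℝ := ∏ j ∈ Finset.range k, (x + (j : ℝ))

lemma dp_zero (x : ℝ) : dp x 0 = 1 := by simp [dp]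
lemma ap_zero (x : ℝ) : ap x 0 = 1 := by simp [ap]
lemma dp_succ (x : ℝ) (k : ℕ) : dp x (k + 1) = dp x k * (x - k) := by
  simp [dp, Finset.prod_range_succ]
lemma ap_succ (x : ℝ) (k : ℕ) : ap x (k + 1) = ap x k * (x + k) := by
  simp [ap, Finset.prod_range_succ]

lemma ap_succ' (x : ℝ) (k : ℕ) : ap x (k + 1) = x * ap (x + 1) k := by
  unfold ap
  rw [Finset.prod_range_succ']
  have : ∀ j ∈ Finset.range k, (x + ((j + 1 : ℕ) : ℝ)) = (x + 1 + j) := by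
    intro j _; push_cast; ring
  rw [Finset.prod_congr rfl this]
  simp [mul_comm]

lemma ap_congr {x y : ℝ} (k : ℕ) (h : x = y) : ap x k = ap y k := by rw [h]

lemma ap_eq_dp (t : ℝ) (r : ℕ) : ap t r = dp (t + r - 1) r := by
  unfold ap dp
  rw [← Finset.prod_range_reflect]
  refine Finset.prod_congr rfl fun j hj => ?_
  simp only [Finset.mem_range] at hj
  have : (↑(r - 1 - j) : ℝ) = (r : ℝ) - 1 - j := by
    have h1 : j ≤ r - 1 := by omega
    have h2 : 1 ≤ r := by omega
    push_cast [Nat.cast_sub h1, Nat.cast_sub h2]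
    ring
  rw [this]; ring

lemma neg_one_pow_mul_ap (t : ℝ) (l : ℕ) : (-1 : ℝ) ^ l * ap t l = dp (-t) l := by
  unfold ap dp
  rw [show ((-1:ℝ))^l = ∏ _j ∈ Finset.range l, (-1:ℝ) by simp, ← Finset.prod_mul_distrib]
  exact Finset.prod_congr rfl fun j _ => by ring

lemma ap_add (x : ℝ) (k j : ℕ) : ap x (k + j) = ap x k * ap (x + k) j := by
  unfold ap
  rw [Finset.prod_range_add]
  congr 1
  exact Finset.prod_congr rfl fun i _ => by push_cast; ring

lemma ap_ne_zero {x : ℝ} {k : ℕ} (h : ∀ j < k, x + (j : ℝ) ≠ 0) : ap x k ≠ 0 :=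
  Finset.prod_ne_zero_iff.mpr fun j hj => h j (Finset.mem_range.mp hj)

lemma dp_nat_eq_zero {i : ℕ} {M : ℕ} (h : i < M) : dp (i : ℝ) M = 0 := by
  unfold dp
  refine Finset.prod_eq_zero (Finset.mem_range.mpr h) ?_
  simp

lemma dp_nat_factorial (N : ℕ) : dp (N : ℝ) N = (N.factorial : ℝ) := by
  induction N with
  | zero => simp [dp]
  | succ N ih =>
      have key : dp ((N:ℝ) + 1) (N + 1) = ((N:ℝ) + 1) * dp (N : ℝ) N := by
        unfold dp
        rw [Finset.prod_range_succ']
        have h1 : ∀ j ∈ Finset.range N, ((N:ℝ) + 1 - ((j+1 : ℕ) : ℝ)) = (N:ℝ) - (j:ℝ) := by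
          intro j _; push_cast; ring
        rw [Finset.prod_congr rfl h1]
        push_cast
        ring
      push_cast
      rw [key, ih, Nat.factorial_succ]
      push_cast
      ring

/-- Vandermonde identity for descending factorials. -/
lemma dV (x y : ℝ) (N : ℕ) :
    dp (x + y) N = ∑ k ∈ Finset.range (N + 1), (N.choose k : ℝ) * dp x k * dp y (N - k) := by
  induction N with
  | zero => simp [dp]
  | succ N ih =>
      have key : ∀ k ∈ Finset.range (N + 1),
          (N.choose k : ℝ) * dp x k * dp y (N - k) * (x + y - N)
            = (N.choose k : ℝ) * dp x (k + 1) * dp y (N - k)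
              + (N.choose k : ℝ) * dp x k * dp y (N - k + 1) := by
        intro k hk
        have hk' : k ≤ N := by simpa using Nat.lt_succ_iff.mp (Finset.mem_range.mp hk)
        rw [dp_succ, dp_succ]
        have hc : ((N - k : ℕ) : ℝ) = (N : ℝ) - k := by
          push_cast [Nat.cast_sub hk']; ring
        rw [hc]; ring
      rw [dp_succ, ih, Finset.sum_mul, Finset.sum_congr rfl key, Finset.sum_add_distrib]
      rw [Finset.sum_range_succ' (fun k => (((N+1).choose k : ℕ) : ℝ) * dp x k * dp y (N + 1 - k)) (N+1)]
      have e1 : ∀ k ∈ Finset.range (N+1),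
          (((N+1).choose (k+1) : ℕ) : ℝ) * dp x (k+1) * dp y (N + 1 - (k+1))
            = ((N.choose k : ℕ) : ℝ) * dp x (k+1) * dp y (N - k)
              + ((N.choose (k+1) : ℕ) : ℝ) * dp x (k+1) * dp y (N - k) := by
        intro k hk
        have h : N + 1 - (k + 1) = N - k := by omega
        rw [h, Nat.choose_succ_succ]
        push_cast
        ring
      rw [Finset.sum_congr rfl e1, Finset.sum_add_distrib]
      have e2 : ∑ k ∈ Finset.range (N+1), ((N.choose k : ℕ) : ℝ) * dp x k * dp y (N - k + 1)
          = ∑ k ∈ Finset.range (N+1), ((N.choose (k+1) : ℕ) : ℝ) * dp x (k+1) * dp y (N - k)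
            + (((N+1).choose 0 : ℕ) : ℝ) * dp x 0 * dp y (N + 1 - 0) := by
        rw [Finset.sum_range_succ'
          (fun k => ((N.choose k : ℕ) : ℝ) * dp x k * dp y (N - k + 1)) N]
        rw [Finset.sum_range_succ
          (fun k => ((N.choose (k+1) : ℕ) : ℝ) * dp x (k+1) * dp y (N - k)) N]
        have hlast : ((N.choose (N+1) : ℕ) : ℝ) = 0 := by
          simp [Nat.choose_succ_self]
        rw [hlast]
        have e3 : ∀ k ∈ Finset.range N,
            ((N.choose (k+1) : ℕ) : ℝ) * dp x (k+1) * dp y (N - (k+1) + 1)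
              = ((N.choose (k+1) : ℕ) : ℝ) * dp x (k+1) * dp y (N - k) := by
          intro k hk
          have : N - (k+1) + 1 = N - k := by
            have := Finset.mem_range.mp hk; omega
          rw [this]
        rw [Finset.sum_congr rfl e3]
        simp
      rw [e2]
      ring

/-- Chu–Vandermonde in the form we need. -/
lemma innerV (c αm : ℝ) (M : ℕ) :
    ∑ l ∈ Finset.range (M + 1),
      (M.choose l : ℝ) * ((-1 : ℝ) ^ l * ap c l) * ap (αm + l) (M - l)
      = dp (αm + M - 1 - c) M := by
  have h : ∀ l ∈ Finset.range (M + 1),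
      (M.choose l : ℝ) * ((-1 : ℝ) ^ l * ap c l) * ap (αm + l) (M - l)
        = (M.choose l : ℝ) * dp (-c) l * dp (αm + M - 1) (M - l) := by
    intro l hl
    have hl' : l ≤ M := Nat.lt_succ_iff.mp (Finset.mem_range.mp hl)
    rw [neg_one_pow_mul_ap, ap_eq_dp]
    have : αm + (l : ℝ) + ((M - l : ℕ) : ℝ) - 1 = αm + M - 1 := by
      rw [Nat.cast_sub hl']; ring
    rw [this]
  rw [Finset.sum_congr rfl h, ← dV]
  ring_nf

/-- Evaluation of the central double sum. -/
lemma U_val (c αn αm : ℝ) (N M : ℕ) (hrel : αm + (M : ℝ) - 1 - c = (N : ℝ)) (hNM : N ≤ M) :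
    ∑ k ∈ Finset.range (N + 1), ∑ l ∈ Finset.range (M + 1),
      (N.choose k : ℝ) * (M.choose l : ℝ) * ((-1 : ℝ) ^ k * ap (αn + k) (N - k)) *
        ((-1 : ℝ) ^ l * ap (αm + l) (M - l)) * ap c (k + l)
      = if N = M then ap αn N * (N.factorial : ℝ) else 0 := by
  have inner : ∀ k ∈ Finset.range (N + 1),
      ∑ l ∈ Finset.range (M + 1),
        (N.choose k : ℝ) * (M.choose l : ℝ) * ((-1 : ℝ) ^ k * ap (αn + k) (N - k)) *
          ((-1 : ℝ) ^ l * ap (αm + l) (M - l)) * ap c (k + l)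
        = (N.choose k : ℝ) * ((-1 : ℝ) ^ k * ap (αn + k) (N - k)) * ap c k *
            dp ((N : ℝ) - k) M := by
    intro k hk
    have step : ∀ l ∈ Finset.range (M + 1),
        (N.choose k : ℝ) * (M.choose l : ℝ) * ((-1 : ℝ) ^ k * ap (αn + k) (N - k)) *
          ((-1 : ℝ) ^ l * ap (αm + l) (M - l)) * ap c (k + l)
          = ((N.choose k : ℝ) * ((-1 : ℝ) ^ k * ap (αn + k) (N - k)) * ap c k) *
            ((M.choose l : ℝ) * ((-1 : ℝ) ^ l * ap (c + k) l) * ap (αm + l) (M - l)) := by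
      intro l _
      rw [ap_add c k l]
      ring
    rw [Finset.sum_congr rfl step, ← Finset.mul_sum, innerV (c + k) αm M]
    have : αm + (M : ℝ) - 1 - (c + k) = (N : ℝ) - k := by rw [← hrel]; ring
    rw [this]
  rw [Finset.sum_congr rfl inner]
  by_cases hNMeq : N = M
  · subst hNMeq
    rw [if_pos rfl]
    rw [Finset.sum_eq_single 0]
    · simp [ap_zero, dp_nat_factorial]
    · intro k hk hk0
      have hkN : k ≤ N := Nat.lt_succ_iff.mp (Finset.mem_range.mp hk)
      have : ((N : ℝ) - k) = ((N - k : ℕ) : ℝ) := by rw [Nat.cast_sub hkN]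
      rw [this, dp_nat_eq_zero (by omega)]
      ring
    · intro h; exact absurd (Finset.mem_range.mpr (by omega)) h
  · rw [if_neg hNMeq]
    refine Finset.sum_eq_zero fun k hk => ?_
    have hkN : k ≤ N := Nat.lt_succ_iff.mp (Finset.mem_range.mp hk)
    have : ((N : ℝ) - k) = ((N - k : ℕ) : ℝ) := by rw [Nat.cast_sub hkN]
    rw [this, dp_nat_eq_zero (by omega)]
    ring

lemma Gamma_ap {c : ℝ} (hc : 0 < c) (j : ℕ) : Real.Gamma (c + j) = ap c j * Real.Gamma c := by
  induction j with
  | zero => simp [ap_zero]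
  | succ j ih =>
      have h1 : c + ((j : ℝ) + 1) = (c + j) + 1 := by ring
      push_cast
      rw [h1, Real.Gamma_add_one (by positivity), ih, ap_succ]
      ring

lemma rhs_closed (a : ℝ) (n : ℕ)
    (hodd : ∀ j : ℕ, Odd j → j ≤ 2 * n + 1 → 2 * a - (j : ℝ) ≠ 0) :
    (-1 : ℝ) ^ n *
        (∏ i ∈ Finset.range n, (-2 * (-1 : ℝ) ^ (i + 1) * (((i : ℝ) + 1) - a) - 2 * a)) *
        ap (a - 1/2 - n) n * ap (a - 1/2 - n + 1) (n / 2)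
      = (∏ i ∈ Finset.range n,
          ((2 * ((i : ℝ) + 1) - 2 * a + 1) * (2 * ((i : ℝ) + 1) - 2 * a - 1))) *
        ((n / 2).factorial : ℝ) := by
  induction n with
  | zero => simp [ap_zero]
  | succ n ih =>
      have IH := ih (fun j hj hj' => hodd j hj (by omega))
      have e1 : ap (a - 1/2 - ((n+1 : ℕ) : ℝ)) (n + 1)
          = (a - 1/2 - ((n : ℝ) + 1)) * ap (a - 1/2 - n) n := by
        rw [ap_succ' (a - 1/2 - ((n+1 : ℕ) : ℝ)) n]
        push_cast
        congr 1
        exact ap_congr n (by ring)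
      have harg : a - 1/2 - ((n+1 : ℕ) : ℝ) + 1 = a - 1/2 - n := by push_cast; ring
      rcases Nat.even_or_odd n with ⟨N, hN⟩ | ⟨N, hN⟩
      · have hn2 : n / 2 = N := by omega
        have hn12 : (n + 1) / 2 = N := by omega
        have hNc : (n : ℝ) = 2 * N := by
          have : n = 2 * N := by omega
          rw [this]; push_cast; ring
        have hbN : a - 1/2 - (N : ℝ) ≠ 0 := by
          have h := hodd (n + 1) ⟨N, by omega⟩ (by omega)
          intro hcon; apply h
          push_cast [hNc]
          linarith [hcon]
        have e2 : ap (a - 1/2 - (n : ℝ)) N * (a - 1/2 - (N : ℝ))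
            = (a - 1/2 - n) * ap (a - 1/2 - n + 1) N := by
          have h3 := ap_succ (a - 1/2 - (n : ℝ)) N
          have h3' := ap_succ' (a - 1/2 - (n : ℝ)) N
          have h5 : a - 1/2 - (n : ℝ) + N = a - 1/2 - N := by rw [hNc]; ring
          rw [h5] at h3
          rw [← h3, h3']
        have hnum : (-2 * (-1 : ℝ) ^ (n + 1) * (((n : ℝ) + 1) - a) - 2 * a)
            = 2 * ((n : ℝ) + 1) - 4 * a := by
          have he : ((-1 : ℝ)) ^ n = 1 := Even.neg_one_pow ⟨N, hN⟩
          have : ((-1 : ℝ)) ^ (n+1) = -1 := by rw [pow_succ, he]; ring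
          rw [this]; ring
        apply mul_right_cancel₀ hbN
        rw [Finset.prod_range_succ, Finset.prod_range_succ, e1, hnum, hn12, harg]
        rw [hn2] at IH
        push_cast at IH ⊢
        rw [hNc] at IH e2 ⊢
        linear_combination (-(2 * (2*(N:ℝ)+1) - 4*a) * (a - 1/2 - (2*(N:ℝ)+1)) * (a - 1/2 - 2*(N:ℝ))) * IH
          + ((-1:ℝ)^(n+1) * (∏ i ∈ Finset.range n, (-2 * (-1:ℝ)^(i+1) * (((i:ℝ)+1) - a) - 2*a))
              * (2 * (2*(N:ℝ)+1) - 4*a) * (a - 1/2 - (2*(N:ℝ)+1)) * ap (a - 1/2 - 2*(N:ℝ)) n) * e2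
      · have hn2 : n / 2 = N := by omega
        have hn12 : (n + 1) / 2 = N + 1 := by omega
        have hNc : (n : ℝ) = 2 * (N : ℝ) + 1 := by
          rw [hN]; push_cast; ring
        have e2 : ap (a - 1/2 - (n : ℝ)) (N + 1)
            = (a - 1/2 - (n : ℝ)) * ap (a - 1/2 - n + 1) N := by
          rw [ap_succ' (a - 1/2 - (n : ℝ)) N]
        have hnum : (-2 * (-1 : ℝ) ^ (n + 1) * (((n : ℝ) + 1) - a) - 2 * a)
            = -2 * ((n : ℝ) + 1) := by
          have he : ((-1 : ℝ)) ^ n = -1 := Odd.neg_one_pow ⟨N, by omega⟩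
          have : ((-1 : ℝ)) ^ (n+1) = 1 := by rw [pow_succ, he]; ring
          rw [this]; ring
        rw [Finset.prod_range_succ, Finset.prod_range_succ, e1, hnum, hn12,
          ap_congr (N+1) harg, e2, Nat.factorial_succ]
        rw [hn2] at IH
        push_cast at IH ⊢
        rw [hNc] at IH ⊢
        linear_combination (2 * (2*(N:ℝ)+1+1) * (a - 1/2 - (2*(N:ℝ)+1) - 1) * (a - 1/2 - (2*(N:ℝ)+1))) * IH

lemma mom_Ioi (a : ℝ) (p : ℕ) (hp : (p : ℝ) < 2 * a - 1) :
    IntegrableOn (fun x : ℝ => x ^ ((p : ℝ) - 2 * a) * Real.exp (-1 / x ^ 2)) (Set.Ioi 0) ∧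
    ∫ x in Set.Ioi (0:ℝ), x ^ ((p : ℝ) - 2 * a) * Real.exp (-1 / x ^ 2)
      = (1 / 2) * Real.Gamma (a - 1 / 2 - p / 2) := by
  set s : ℝ := a - 1 / 2 - p / 2 with hs_def
  have hs : 0 < s := by rw [hs_def]; linarith
  set g : ℝ → ℝ := fun y => (1 / 2) * (Real.exp (-y) * y ^ (s - 1)) with hg_def
  have hg_int : IntegrableOn g (Set.Ioi 0) :=
    (Real.GammaIntegral_convergent hs).const_mul _
  have hg_val : ∫ y in Set.Ioi (0:ℝ), g y = (1 / 2) * Real.Gamma s := by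
    rw [hg_def]
    simp_rw [MeasureTheory.integral_const_mul]
    rw [← Real.Gamma_eq_integral hs]
  have hne : ((-2 : ℝ)) ≠ 0 := by norm_num
  have key : ∀ x ∈ Set.Ioi (0:ℝ),
      (|(-2 : ℝ)| * x ^ ((-2 : ℝ) - 1)) • g (x ^ (-2 : ℝ))
        = x ^ ((p : ℝ) - 2 * a) * Real.exp (-1 / x ^ 2) := by
    intro x hx
    have hx0 : (0:ℝ) < x := hx
    have h1 : x ^ ((-2 : ℝ)) = (x ^ 2)⁻¹ := by
      rw [show ((-2:ℝ)) = -((2:ℕ):ℝ) by norm_num, Real.rpow_neg hx0.le, Real.rpow_natCast]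
    have h2 : (x ^ ((-2:ℝ))) ^ (s - 1) = x ^ ((-2) * (s - 1)) := by
      rw [← Real.rpow_mul hx0.le]
    have h3 : Real.exp (-(x ^ (-2:ℝ))) = Real.exp (-1 / x ^ 2) := by
      rw [h1, neg_div, one_div]
    rw [smul_eq_mul, hg_def]
    simp only
    rw [h2]
    calc |(-2:ℝ)| * x ^ ((-2:ℝ) - 1) * ((1/2) * (Real.exp (-(x ^ (-2:ℝ))) * x ^ ((-2) * (s-1))))
        = x ^ ((-2:ℝ) - 1) * x ^ ((-2) * (s-1)) * Real.exp (-(x ^ (-2:ℝ))) := by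
          rw [abs_of_nonpos (by norm_num : (-2:ℝ) ≤ 0)]; ring
      _ = x ^ ((p : ℝ) - 2 * a) * Real.exp (-1 / x ^ 2) := by
          rw [← Real.rpow_add hx0, h3]
          congr 1
          congr 1
          rw [hs_def]; ring
  constructor
  · have := (MeasureTheory.integrableOn_Ioi_comp_rpow_iff g hne).mpr hg_int
    exact this.congr_fun key measurableSet_Ioi
  · rw [← MeasureTheory.setIntegral_congr_fun measurableSet_Ioi key,
      MeasureTheory.integral_comp_rpow_Ioi g hne, hg_val]

lemma weight_neg (a : ℝ) (x : ℝ) :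
    (if -x = 0 then (0:ℝ) else |(-x)| ^ (-2 * a) * Real.exp (-1 / (-x) ^ 2))
      = (if x = 0 then (0:ℝ) else |x| ^ (-2 * a) * Real.exp (-1 / x ^ 2)) := by
  by_cases h : x = 0
  · simp [h]
  · rw [if_neg (by simpa using h), if_neg h, abs_neg]
    have : (-x)^2 = x^2 := by ring
    rw [this]

lemma integrand_eq_on_Ioi (a : ℝ) (p : ℕ) :
    ∀ x ∈ Set.Ioi (0:ℝ),
      x ^ ((p : ℝ) - 2 * a) * Real.exp (-1 / x ^ 2)
        = (if x = 0 then (0:ℝ) else |x| ^ (-2 * a) * Real.exp (-1 / x ^ 2)) * x ^ p := by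
  intro x hx
  have hx0 : (0:ℝ) < x := hx
  rw [if_neg hx0.ne', abs_of_pos hx0]
  rw [show ((p:ℝ) - 2*a) = (-2*a) + (p:ℝ) by ring, Real.rpow_add hx0, Real.rpow_natCast]
  ring

lemma mom_integrable (a : ℝ) (p : ℕ) (hp : (p : ℝ) < 2 * a - 1) :
    MeasureTheory.Integrable (fun x : ℝ =>
      (if x = 0 then (0:ℝ) else |x| ^ (-2 * a) * Real.exp (-1 / x ^ 2)) * x ^ p) := by
  set f : ℝ → ℝ := fun x =>
    (if x = 0 then (0:ℝ) else |x| ^ (-2 * a) * Real.exp (-1 / x ^ 2)) * x ^ p with hf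
  have hIoi : IntegrableOn f (Set.Ioi 0) :=
    ((mom_Ioi a p hp).1).congr_fun (integrand_eq_on_Ioi a p) measurableSet_Ioi
  have hIci : IntegrableOn f (Set.Ici 0) := by
    rwa [integrableOn_Ici_iff_integrableOn_Ioi]
  have hIic : IntegrableOn f (Set.Iic 0) := by
    rw [← Measure.map_neg_eq_self (volume : Measure ℝ)]
    have m : MeasurableEmbedding fun x : ℝ => -x :=
      (Homeomorph.neg ℝ).measurableEmbedding
    rw [m.integrableOn_map_iff]
    have hpre : (fun x : ℝ => -x) ⁻¹' Set.Iic 0 = Set.Ici 0 := by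
      ext y; simp [neg_nonpos]
    rw [hpre]
    have hcomp : ∀ x : ℝ, (f ∘ fun x => -x) x = ((-1:ℝ)^p) * f x := by
      intro x
      simp only [Function.comp, hf]
      rw [weight_neg a x, neg_pow]
      ring
    have : (f ∘ fun x : ℝ => -x) = fun x => ((-1:ℝ)^p) * f x := funext hcomp
    rw [this]
    exact hIci.const_mul _
  have : Set.Iic (0:ℝ) ∪ Set.Ioi 0 = Set.univ := Set.Iic_union_Ioi
  rw [← MeasureTheory.integrableOn_univ, ← this]
  exact hIic.union hIoi

lemma mom_odd (a : ℝ) (p : ℕ) (hodd : Odd p) :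
    ∫ x : ℝ, (if x = 0 then (0:ℝ) else |x| ^ (-2 * a) * Real.exp (-1 / x ^ 2)) * x ^ p = 0 := by
  set f : ℝ → ℝ := fun x =>
    (if x = 0 then (0:ℝ) else |x| ^ (-2 * a) * Real.exp (-1 / x ^ 2)) * x ^ p with hf
  have h1 : ∫ x : ℝ, f (-x) = ∫ x : ℝ, f x := integral_neg_eq_self f volume
  have h2 : ∀ x : ℝ, f (-x) = - f x := by
    intro x
    simp only [hf]
    rw [weight_neg a x, hodd.neg_pow]
    ring
  simp_rw [h2, MeasureTheory.integral_neg] at h1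
  linarith

lemma mom_even (a : ℝ) (u : ℕ) (h : ((2 * u : ℕ) : ℝ) < 2 * a - 1) :
    ∫ x : ℝ, (if x = 0 then (0:ℝ) else |x| ^ (-2 * a) * Real.exp (-1 / x ^ 2)) * x ^ (2 * u)
      = Real.Gamma (a - 1 / 2 - u) := by
  set F : ℝ → ℝ := fun t =>
    (if t = 0 then (0:ℝ) else t ^ (-2 * a) * Real.exp (-1 / t ^ 2)) * t ^ (2 * u) with hF
  have habs : ∀ x : ℝ,
      (if x = 0 then (0:ℝ) else |x| ^ (-2 * a) * Real.exp (-1 / x ^ 2)) * x ^ (2 * u)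
        = F |x| := by
    intro x
    by_cases hx : x = 0
    · simp [hF, hx]
    · have h1 : |x| ≠ 0 := by simpa using hx
      simp only [hF]
      rw [if_neg hx, if_neg h1, sq_abs, Even.pow_abs ⟨u, by ring⟩]
  have hEq : ∀ t ∈ Set.Ioi (0:ℝ), F t = t ^ (((2*u : ℕ) : ℝ) - 2 * a) * Real.exp (-1 / t ^ 2) := by
    intro t ht
    have ht0 : (0:ℝ) < t := ht
    rw [hF]
    simp only
    rw [if_neg ht0.ne',
      show (((2*u : ℕ) : ℝ) - 2 * a) = -2*a + ((2*u : ℕ) : ℝ) by ring,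
      Real.rpow_add ht0, Real.rpow_natCast]
    ring
  calc ∫ x : ℝ, (if x = 0 then (0:ℝ) else |x| ^ (-2 * a) * Real.exp (-1 / x ^ 2)) * x ^ (2 * u)
      = ∫ x : ℝ, F |x| := by simp_rw [habs]
    _ = 2 * ∫ t in Set.Ioi (0:ℝ), F t := integral_comp_abs
    _ = 2 * ∫ t in Set.Ioi (0:ℝ), t ^ (((2*u : ℕ) : ℝ) - 2 * a) * Real.exp (-1 / t ^ 2) := by
        rw [MeasureTheory.setIntegral_congr_fun measurableSet_Ioi hEq]
    _ = 2 * ((1/2) * Real.Gamma (a - 1/2 - (2*u : ℕ) / 2)) := by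
        rw [(mom_Ioi a (2*u) h).2]
    _ = Real.Gamma (a - 1/2 - u) := by
        rw [show (a - 1/2 - ((2*u : ℕ) : ℝ) / 2) = a - 1/2 - u by push_cast; ring]
        ring

lemma hsign (n : ℕ) : ((-1 : ℝ)) ^ (n + 1) = 2 * ((n : ℝ) - 2 * ((n / 2 : ℕ) : ℝ)) - 1 := by
  rcases Nat.even_or_odd n with ⟨t, ht⟩ | ⟨t, ht⟩
  · have h2 : n / 2 = t := by omega
    have hc : (n : ℝ) = 2 * t := by
      have : n = 2 * t := by omega
      rw [this]; push_cast; ring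
    rw [h2, hc, Odd.neg_one_pow ⟨t, by omega⟩]
    ring
  · have h2 : n / 2 = t := by omega
    have hc : (n : ℝ) = 2 * t + 1 := by
      rw [ht]; push_cast; ring
    rw [h2, hc, Even.neg_one_pow ⟨t + 1, by omega⟩]
    ring

lemma sbar_eq (a : ℝ) (n : ℕ)
    (hD : ∀ i : ℕ, i < n / 2 → (i : ℝ) + (n : ℝ) - ((n / 2 : ℕ) : ℝ) - (a - 1/2) ≠ 0)
    (x : ℝ) :
    Sbar 1 0 (-2 * a + 2) 2 n x
      = ∑ k ∈ Finset.range (n / 2 + 1),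
          (Nat.choose (n / 2) k : ℝ) * ((-1 : ℝ) ^ k * (ap (a - 1/2 - n + 1) k)⁻¹) *
            x ^ (n - 2 * k) := by
  have hc : ∀ i : ℕ, ((2 * (i : ℝ) + (-1 : ℝ) ^ (n + 1) + 2 * ((n / 2 : ℕ) : ℝ)) * 1 + (-2 * a + 2))
      = 2 * ((i : ℝ) + (n : ℝ) - ((n / 2 : ℕ) : ℝ) - (a - 1/2)) := by
    intro i
    rw [hsign n]
    ring
  unfold Sbar S
  have hnorm : ∀ i ∈ Finset.range (n / 2),
      ((2 * (i : ℝ) + (-1 : ℝ) ^ (n + 1) + 2) * 0 + 2) /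
        ((2 * (i : ℝ) + (-1 : ℝ) ^ (n + 1) + 2 * ((n / 2 : ℕ) : ℝ)) * 1 + (-2 * a + 2))
        = ((i : ℝ) + (n : ℝ) - ((n / 2 : ℕ) : ℝ) - (a - 1/2))⁻¹ := by
    intro i hi
    have hci := hD i (Finset.mem_range.mp hi)
    rw [hc i]
    rw [show ((2 * (i : ℝ) + (-1 : ℝ) ^ (n + 1) + 2) * 0 + 2) = (2:ℝ) by ring]
    field_simp
  rw [Finset.prod_congr rfl hnorm]
  have hterm : ∀ k ∈ Finset.range (n / 2 + 1),
      (Nat.choose (n / 2) k : ℝ) *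
        (∏ i ∈ Finset.range (n / 2 - k),
          ((2 * (i : ℝ) + (-1 : ℝ) ^ (n + 1) + 2 * ((n / 2 : ℕ) : ℝ)) * 1 + (-2 * a + 2)) /
          ((2 * (i : ℝ) + (-1 : ℝ) ^ (n + 1) + 2) * 0 + 2)) *
        x ^ (n - 2 * k)
      = (Nat.choose (n / 2) k : ℝ) *
        (∏ i ∈ Finset.range (n / 2 - k),
          ((i : ℝ) + (n : ℝ) - ((n / 2 : ℕ) : ℝ) - (a - 1/2))) *
        x ^ (n - 2 * k) := by
    intro k _
    congr 1
    congr 1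
    refine Finset.prod_congr rfl fun i _ => ?_
    rw [hc i, show ((2 * (i : ℝ) + (-1 : ℝ) ^ (n + 1) + 2) * 0 + 2) = (2:ℝ) by ring]
    ring
  rw [Finset.sum_congr rfl hterm, Finset.mul_sum]
  refine Finset.sum_congr rfl fun k hk => ?_
  have hkN : k ≤ n / 2 := Nat.lt_succ_iff.mp (Finset.mem_range.mp hk)
  have hco : (∏ i ∈ Finset.range (n / 2),
        ((i : ℝ) + (n : ℝ) - ((n / 2 : ℕ) : ℝ) - (a - 1/2))⁻¹) *
      (∏ i ∈ Finset.range (n / 2 - k),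
        ((i : ℝ) + (n : ℝ) - ((n / 2 : ℕ) : ℝ) - (a - 1/2)))
      = (-1 : ℝ) ^ k * (ap (a - 1/2 - n + 1) k)⁻¹ := by
    set g : ℕ → ℝ := fun i => ((i : ℝ) + (n : ℝ) - ((n / 2 : ℕ) : ℝ) - (a - 1/2)) with hg
    have hsplit : (∏ i ∈ Finset.range (n / 2), (g i)⁻¹)
        = (∏ i ∈ Finset.range (n / 2 - k), (g i)⁻¹) *
          (∏ i ∈ Finset.Ico (n / 2 - k) (n / 2), (g i)⁻¹) := by
      simp only [Finset.range_eq_Ico]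
      exact (Finset.prod_Ico_consecutive _ (Nat.zero_le (n / 2 - k)) (Nat.sub_le (n / 2) k)).symm
    have hcancel : (∏ i ∈ Finset.range (n / 2 - k), (g i)⁻¹) *
        (∏ i ∈ Finset.range (n / 2 - k), g i) = 1 := by
      rw [← Finset.prod_mul_distrib,
        Finset.prod_congr rfl (fun i hi => inv_mul_cancel₀
          (hD i (lt_of_lt_of_le (Finset.mem_range.mp hi) (Nat.sub_le _ _))))]
      exact Finset.prod_const_one
    have hIco : (∏ i ∈ Finset.Ico (n / 2 - k) (n / 2), (g i)⁻¹)
        = (-1 : ℝ) ^ k * (ap (a - 1/2 - n + 1) k)⁻¹ := by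
      rw [Finset.prod_Ico_eq_prod_range]
      rw [Nat.sub_sub_self hkN]
      have step1 : ∀ j ∈ Finset.range k,
          (g (n / 2 - k + j))⁻¹ = ((n : ℝ) - k + j - (a - 1/2))⁻¹ := by
        intro j hj
        rw [hg]
        simp only
        congr 1
        have : ((n / 2 - k + j : ℕ) : ℝ) = ((n / 2 : ℕ) : ℝ) - (k : ℝ) + (j : ℝ) := by
          have h1 : n / 2 - k + j = (n / 2 + j) - k := by omega
          rw [h1, Nat.cast_sub (by omega)]
          push_cast; ring
        rw [this]; ring
      rw [Finset.prod_congr rfl step1]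
      rw [← Finset.prod_range_reflect (fun j => ((n : ℝ) - k + j - (a - 1/2))⁻¹) k]
      have step2 : ∀ j ∈ Finset.range k,
          ((n : ℝ) - k + ((k - 1 - j : ℕ) : ℝ) - (a - 1/2))⁻¹
            = -((a - 1/2 - n + 1 + (j : ℝ))⁻¹) := by
        intro j hj
        have hjk : j < k := Finset.mem_range.mp hj
        have : ((k - 1 - j : ℕ) : ℝ) = (k : ℝ) - 1 - (j : ℝ) := by
          rw [Nat.cast_sub (by omega), Nat.cast_sub (by omega)]
          push_cast; ring
        rw [this, show (n : ℝ) - k + ((k:ℝ) - 1 - j) - (a - 1/2)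
            = -(a - 1/2 - n + 1 + (j : ℝ)) by ring, inv_neg]
      rw [Finset.prod_congr rfl step2]
      rw [show (fun j : ℕ => -((a - 1/2 - n + 1 + (j : ℝ))⁻¹))
          = fun j : ℕ => (-1 : ℝ) * ((a - 1/2 - n + 1 + (j : ℝ))⁻¹) from funext fun j => by ring]
      rw [Finset.prod_mul_distrib, Finset.prod_const]
      rw [Finset.prod_inv_distrib, Finset.card_range]
      unfold ap
      rfl
    calc (∏ i ∈ Finset.range (n / 2), (g i)⁻¹) * (∏ i ∈ Finset.range (n / 2 - k), g i)
        = ((∏ i ∈ Finset.range (n / 2 - k), (g i)⁻¹) *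
            (∏ i ∈ Finset.range (n / 2 - k), g i)) *
          (∏ i ∈ Finset.Ico (n / 2 - k) (n / 2), (g i)⁻¹) := by rw [hsplit]; ring
      _ = (-1 : ℝ) ^ k * (ap (a - 1/2 - n + 1) k)⁻¹ := by rw [hcancel, hIco]; ring
  linear_combination ((Nat.choose (n / 2) k : ℝ) * x ^ (n - 2 * k)) * hco

set_option maxHeartbeats 1600000 in
lemma core (a : ℝ) (n m : ℕ)
    (hnm : (n : ℝ) + (m : ℝ) < 2 * a - 1) (hmn : n ≤ m)
    (hodd : ∀ j : ℕ, Odd j → j ≤ 2 * m + 1 → 2 * a - (j : ℝ) ≠ 0) :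
    ∫ x : ℝ,
        (if x = 0 then 0 else |x| ^ (-2 * a) * Real.exp (-1 / x ^ 2)) *
          Sbar 1 0 (-2 * a + 2) 2 n x * Sbar 1 0 (-2 * a + 2) 2 m x =
      (if n = m then (1 : ℝ) else 0) * (-1 : ℝ) ^ n *
        (∏ i ∈ Finset.range n,
          (-2 * (-1 : ℝ) ^ (i + 1) * (((i : ℝ) + 1) - a) - 2 * a) /
            ((2 * ((i : ℝ) + 1) - 2 * a + 1) * (2 * ((i : ℝ) + 1) - 2 * a - 1))) *
        Real.Gamma (a - 1 / 2) := by
  have hDgen : ∀ p : ℕ, p ≤ m → ∀ i : ℕ, i < p / 2 →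
      (i : ℝ) + (p : ℝ) - ((p / 2 : ℕ) : ℝ) - (a - 1/2) ≠ 0 := by
    intro p hpm i hi hcon
    apply hodd (2 * (i + p - p / 2) + 1) ⟨i + p - p / 2, by ring⟩ (by omega)
    have hcast : ((i + p - p / 2 : ℕ) : ℝ) = (i : ℝ) + (p : ℝ) - ((p / 2 : ℕ) : ℝ) := by
      rw [Nat.cast_sub (by omega)]
      push_cast; ring
    push_cast [hcast]
    linarith [hcon]
  have hDn := hDgen n hmn
  have hDm := hDgen m le_rfl
  have hAgen : ∀ p : ℕ, p ≤ m → ap (a - 1/2 - p + 1) (p / 2) ≠ 0 := by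
    intro p hpm
    apply ap_ne_zero
    intro j hj hcon
    apply hodd (2 * (p - 1 - j) + 1) ⟨p - 1 - j, by ring⟩ (by omega)
    have hcast : ((p - 1 - j : ℕ) : ℝ) = (p : ℝ) - 1 - (j : ℝ) := by
      rw [show p - 1 - j = p - (1 + j) from by omega, Nat.cast_sub (by omega)]
      push_cast; ring
    push_cast [hcast]
    linarith [hcon]
  have hAn := hAgen n hmn
  have hAm := hAgen m le_rfl
  have hrw : ∀ x : ℝ,
      (if x = 0 then (0:ℝ) else |x| ^ (-2 * a) * Real.exp (-1 / x ^ 2)) *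
        Sbar 1 0 (-2 * a + 2) 2 n x * Sbar 1 0 (-2 * a + 2) 2 m x
      = ∑ k ∈ Finset.range (n / 2 + 1), ∑ l ∈ Finset.range (m / 2 + 1),
          ((Nat.choose (n / 2) k : ℝ) * ((-1 : ℝ) ^ k * (ap (a - 1/2 - n + 1) k)⁻¹) *
            ((Nat.choose (m / 2) l : ℝ) * ((-1 : ℝ) ^ l * (ap (a - 1/2 - m + 1) l)⁻¹))) *
          ((if x = 0 then (0:ℝ) else |x| ^ (-2 * a) * Real.exp (-1 / x ^ 2)) *
            x ^ (n - 2 * k + (m - 2 * l))) := by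
    intro x
    rw [sbar_eq a n hDn x, sbar_eq a m hDm x, mul_assoc, Finset.sum_mul_sum]
    rw [Finset.mul_sum]
    refine Finset.sum_congr rfl fun k hk => ?_
    rw [Finset.mul_sum]
    refine Finset.sum_congr rfl fun l hl => ?_
    rw [pow_add]
    ring
  have hbound : ∀ k l : ℕ, ((n - 2*k + (m - 2*l) : ℕ) : ℝ) < 2 * a - 1 := by
    intro k l
    have h2 : ((n - 2*k + (m - 2*l) : ℕ) : ℝ) ≤ ((n + m : ℕ) : ℝ) :=
      Nat.cast_le.mpr (by omega)
    push_cast at h2 ⊢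
    linarith
  have hI : ∫ x : ℝ, (if x = 0 then (0:ℝ) else |x| ^ (-2 * a) * Real.exp (-1 / x ^ 2)) *
        Sbar 1 0 (-2 * a + 2) 2 n x * Sbar 1 0 (-2 * a + 2) 2 m x
      = ∑ k ∈ Finset.range (n / 2 + 1), ∑ l ∈ Finset.range (m / 2 + 1),
          ((Nat.choose (n / 2) k : ℝ) * ((-1 : ℝ) ^ k * (ap (a - 1/2 - n + 1) k)⁻¹) *
            ((Nat.choose (m / 2) l : ℝ) * ((-1 : ℝ) ^ l * (ap (a - 1/2 - m + 1) l)⁻¹))) *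
          (∫ x : ℝ, (if x = 0 then (0:ℝ) else |x| ^ (-2 * a) * Real.exp (-1 / x ^ 2)) *
            x ^ (n - 2 * k + (m - 2 * l))) := by
    rw [MeasureTheory.integral_congr_ae (MeasureTheory.ae_of_all _ hrw)]
    rw [MeasureTheory.integral_finset_sum _ (fun k _ => MeasureTheory.integrable_finset_sum _
      (fun l _ => ((mom_integrable a _ (hbound k l)).const_mul _)))]
    refine Finset.sum_congr rfl fun k _ => ?_
    rw [MeasureTheory.integral_finset_sum _
      (fun l _ => ((mom_integrable a _ (hbound k l)).const_mul _))]
    refine Finset.sum_congr rfl fun l _ => ?_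
    exact MeasureTheory.integral_const_mul _ _
  rw [hI]
  by_cases hEq : n = m
  · -- diagonal case
    subst hEq
    rw [if_pos rfl, one_mul]
    have hc : (0:ℝ) < a - 1/2 - (n:ℝ) := by linarith
    have hmom : ∀ k ∈ Finset.range (n/2 + 1), ∀ l ∈ Finset.range (n/2 + 1),
        (∫ x : ℝ, (if x = 0 then (0:ℝ) else |x| ^ (-2 * a) * Real.exp (-1 / x ^ 2)) *
            x ^ (n - 2*k + (n - 2*l)))
          = ap (a - 1/2 - n) (k + l) * Real.Gamma (a - 1/2 - n) := by
      intro k hk l hl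
      have hk' : k ≤ n/2 := Nat.lt_succ_iff.mp (Finset.mem_range.mp hk)
      have hl' : l ≤ n/2 := Nat.lt_succ_iff.mp (Finset.mem_range.mp hl)
      rw [show n - 2*k + (n - 2*l) = 2 * (n - k - l) from by omega,
        mom_even a (n - k - l) (by
          have := hbound k l
          rw [show n - 2*k + (n - 2*l) = 2 * (n - k - l) from by omega] at this
          exact this)]
      have hcast : a - 1/2 - ((n - k - l : ℕ):ℝ) = (a - 1/2 - n) + ((k + l : ℕ):ℝ) := by
        rw [show n - k - l = n - (k + l) from by omega, Nat.cast_sub (by omega)]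
        push_cast; ring
      rw [hcast, Gamma_ap hc (k + l)]
    rw [Finset.sum_congr rfl (fun k hk => Finset.sum_congr rfl (fun l hl => by
      rw [hmom k hk l hl]))]
    have hpull : ∑ k ∈ Finset.range (n/2 + 1), ∑ l ∈ Finset.range (n/2 + 1),
        ((Nat.choose (n / 2) k : ℝ) * ((-1 : ℝ) ^ k * (ap (a - 1/2 - n + 1) k)⁻¹) *
          ((Nat.choose (n / 2) l : ℝ) * ((-1 : ℝ) ^ l * (ap (a - 1/2 - n + 1) l)⁻¹))) *
          (ap (a - 1/2 - n) (k + l) * Real.Gamma (a - 1/2 - n))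
        = (∑ k ∈ Finset.range (n/2 + 1), ∑ l ∈ Finset.range (n/2 + 1),
            ((Nat.choose (n / 2) k : ℝ) * ((-1 : ℝ) ^ k * (ap (a - 1/2 - n + 1) k)⁻¹) *
              ((Nat.choose (n / 2) l : ℝ) * ((-1 : ℝ) ^ l * (ap (a - 1/2 - n + 1) l)⁻¹))) *
            ap (a - 1/2 - n) (k + l)) * Real.Gamma (a - 1/2 - n) := by
      rw [Finset.sum_mul]
      refine Finset.sum_congr rfl fun k _ => ?_
      rw [Finset.sum_mul]
      refine Finset.sum_congr rfl fun l _ => ?_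
      ring
    rw [hpull]
    have hrel : (a - 1/2 - (n:ℝ) + 1) + ((n/2 : ℕ):ℝ) - 1 - (a - 1/2 - (n:ℝ))
        = ((n/2 : ℕ):ℝ) := by ring
    have hU := U_val (a - 1/2 - n) (a - 1/2 - n + 1) (a - 1/2 - n + 1) (n/2) (n/2) hrel le_rfl
    rw [if_pos rfl] at hU
    have key : ∀ k ∈ Finset.range (n/2 + 1), ∀ l ∈ Finset.range (n/2 + 1),
        (ap (a - 1/2 - n + 1) (n/2) * ap (a - 1/2 - n + 1) (n/2)) *
          (((Nat.choose (n / 2) k : ℝ) * ((-1 : ℝ) ^ k * (ap (a - 1/2 - n + 1) k)⁻¹) *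
            ((Nat.choose (n / 2) l : ℝ) * ((-1 : ℝ) ^ l * (ap (a - 1/2 - n + 1) l)⁻¹))) *
            ap (a - 1/2 - n) (k + l))
          = ((n/2).choose k : ℝ) * ((n/2).choose l : ℝ) *
              ((-1 : ℝ) ^ k * ap ((a - 1/2 - n + 1) + k) (n/2 - k)) *
              ((-1 : ℝ) ^ l * ap ((a - 1/2 - n + 1) + l) (n/2 - l)) *
              ap (a - 1/2 - n) (k + l) := by
      intro k hk l hl
      have hk' : k ≤ n/2 := Nat.lt_succ_iff.mp (Finset.mem_range.mp hk)
      have hl' : l ≤ n/2 := Nat.lt_succ_iff.mp (Finset.mem_range.mp hl)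
      have h1 := ap_add (a - 1/2 - (n:ℝ) + 1) k (n/2 - k)
      rw [Nat.add_sub_cancel' hk'] at h1
      have h2 := ap_add (a - 1/2 - (n:ℝ) + 1) l (n/2 - l)
      rw [Nat.add_sub_cancel' hl'] at h2
      have hk0 : ap (a - 1/2 - (n:ℝ) + 1) k ≠ 0 := by
        have h := hAn; rw [h1] at h; exact (mul_ne_zero_iff.mp h).1
      have hl0 : ap (a - 1/2 - (n:ℝ) + 1) l ≠ 0 := by
        have h := hAn; rw [h2] at h; exact (mul_ne_zero_iff.mp h).1
      have hcan1 : ap (a - 1/2 - (n:ℝ) + 1) k * (ap (a - 1/2 - (n:ℝ) + 1) k)⁻¹ = 1 :=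
        mul_inv_cancel₀ hk0
      have hcan2 : ap (a - 1/2 - (n:ℝ) + 1) l * (ap (a - 1/2 - (n:ℝ) + 1) l)⁻¹ = 1 :=
        mul_inv_cancel₀ hl0
      nth_rewrite 1 [h1]
      rw [h2]
      linear_combination ((((n/2).choose k : ℝ)) * (((n/2).choose l : ℝ)) * (-1:ℝ)^k * (-1:ℝ)^l *
          ap ((a - 1/2 - (n:ℝ) + 1) + k) (n/2 - k) * ap ((a - 1/2 - (n:ℝ) + 1) + l) (n/2 - l) *
          ap (a - 1/2 - (n:ℝ)) (k + l) *
          (ap (a - 1/2 - (n:ℝ) + 1) l * (ap (a - 1/2 - (n:ℝ) + 1) l)⁻¹)) * hcan1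
        + ((((n/2).choose k : ℝ)) * (((n/2).choose l : ℝ)) * (-1:ℝ)^k * (-1:ℝ)^l *
          ap ((a - 1/2 - (n:ℝ) + 1) + k) (n/2 - k) * ap ((a - 1/2 - (n:ℝ) + 1) + l) (n/2 - l) *
          ap (a - 1/2 - (n:ℝ)) (k + l)) * hcan2
    have hT : (∑ k ∈ Finset.range (n/2 + 1), ∑ l ∈ Finset.range (n/2 + 1),
          ((Nat.choose (n / 2) k : ℝ) * ((-1 : ℝ) ^ k * (ap (a - 1/2 - n + 1) k)⁻¹) *
            ((Nat.choose (n / 2) l : ℝ) * ((-1 : ℝ) ^ l * (ap (a - 1/2 - n + 1) l)⁻¹))) *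
          ap (a - 1/2 - n) (k + l))
        = (((n/2).factorial : ℝ)) / ap (a - 1/2 - n + 1) (n/2) := by
      apply mul_left_cancel₀ (mul_ne_zero hAn hAn)
      rw [Finset.mul_sum]
      rw [Finset.sum_congr rfl (fun k hk => by
        rw [Finset.mul_sum, Finset.sum_congr rfl (fun l hl => key k hk l hl)])]
      rw [hU]
      have hcanA : ap (a - 1/2 - (n:ℝ) + 1) (n/2) * (ap (a - 1/2 - (n:ℝ) + 1) (n/2))⁻¹ = 1 :=
        mul_inv_cancel₀ hAn
      linear_combination (-(ap (a - 1/2 - (n:ℝ) + 1) (n/2) * (((n/2).factorial : ℕ) : ℝ))) * hcanA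
    rw [hT]
    have hGb : Real.Gamma (a - 1/2) = ap (a - 1/2 - n) n * Real.Gamma (a - 1/2 - n) := by
      have h := Gamma_ap hc n
      rw [show a - 1/2 - (n:ℝ) + (n:ℝ) = a - 1/2 from by ring] at h
      exact h
    rw [hGb, Finset.prod_div_distrib]
    have hDnz : (∏ i ∈ Finset.range n,
        ((2*((i:ℝ)+1) - 2*a + 1) * (2*((i:ℝ)+1) - 2*a - 1))) ≠ 0 := by
      refine Finset.prod_ne_zero_iff.mpr fun i hi => mul_ne_zero ?_ ?_
      · intro hcon
        apply hodd (2*i+3) ⟨i+1, by ring⟩ (by have := Finset.mem_range.mp hi; omega)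
        push_cast
        linarith [hcon]
      · intro hcon
        apply hodd (2*i+1) ⟨i, by ring⟩ (by have := Finset.mem_range.mp hi; omega)
        push_cast
        linarith [hcon]
    have hrc := rhs_closed a n (fun j hj hle => hodd j hj (by omega))
    rw [div_mul_eq_mul_div, div_eq_iff hAn]
    have hcanD : (∏ i ∈ Finset.range n,
          ((2*((i:ℝ)+1) - 2*a + 1) * (2*((i:ℝ)+1) - 2*a - 1))) *
        (∏ i ∈ Finset.range n,
          ((2*((i:ℝ)+1) - 2*a + 1) * (2*((i:ℝ)+1) - 2*a - 1)))⁻¹ = 1 :=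
      mul_inv_cancel₀ hDnz
    linear_combination (-(Real.Gamma (a - 1/2 - (n:ℝ))) *
        (∏ i ∈ Finset.range n,
          ((2*((i:ℝ)+1) - 2*a + 1) * (2*((i:ℝ)+1) - 2*a - 1)))⁻¹) * hrc
      + (-((((n/2).factorial : ℕ):ℝ) * Real.Gamma (a - 1/2 - (n:ℝ)))) * hcanD
  · -- off-diagonal
    rw [if_neg hEq]
    rw [zero_mul, zero_mul, zero_mul]
    rcases Nat.even_or_odd (n + m) with hpar | hpar
    · -- same parity, n < m
      have hlt : n < m := lt_of_le_of_ne hmn hEq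
      have hNM : n/2 < m/2 := by
        rcases hpar with ⟨t, ht⟩
        omega
      have hc : (0:ℝ) < a - 1/2 - (((n+m)/2 : ℕ):ℝ) := by
        have h2 : (((n+m)/2 : ℕ):ℝ) ≤ (((n+m) : ℕ):ℝ) / 2 := by
          rw [le_div_iff₀ (by norm_num : (0:ℝ) < 2)]
          have : ((n+m)/2 * 2 : ℕ) ≤ ((n+m) : ℕ) := by omega
          calc (((n+m)/2 : ℕ):ℝ) * 2 = (((n+m)/2 * 2 : ℕ) : ℝ) := by push_cast; ring
            _ ≤ (((n+m) : ℕ):ℝ) := Nat.cast_le.mpr this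
        push_cast at h2 ⊢
        linarith
      have hmom : ∀ k ∈ Finset.range (n/2 + 1), ∀ l ∈ Finset.range (m/2 + 1),
          (∫ x : ℝ, (if x = 0 then (0:ℝ) else |x| ^ (-2 * a) * Real.exp (-1 / x ^ 2)) *
              x ^ (n - 2*k + (m - 2*l)))
            = ap (a - 1/2 - ((n+m)/2 : ℕ)) (k + l) *
                Real.Gamma (a - 1/2 - ((n+m)/2 : ℕ)) := by
        intro k hk l hl
        have hk' : k ≤ n/2 := Nat.lt_succ_iff.mp (Finset.mem_range.mp hk)
        have hl' : l ≤ m/2 := Nat.lt_succ_iff.mp (Finset.mem_range.mp hl)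
        have hexp : n - 2*k + (m - 2*l) = 2 * ((n+m)/2 - k - l) := by
          rcases hpar with ⟨t, ht⟩
          omega
        rw [hexp, mom_even a ((n+m)/2 - k - l) (by
          have := hbound k l
          rw [hexp] at this
          exact this)]
        have hcast : a - 1/2 - (((n+m)/2 - k - l : ℕ):ℝ)
            = (a - 1/2 - ((n+m)/2 : ℕ)) + ((k + l : ℕ):ℝ) := by
          rw [show (n+m)/2 - k - l = (n+m)/2 - (k + l) from by omega,
            Nat.cast_sub (by rcases hpar with ⟨t, ht⟩; omega)]
          push_cast; ring
        rw [hcast, Gamma_ap hc (k + l)]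
      rw [Finset.sum_congr rfl (fun k hk => Finset.sum_congr rfl (fun l hl => by
        rw [hmom k hk l hl]))]
      have hpull : ∑ k ∈ Finset.range (n/2 + 1), ∑ l ∈ Finset.range (m/2 + 1),
          ((Nat.choose (n / 2) k : ℝ) * ((-1 : ℝ) ^ k * (ap (a - 1/2 - n + 1) k)⁻¹) *
            ((Nat.choose (m / 2) l : ℝ) * ((-1 : ℝ) ^ l * (ap (a - 1/2 - m + 1) l)⁻¹))) *
            (ap (a - 1/2 - ((n+m)/2 : ℕ)) (k + l) * Real.Gamma (a - 1/2 - ((n+m)/2 : ℕ)))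
          = (∑ k ∈ Finset.range (n/2 + 1), ∑ l ∈ Finset.range (m/2 + 1),
              ((Nat.choose (n / 2) k : ℝ) * ((-1 : ℝ) ^ k * (ap (a - 1/2 - n + 1) k)⁻¹) *
                ((Nat.choose (m / 2) l : ℝ) * ((-1 : ℝ) ^ l * (ap (a - 1/2 - m + 1) l)⁻¹))) *
              ap (a - 1/2 - ((n+m)/2 : ℕ)) (k + l)) * Real.Gamma (a - 1/2 - ((n+m)/2 : ℕ)) := by
        rw [Finset.sum_mul]
        refine Finset.sum_congr rfl fun k _ => ?_
        rw [Finset.sum_mul]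
        refine Finset.sum_congr rfl fun l _ => ?_
        ring
      rw [hpull]
      have hrel : (a - 1/2 - (m:ℝ) + 1) + ((m/2 : ℕ):ℝ) - 1 - (a - 1/2 - (((n+m)/2 : ℕ):ℝ))
          = ((n/2 : ℕ):ℝ) := by
        have hnat : (n+m)/2 + m/2 = n/2 + m := by
          rcases hpar with ⟨t, ht⟩
          omega
        have := congrArg (Nat.cast : ℕ → ℝ) hnat
        push_cast at this
        linarith
      have hU := U_val (a - 1/2 - ((n+m)/2 : ℕ)) (a - 1/2 - n + 1) (a - 1/2 - m + 1)
        (n/2) (m/2) hrel (le_of_lt hNM)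
      rw [if_neg (Nat.ne_of_lt hNM)] at hU
      have key : ∀ k ∈ Finset.range (n/2 + 1), ∀ l ∈ Finset.range (m/2 + 1),
          (ap (a - 1/2 - n + 1) (n/2) * ap (a - 1/2 - m + 1) (m/2)) *
            (((Nat.choose (n / 2) k : ℝ) * ((-1 : ℝ) ^ k * (ap (a - 1/2 - n + 1) k)⁻¹) *
              ((Nat.choose (m / 2) l : ℝ) * ((-1 : ℝ) ^ l * (ap (a - 1/2 - m + 1) l)⁻¹))) *
              ap (a - 1/2 - ((n+m)/2 : ℕ)) (k + l))
            = ((n/2).choose k : ℝ) * ((m/2).choose l : ℝ) *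
                ((-1 : ℝ) ^ k * ap ((a - 1/2 - n + 1) + k) (n/2 - k)) *
                ((-1 : ℝ) ^ l * ap ((a - 1/2 - m + 1) + l) (m/2 - l)) *
                ap (a - 1/2 - ((n+m)/2 : ℕ)) (k + l) := by
        intro k hk l hl
        have hk' : k ≤ n/2 := Nat.lt_succ_iff.mp (Finset.mem_range.mp hk)
        have hl' : l ≤ m/2 := Nat.lt_succ_iff.mp (Finset.mem_range.mp hl)
        have h1 := ap_add (a - 1/2 - (n:ℝ) + 1) k (n/2 - k)
        rw [Nat.add_sub_cancel' hk'] at h1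
        have h2 := ap_add (a - 1/2 - (m:ℝ) + 1) l (m/2 - l)
        rw [Nat.add_sub_cancel' hl'] at h2
        have hk0 : ap (a - 1/2 - (n:ℝ) + 1) k ≠ 0 := by
          have h := hAn; rw [h1] at h; exact (mul_ne_zero_iff.mp h).1
        have hl0 : ap (a - 1/2 - (m:ℝ) + 1) l ≠ 0 := by
          have h := hAm; rw [h2] at h; exact (mul_ne_zero_iff.mp h).1
        have hcan1 : ap (a - 1/2 - (n:ℝ) + 1) k * (ap (a - 1/2 - (n:ℝ) + 1) k)⁻¹ = 1 :=
          mul_inv_cancel₀ hk0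
        have hcan2 : ap (a - 1/2 - (m:ℝ) + 1) l * (ap (a - 1/2 - (m:ℝ) + 1) l)⁻¹ = 1 :=
          mul_inv_cancel₀ hl0
        rw [h1, h2]
        linear_combination ((((n/2).choose k : ℝ)) * (((m/2).choose l : ℝ)) * (-1:ℝ)^k * (-1:ℝ)^l *
            ap ((a - 1/2 - (n:ℝ) + 1) + k) (n/2 - k) * ap ((a - 1/2 - (m:ℝ) + 1) + l) (m/2 - l) *
            ap (a - 1/2 - (((n+m)/2 : ℕ):ℝ)) (k + l) *
            (ap (a - 1/2 - (m:ℝ) + 1) l * (ap (a - 1/2 - (m:ℝ) + 1) l)⁻¹)) * hcan1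
          + ((((n/2).choose k : ℝ)) * (((m/2).choose l : ℝ)) * (-1:ℝ)^k * (-1:ℝ)^l *
            ap ((a - 1/2 - (n:ℝ) + 1) + k) (n/2 - k) * ap ((a - 1/2 - (m:ℝ) + 1) + l) (m/2 - l) *
            ap (a - 1/2 - (((n+m)/2 : ℕ):ℝ)) (k + l)) * hcan2
      have hT : (∑ k ∈ Finset.range (n/2 + 1), ∑ l ∈ Finset.range (m/2 + 1),
            ((Nat.choose (n / 2) k : ℝ) * ((-1 : ℝ) ^ k * (ap (a - 1/2 - n + 1) k)⁻¹) *
              ((Nat.choose (m / 2) l : ℝ) * ((-1 : ℝ) ^ l * (ap (a - 1/2 - m + 1) l)⁻¹))) *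
            ap (a - 1/2 - ((n+m)/2 : ℕ)) (k + l)) = 0 := by
        apply mul_left_cancel₀ (mul_ne_zero hAn hAm)
        rw [Finset.mul_sum]
        rw [Finset.sum_congr rfl (fun k hk => by
          rw [Finset.mul_sum, Finset.sum_congr rfl (fun l hl => key k hk l hl)])]
        rw [hU]
        ring
      rw [hT, zero_mul]
    · -- opposite parity
      refine Finset.sum_eq_zero fun k hk => Finset.sum_eq_zero fun l hl => ?_
      have hk' : k ≤ n/2 := Nat.lt_succ_iff.mp (Finset.mem_range.mp hk)
      have hl' : l ≤ m/2 := Nat.lt_succ_iff.mp (Finset.mem_range.mp hl)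
      have hoddp : Odd (n - 2*k + (m - 2*l)) := by
        rcases hpar with ⟨t, ht⟩
        exact ⟨(n - 2*k + (m - 2*l) - 1)/2, by omega⟩
      rw [mom_odd a _ hoddp, mul_zero]

end FO4


/-- Finite orthogonality of the fourth subclass `S̄_n(1,0,−2a+2,2;·)` with respect to
the weight `|x|^{−2a}e^{−1/x²}` on `(−∞,∞)` (extended by `0` at `x = 0`), valid when
`n + m < 2a − 1`. -/
theorem finite_orthogonality_fourth_subclass (a : ℝ) (n m : ℕ)
    (hnm : (n : ℝ) + (m : ℝ) < 2 * a - 1)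
    (hden : ∀ j : ℤ, Odd j → 1 ≤ |j| → |j| ≤ 2 * (max n m : ℤ) + 1 →
      2 * a - (j : ℝ) ≠ 0) :
    ∫ x : ℝ,
        (if x = 0 then 0 else |x| ^ (-2 * a) * Real.exp (-1 / x ^ 2)) *
          Sbar 1 0 (-2 * a + 2) 2 n x * Sbar 1 0 (-2 * a + 2) 2 m x =
      (if n = m then (1 : ℝ) else 0) * (-1 : ℝ) ^ n *
        (∏ i ∈ Finset.range n,
          (-2 * (-1 : ℝ) ^ (i + 1) * (((i : ℝ) + 1) - a) - 2 * a) /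
            ((2 * ((i : ℝ) + 1) - 2 * a + 1) * (2 * ((i : ℝ) + 1) - 2 * a - 1))) *
        Real.Gamma (a - 1 / 2) := by
  have hodd' : ∀ j : ℕ, Odd j → j ≤ 2 * (max n m) + 1 → 2 * a - (j : ℝ) ≠ 0 := by
    intro j hj hle
    have h1 : Odd (j : ℤ) := (Int.odd_coe_nat j).mpr hj
    have h2 : 1 ≤ |(j : ℤ)| := by
      rw [Int.abs_natCast]
      have := Nat.odd_iff.mp hj
      exact_mod_cast (by omega : 1 ≤ j)
    have h3 : |(j : ℤ)| ≤ 2 * (max n m : ℤ) + 1 := by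
      rw [Int.abs_natCast]
      exact_mod_cast hle
    have h4 := hden (j : ℤ) h1 h2 h3
    simpa using h4
  rcases le_or_gt n m with h | h
  · exact FO4.core a n m hnm h (fun j hj hle => hodd' j hj
      (by have := Nat.le_max_right n m; omega))
  · have hmn : m ≤ n := le_of_lt h
    have hne : n ≠ m := Nat.ne_of_gt h
    have hcore := FO4.core a m n (by linarith) hmn (fun j hj hle => hodd' j hj
      (by have := Nat.le_max_left n m; omega))
    calc ∫ x : ℝ,
        (if x = 0 then 0 else |x| ^ (-2 * a) * Real.exp (-1 / x ^ 2)) *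
          Sbar 1 0 (-2 * a + 2) 2 n x * Sbar 1 0 (-2 * a + 2) 2 m x
        = ∫ x : ℝ,
        (if x = 0 then 0 else |x| ^ (-2 * a) * Real.exp (-1 / x ^ 2)) *
          Sbar 1 0 (-2 * a + 2) 2 m x * Sbar 1 0 (-2 * a + 2) 2 n x := by
          exact MeasureTheory.integral_congr_ae (MeasureTheory.ae_of_all _ (fun x => by ring))
      _ = (if m = n then (1 : ℝ) else 0) * (-1 : ℝ) ^ m *
          (∏ i ∈ Finset.range m,
            (-2 * (-1 : ℝ) ^ (i + 1) * (((i : ℝ) + 1) - a) - 2 * a) /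
              ((2 * ((i : ℝ) + 1) - 2 * a + 1) * (2 * ((i : ℝ) + 1) - 2 * a - 1))) *
          Real.Gamma (a - 1 / 2) := hcore
      _ = _ := by
          rw [if_neg (Ne.symm hne), if_neg hne]
          ring
end
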